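/- arXiv:1912.07931 — 10 statements merged into one kernel-verified Lean document; each statement's English description precedes it below -/
import Mathlib

section
/- Let (a_k)_{k≥0} be a nondecreasing sequence of nonnegative real numbers and let B > 0 be such that Σ_{k=0}^{∞} a_k² r^{2k} ≤ B/(1−r)² for all real r with 0 ≤ r < 1. Then a_n = O(√n); that is, there exists a constant B' > 0 such that a_n ≤ B'·√n for all n ≥ 1. -/
/-- If `(a k)` is a nondecreasing sequence of nonnegative reals such that
`∑ k, a k ^ 2 * r ^ (2 k) ≤ B / (1 - r) ^ 2` (a convergent series) for all `0 ≤ r < 1`,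
then `a n = O (√ n)`. -/
theorem stmt_0 (a : ℕ → ℝ) (ha_mono : Monotone a) (ha_nonneg : ∀ k, 0 ≤ a k)
    (B : ℝ) (hB : 0 < B)
    (hsum : ∀ r : ℝ, 0 ≤ r → r < 1 →
      Summable (fun k : ℕ => a k ^ 2 * r ^ (2 * k)) ∧
      (∑' k : ℕ, a k ^ 2 * r ^ (2 * k)) ≤ B / (1 - r) ^ 2) :
    ∃ B' > 0, ∀ n : ℕ, 1 ≤ n → a n ≤ B' * Real.sqrt n := by
  refine ⟨Real.sqrt (128 * B), Real.sqrt_pos.mpr (by linarith), ?_⟩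
  intro n hn
  have hn' : (1 : ℝ) ≤ n := by exact_mod_cast hn
  have hnpos : (0 : ℝ) < n := by linarith
  have hnne : (n : ℝ) ≠ 0 := ne_of_gt hnpos
  set r : ℝ := 1 - 1 / (8 * n) with hr
  have h8 : (0:ℝ) < 8 * n := by positivity
  have hr0 : 0 ≤ r := by
    have : 1 / (8 * (n:ℝ)) ≤ 1 := by
      rw [div_le_one h8]; linarith
    simp only [hr]; linarith
  have hr1 : r < 1 := by
    have : 0 < 1 / (8 * (n:ℝ)) := by positivity
    simp only [hr]; linarith
  obtain ⟨hs, hb⟩ := hsum r hr0 hr1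
  have h1r : 1 - r = 1 / (8 * n) := by rw [hr]; ring
  have key : (n : ℝ) * (a n ^ 2 * r ^ (4 * n)) ≤ 64 * B * n ^ 2 := by
    have hsum_le : ∑ k ∈ Finset.Ico n (2 * n), a k ^ 2 * r ^ (2 * k) ≤ B / (1 - r) ^ 2 :=
      le_trans (Summable.sum_le_tsum _ (fun k _ => by positivity) hs) hb
    have hlow : (n : ℝ) * (a n ^ 2 * r ^ (4 * n)) ≤
        ∑ k ∈ Finset.Ico n (2 * n), a k ^ 2 * r ^ (2 * k) := by
      have hcard : (Finset.Ico n (2 * n)).card = n := by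
        rw [Nat.card_Ico]; omega
      calc (n : ℝ) * (a n ^ 2 * r ^ (4 * n))
          = ∑ _k ∈ Finset.Ico n (2 * n), a n ^ 2 * r ^ (4 * n) := by
            rw [Finset.sum_const, hcard, nsmul_eq_mul]
        _ ≤ ∑ k ∈ Finset.Ico n (2 * n), a k ^ 2 * r ^ (2 * k) := by
            refine Finset.sum_le_sum fun k hk => ?_
            obtain ⟨hk1, hk2⟩ := Finset.mem_Ico.mp hk
            have ha : a n ^ 2 ≤ a k ^ 2 :=
              pow_le_pow_left₀ (ha_nonneg n) (ha_mono hk1) 2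
            have hrpow : r ^ (4 * n) ≤ r ^ (2 * k) :=
              pow_le_pow_of_le_one hr0 (le_of_lt hr1) (by omega)
            exact mul_le_mul ha hrpow (by positivity) (by positivity)
    have hBr : B / (1 - r) ^ 2 = 64 * B * n ^ 2 := by
      rw [h1r]; field_simp; ring
    linarith
  have hr4 : (1:ℝ)/2 ≤ r ^ (4 * n) := by
    have hle1 : 1 / (8 * (n:ℝ)) ≤ 1 := by rw [div_le_one h8]; linarith
    have hber := one_add_mul_le_pow (a := -(1 / (8 * (n:ℝ)))) (by linarith) (4 * n)
    have h2 : (1 : ℝ) + (4 * n : ℕ) * -(1 / (8 * n)) = 1/2 := by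
      push_cast; field_simp; ring
    calc (1:ℝ)/2 = 1 + (4 * n : ℕ) * -(1 / (8 * n)) := h2.symm
      _ ≤ (1 + -(1 / (8 * n))) ^ (4 * n) := hber
      _ = r ^ (4 * n) := by rw [hr]; ring_nf
  have han2 : a n ^ 2 ≤ 128 * B * n := by
    have h1 : (n : ℝ) * (a n ^ 2 * (1/2)) ≤ n * (a n ^ 2 * r ^ (4*n)) := by
      have := mul_le_mul_of_nonneg_left hr4 (sq_nonneg (a n))
      nlinarith
    nlinarith
  calc a n = Real.sqrt (a n ^ 2) := (Real.sqrt_sq (ha_nonneg n)).symm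
    _ ≤ Real.sqrt (128 * B * n) := Real.sqrt_le_sqrt han2
    _ = Real.sqrt (128 * B) * Real.sqrt n := Real.sqrt_mul (by positivity) _
end

section
/- If T is a Kreiss bounded operator on a complex Hilbert space H with Kreiss constant C > 0, then for every unit vector y ∈ H and every real r with 0 ≤ r < 1 one has Σ_{n=0}^{∞} r^{2n} ‖T^n y‖² ≤ C²/(1−r)². -/
open Filter Topology Finset intervalIntegral

lemma aux_geom_inverse {R : Type*} [NormedRing R] [CompleteSpace R]
    {A : R} (h : Summable fun n : ℕ => A ^ n) :
    IsUnit (1 - A) ∧ (1 - A) * (∑' n : ℕ, A ^ n) = 1 := by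
  have hS : (∑' n : ℕ, A ^ n) = 1 + ∑' n : ℕ, A ^ (n + 1) := by
    simpa using h.tsum_eq_zero_add
  have hshift : Summable fun n : ℕ => A ^ (n + 1) := by
    exact (summable_nat_add_iff 1).mpr h
  have hmul : A * (∑' n : ℕ, A ^ n) = ∑' n : ℕ, A ^ (n + 1) := by
    rw [← h.tsum_mul_left A]
    exact tsum_congr fun n => (pow_succ' A n).symm
  have hmul2 : (∑' n : ℕ, A ^ n) * A = ∑' n : ℕ, A ^ (n + 1) := by
    rw [← h.tsum_mul_right A]
    exact tsum_congr fun n => (pow_succ A n).symm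
  have h1 : (1 - A) * (∑' n : ℕ, A ^ n) = 1 := by
    rw [sub_mul, one_mul, hmul]
    rw [hS]; abel
  have h2 : (∑' n : ℕ, A ^ n) * (1 - A) = 1 := by
    rw [mul_sub, mul_one, hmul2]
    rw [hS]; abel
  exact ⟨⟨⟨1 - A, ∑' n : ℕ, A ^ n, h1, h2⟩, rfl⟩, h1⟩

lemma aux_summable_norm_pow {H : Type*} [NormedAddCommGroup H] [InnerProductSpace ℂ H]
    [CompleteSpace H] (T : H →L[ℂ] H)
    (hspec : ∀ z : ℂ, 1 < ‖z‖ → IsUnit (z • (1 : H →L[ℂ] H) - T))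
    {r : ℝ} (hr : 0 < r) (hr1 : r < 1) :
    Summable fun n : ℕ => ‖T ^ n‖ * r ^ n := by
  have hrad : spectralRadius ℂ T ≤ 1 := by
    rw [spectralRadius]
    refine iSup₂_le fun k hk => ?_
    by_contra hlt
    push_neg at hlt
    have hk1 : 1 < ‖k‖ := by
      have := hlt
      simp only [ENNReal.one_lt_coe_iff] at this
      exact_mod_cast this
    exact (spectrum.mem_iff.mp hk) (by simpa [Algebra.algebraMap_eq_smul_one] using hspec k hk1)
  set s : ℝ := (1 + r) / 2 with hs
  have hrs : r < s := by rw [hs]; linarith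
  have hs1 : s < 1 := by rw [hs]; linarith
  have hs0 : 0 < s := by rw [hs]; linarith
  have hsr1 : 1 < s / r := (one_lt_div hr).mpr hrs
  have hlt : spectralRadius ℂ T < ENNReal.ofReal (s / r) := by
    calc spectralRadius ℂ T ≤ 1 := hrad
    _ < ENNReal.ofReal (s / r) := by
        rw [← ENNReal.ofReal_one]
        exact ENNReal.ofReal_lt_ofReal_iff (by positivity) |>.mpr hsr1
  have hev : ∀ᶠ n : ℕ in atTop, ENNReal.ofReal (‖T ^ n‖ ^ (1 / (n : ℝ))) < ENNReal.ofReal (s / r) :=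
    (spectrum.pow_norm_pow_one_div_tendsto_nhds_spectralRadius T).eventually_lt_const hlt
  have hev2 : ∀ᶠ n : ℕ in atTop, ‖T ^ n‖ * r ^ n ≤ s ^ n := by
    filter_upwards [hev, eventually_ge_atTop 1] with n hn hn1
    have hTn : (0:ℝ) ≤ ‖T ^ n‖ := norm_nonneg _
    have h1 : ‖T ^ n‖ ^ (1 / (n : ℝ)) < s / r := by
      have := (ENNReal.ofReal_lt_ofReal_iff (by positivity)).mp hn
      exact this
    have h2 : ‖T ^ n‖ ≤ (s / r) ^ n := by
      have hn0 : (n:ℝ) ≠ 0 := by positivity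
      calc ‖T ^ n‖ = (‖T ^ n‖ ^ (1 / (n : ℝ))) ^ (n:ℕ) := by
            rw [one_div, Real.rpow_inv_natCast_pow hTn (by omega)]
        _ ≤ (s / r) ^ n := by
            apply pow_le_pow_left₀ (Real.rpow_nonneg hTn _) h1.le
    calc ‖T ^ n‖ * r ^ n ≤ (s / r) ^ n * r ^ n := by
          apply mul_le_mul_of_nonneg_right h2 (by positivity)
      _ = s ^ n := by rw [div_pow, div_mul_cancel₀]; positivity
  refine (summable_geometric_of_lt_one hs0.le hs1).of_norm_bounded_eventually_nat ?_
  filter_upwards [hev2] with n hn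
  simpa [Real.norm_of_nonneg (by positivity : (0:ℝ) ≤ ‖T ^ n‖ * r ^ n)] using hn
lemma aux_resolvent_sum {H : Type*} [NormedAddCommGroup H] [InnerProductSpace ℂ H]
    [CompleteSpace H] (T : H →L[ℂ] H) (C : ℝ)
    (hKreiss : ∀ z : ℂ, 1 < ‖z‖ →
      IsUnit (z • (1 : H →L[ℂ] H) - T) ∧
      ‖Ring.inverse (z • (1 : H →L[ℂ] H) - T)‖ ≤ C / (‖z‖ - 1))
    {r : ℝ} (hr : 0 < r) (hr1 : r < 1)
    (hsum : Summable fun n : ℕ => ‖T ^ n‖ * r ^ n)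
    (ω : ℂ) (hω : ‖ω‖ = 1) (y : H) (hy : ‖y‖ = 1) :
    Summable (fun n : ℕ => ((r : ℂ) * ω) ^ n • ((T ^ n) y)) ∧
      ‖∑' n : ℕ, ((r : ℂ) * ω) ^ n • ((T ^ n) y)‖ ≤ C / (1 - r) := by
  set c : ℂ := (r : ℂ) * ω with hc
  have hcnorm : ‖c‖ = r := by
    rw [hc, norm_mul, hω, Complex.norm_real, Real.norm_of_nonneg hr.le, mul_one]
  have hc0 : c ≠ 0 := by
    intro h0; rw [h0, norm_zero] at hcnorm; exact hr.ne hcnorm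
  set A : H →L[ℂ] H := c • T with hA
  have hApow : ∀ n : ℕ, A ^ n = c ^ n • T ^ n := fun n => smul_pow c T n
  have hAsum : Summable fun n : ℕ => A ^ n := by
    refine hsum.of_norm_bounded fun n => ?_
    rw [hApow, norm_smul, norm_pow, hcnorm, mul_comm]
  obtain ⟨hUnit, hInv⟩ := aux_geom_inverse hAsum
  set S : H →L[ℂ] H := ∑' n : ℕ, A ^ n with hSdef
  set z : ℂ := c⁻¹ with hz
  have hznorm : ‖z‖ = r⁻¹ := by rw [hz, norm_inv, hcnorm]
  have hz1 : 1 < ‖z‖ := by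
    rw [hznorm]; exact (one_lt_inv₀ hr).mpr hr1
  obtain ⟨hBUnit, hBnorm⟩ := hKreiss z hz1
  set B : H →L[ℂ] H := z • (1 : H →L[ℂ] H) - T with hB
  have hzc : z * c = 1 := inv_mul_cancel₀ hc0
  have hBA : B = z • (1 - A) := by
    rw [hB, hA, smul_sub, smul_smul, hzc, one_smul]
  have hright : (1 - A) * (z • Ring.inverse B) = 1 := by
    rw [mul_smul_comm, ← smul_mul_assoc, ← hBA, Ring.mul_inverse_cancel B hBUnit]
  have hScancel : S = z • Ring.inverse B := hUnit.mul_left_cancel (hInv.trans hright.symm)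
  have hSnorm : ‖S‖ ≤ C / (1 - r) := by
    rw [hScancel, norm_smul, hznorm]
    calc r⁻¹ * ‖Ring.inverse B‖ ≤ r⁻¹ * (C / (‖z‖ - 1)) := by
          apply mul_le_mul_of_nonneg_left hBnorm (by positivity)
      _ = C / (1 - r) := by
          rw [hznorm]
          have h1r : (1:ℝ) - r ≠ 0 := by linarith
          field_simp
  have happ : HasSum (fun n : ℕ => (A ^ n) y) (S y) :=
    (hAsum.hasSum.mapL (ContinuousLinearMap.apply ℂ H y))
  have hcongr : (fun n : ℕ => (A ^ n) y) = fun n : ℕ => c ^ n • ((T ^ n) y) := by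
    funext n; rw [hApow]; rfl
  rw [hcongr] at happ
  refine ⟨happ.summable, ?_⟩
  rw [happ.tsum_eq]
  calc ‖S y‖ ≤ ‖S‖ * ‖y‖ := S.le_opNorm y
    _ ≤ C / (1 - r) := by rw [hy, mul_one]; exact hSnorm

lemma aux_parseval {H : Type*} [NormedAddCommGroup H] [InnerProductSpace ℂ H]
    (a : ℕ → H) (N : ℕ) :
    (∫ θ in (0:ℝ)..(2 * Real.pi),
        ‖∑ n ∈ Finset.range N, Complex.exp (θ * Complex.I) ^ n • a n‖ ^ 2)
      = 2 * Real.pi * ∑ n ∈ Finset.range N, ‖a n‖ ^ 2 := by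
  have hpt : ∀ θ : ℝ, ‖∑ n ∈ Finset.range N, Complex.exp (θ * Complex.I) ^ n • a n‖ ^ 2
      = ∑ n ∈ Finset.range N, ∑ m ∈ Finset.range N,
        (Complex.exp ((((m:ℂ) - (n:ℂ)) * Complex.I) * θ) * (inner ℂ (a n) (a m) : ℂ)).re := by
    intro θ
    rw [← inner_self_eq_norm_sq (𝕜 := ℂ)]
    have : (inner ℂ (∑ n ∈ Finset.range N, Complex.exp (θ * Complex.I) ^ n • a n)
        (∑ n ∈ Finset.range N, Complex.exp (θ * Complex.I) ^ n • a n) : ℂ)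
        = ∑ n ∈ Finset.range N, ∑ m ∈ Finset.range N,
          Complex.exp ((((m:ℂ) - (n:ℂ)) * Complex.I) * θ) * (inner ℂ (a n) (a m) : ℂ) := by
      rw [sum_inner]
      refine Finset.sum_congr rfl fun n _ => ?_
      rw [inner_sum]
      refine Finset.sum_congr rfl fun m _ => ?_
      rw [inner_smul_left, inner_smul_right]
      have hconj : (starRingEnd ℂ) (Complex.exp (θ * Complex.I) ^ n)
          = Complex.exp (-(θ * Complex.I)) ^ n := by
        rw [map_pow, ← Complex.exp_conj]
        congr 1
        simp [Complex.conj_ofReal]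
      rw [hconj, ← Complex.exp_nat_mul, ← Complex.exp_nat_mul, ← mul_assoc,
        ← Complex.exp_add]
      congr 2
      push_cast
      ring
    rw [this]
    simp only [RCLike.re_to_complex, Complex.re_sum]
  have hcont : ∀ n m : ℕ, Continuous fun θ : ℝ =>
      (Complex.exp ((((m:ℂ) - (n:ℂ)) * Complex.I) * θ) * (inner ℂ (a n) (a m) : ℂ)).re := by
    intro n m
    fun_prop
  calc (∫ θ in (0:ℝ)..(2 * Real.pi),
        ‖∑ n ∈ Finset.range N, Complex.exp (θ * Complex.I) ^ n • a n‖ ^ 2)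
      = ∫ θ in (0:ℝ)..(2 * Real.pi), ∑ n ∈ Finset.range N, ∑ m ∈ Finset.range N,
          (Complex.exp ((((m:ℂ) - (n:ℂ)) * Complex.I) * θ) * (inner ℂ (a n) (a m) : ℂ)).re := by
        exact intervalIntegral.integral_congr fun θ _ => hpt θ
    _ = ∑ n ∈ Finset.range N, ∑ m ∈ Finset.range N, ∫ θ in (0:ℝ)..(2 * Real.pi),
          (Complex.exp ((((m:ℂ) - (n:ℂ)) * Complex.I) * θ) * (inner ℂ (a n) (a m) : ℂ)).re := by
        rw [intervalIntegral.integral_finset_sum]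
        · exact Finset.sum_congr rfl fun n _ => intervalIntegral.integral_finset_sum
            fun m _ => ((hcont n m).intervalIntegrable _ _)
        · intro n _
          exact (continuous_finset_sum _ fun m _ => hcont n m).intervalIntegrable _ _
    _ = ∑ n ∈ Finset.range N, ∑ m ∈ Finset.range N,
          (if n = m then 2 * Real.pi * ‖a n‖ ^ 2 else 0) := by
        refine Finset.sum_congr rfl fun n _ => Finset.sum_congr rfl fun m _ => ?_
        by_cases hnm : n = m
        · subst hnm
          simp only [if_pos rfl, sub_self, zero_mul, Complex.exp_zero, one_mul]
          rw [intervalIntegral.integral_const]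
          have : (inner ℂ (a n) (a n) : ℂ).re = ‖a n‖ ^ 2 := inner_self_eq_norm_sq (𝕜 := ℂ) (a n)
          rw [this]
          simp [smul_eq_mul]
        · rw [if_neg hnm]
          have hmn : (m:ℂ) ≠ (n:ℂ) := by exact_mod_cast Ne.symm hnm
          have hc : (((m:ℂ) - (n:ℂ)) * Complex.I) ≠ 0 :=
            mul_ne_zero (sub_ne_zero.mpr hmn) Complex.I_ne_zero
          have key : (∫ θ in (0:ℝ)..(2 * Real.pi),
              Complex.exp ((((m:ℂ) - (n:ℂ)) * Complex.I) * θ)) = 0 := by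
            rw [integral_exp_mul_complex hc]
            have h1 : Complex.exp ((((m:ℂ) - (n:ℂ)) * Complex.I) * ((2 * Real.pi : ℝ) : ℂ))
                = 1 := by
              have harg : ((((m:ℂ) - (n:ℂ)) * Complex.I) * ((2 * Real.pi : ℝ) : ℂ))
                  = ((((m:ℤ) - (n:ℤ)) : ℤ) : ℂ) * (2 * Real.pi * Complex.I) := by
                push_cast; ring
              rw [harg, Complex.exp_int_mul_two_pi_mul_I]
            rw [h1]
            norm_num
          have : (∫ θ in (0:ℝ)..(2 * Real.pi),
              (Complex.exp ((((m:ℂ) - (n:ℂ)) * Complex.I) * θ) * (inner ℂ (a n) (a m) : ℂ)))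
              = 0 := by
            rw [intervalIntegral.integral_mul_const, key, zero_mul]
          have hint : IntervalIntegrable
              (fun θ : ℝ => Complex.exp ((((m:ℂ) - (n:ℂ)) * Complex.I) * θ)
                * (inner ℂ (a n) (a m) : ℂ)) MeasureTheory.volume 0 (2 * Real.pi) := by
            apply Continuous.intervalIntegrable
            fun_prop
          have hre := Complex.reCLM.intervalIntegral_comp_comm hint
          simp only [Complex.reCLM_apply] at hre
          rw [hre, this]
          simp
    _ = 2 * Real.pi * ∑ n ∈ Finset.range N, ‖a n‖ ^ 2 := by
        rw [Finset.mul_sum]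
        refine Finset.sum_congr rfl fun n hn => ?_
        rw [Finset.sum_ite_eq (Finset.range N) n (fun _ => 2 * Real.pi * ‖a n‖ ^ 2), if_pos hn]
lemma aux_key {H : Type*} [NormedAddCommGroup H] [InnerProductSpace ℂ H] [CompleteSpace H]
    (T : H →L[ℂ] H) (C : ℝ) (hC : 0 < C)
    (hKreiss : ∀ z : ℂ, 1 < ‖z‖ →
      IsUnit (z • (1 : H →L[ℂ] H) - T) ∧
      ‖Ring.inverse (z • (1 : H →L[ℂ] H) - T)‖ ≤ C / (‖z‖ - 1))
    (y : H) (hy : ‖y‖ = 1) {r : ℝ} (hr0 : 0 < r) (hr1 : r < 1) :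
    Summable (fun n : ℕ => r ^ (2 * n) * ‖(T ^ n) y‖ ^ 2) ∧
      (∑' n : ℕ, r ^ (2 * n) * ‖(T ^ n) y‖ ^ 2) ≤ C ^ 2 / (1 - r) ^ 2 := by
  have hsum : Summable fun n : ℕ => ‖T ^ n‖ * r ^ n :=
    aux_summable_norm_pow T (fun z hz => (hKreiss z hz).1) hr0 hr1
  set b : ℕ → ℝ := fun n => r ^ n * ‖(T ^ n) y‖ with hbdef
  have hb0 : ∀ n, 0 ≤ b n := fun n => by positivity
  have hb : Summable b := by
    refine hsum.of_nonneg_of_le hb0 fun n => ?_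
    calc b n = r ^ n * ‖(T ^ n) y‖ := rfl
      _ ≤ r ^ n * (‖T ^ n‖ * ‖y‖) := by
          apply mul_le_mul_of_nonneg_left ((T ^ n).le_opNorm y) (by positivity)
      _ = ‖T ^ n‖ * r ^ n := by rw [hy, mul_one, mul_comm]
  set t : ℕ → ℝ := fun N => ∑' n, b (n + N) with htdef
  have ht0 : ∀ N, 0 ≤ t N := fun N => tsum_nonneg fun n => hb0 _
  have httop : ∀ N, t N ≤ ∑' n, b n := by
    intro N
    rw [← hb.sum_add_tsum_nat_add N]
    have : (0:ℝ) ≤ ∑ i ∈ Finset.range N, b i := Finset.sum_nonneg fun i _ => hb0 i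
    linarith [le_refl (t N)]
  have httendsto : Tendsto t atTop (𝓝 0) := tendsto_sum_nat_add b
  set K : ℝ := C / (1 - r) with hKdef
  have hK0 : 0 < K := div_pos hC (by linarith)
  set a : ℕ → H := fun n => ((r:ℂ)) ^ n • ((T ^ n) y) with hadef
  have hanorm : ∀ n, ‖a n‖ = b n := by
    intro n
    rw [hadef]
    simp only [norm_smul, norm_pow, Complex.norm_real, Real.norm_of_nonneg hr0.le]
    rfl
  -- main estimate for partial sums
  have hpartial : ∀ N : ℕ, (∑ n ∈ Finset.range N, ‖a n‖ ^ 2) ≤ (K + t N) ^ 2 := by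
    intro N
    have hFbound : ∀ θ : ℝ,
        ‖∑ n ∈ Finset.range N, Complex.exp (θ * Complex.I) ^ n • a n‖ ≤ K + t N := by
      intro θ
      set ω : ℂ := Complex.exp (θ * Complex.I) with hωdef
      have hω : ‖ω‖ = 1 := Complex.norm_exp_ofReal_mul_I θ
      obtain ⟨hfs, hfb⟩ := aux_resolvent_sum T C hKreiss hr0 hr1 hsum ω hω y hy
      set f : ℕ → H := fun n => ((r : ℂ) * ω) ^ n • ((T ^ n) y) with hfdef
      have hFf : (∑ n ∈ Finset.range N, ω ^ n • a n) = ∑ n ∈ Finset.range N, f n := by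
        refine Finset.sum_congr rfl fun n _ => ?_
        rw [hadef, hfdef]
        simp only [mul_pow, smul_smul, mul_comm]
      rw [hFf]
      have hsplit : (∑ n ∈ Finset.range N, f n) + ∑' n, f (n + N) = ∑' n, f n :=
        hfs.sum_add_tsum_nat_add N
      have htail : ‖∑' n, f (n + N)‖ ≤ t N := by
        refine tsum_of_norm_bounded (g := fun n => b (n + N))
          ((summable_nat_add_iff N).mpr hb).hasSum fun n => ?_
        · rw [hfdef]
          simp only [norm_smul, norm_pow, norm_mul, Complex.norm_real,
            Real.norm_of_nonneg hr0.le, hω, mul_one]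
          exact le_of_eq rfl
      calc ‖∑ n ∈ Finset.range N, f n‖ = ‖(∑' n, f n) - ∑' n, f (n + N)‖ := by
            rw [← hsplit]; congr 1; abel
        _ ≤ ‖∑' n, f n‖ + ‖∑' n, f (n + N)‖ := norm_sub_le _ _
        _ ≤ K + t N := add_le_add hfb htail
    have hFcont : Continuous fun θ : ℝ =>
        ‖∑ n ∈ Finset.range N, Complex.exp (θ * Complex.I) ^ n • a n‖ ^ 2 := by
      fun_prop
    have hintmono : (∫ θ in (0:ℝ)..(2 * Real.pi),
        ‖∑ n ∈ Finset.range N, Complex.exp (θ * Complex.I) ^ n • a n‖ ^ 2)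
        ≤ ∫ _ in (0:ℝ)..(2 * Real.pi), (K + t N) ^ 2 := by
      apply intervalIntegral.integral_mono_on (by positivity)
        (hFcont.intervalIntegrable _ _) (intervalIntegrable_const)
      intro θ _
      have := hFbound θ
      have h0 : (0:ℝ) ≤ ‖∑ n ∈ Finset.range N, Complex.exp (θ * Complex.I) ^ n • a n‖ :=
        norm_nonneg _
      nlinarith
    rw [aux_parseval a N] at hintmono
    rw [intervalIntegral.integral_const, smul_eq_mul] at hintmono
    have h2pi : (0:ℝ) < 2 * Real.pi := by positivity
    rw [sub_zero] at hintmono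
    exact le_of_mul_le_mul_left hintmono h2pi
  have hterm : ∀ n, r ^ (2 * n) * ‖(T ^ n) y‖ ^ 2 = ‖a n‖ ^ 2 := by
    intro n
    rw [hanorm, hbdef]
    rw [mul_pow, ← pow_mul, mul_comm n 2]
  have hnonneg : ∀ n, 0 ≤ r ^ (2 * n) * ‖(T ^ n) y‖ ^ 2 := fun n => by positivity
  have hsummable : Summable (fun n : ℕ => r ^ (2 * n) * ‖(T ^ n) y‖ ^ 2) := by
    apply summable_of_sum_range_le hnonneg (c := (K + ∑' n, b n) ^ 2)
    intro N
    calc (∑ n ∈ Finset.range N, r ^ (2 * n) * ‖(T ^ n) y‖ ^ 2)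
        = ∑ n ∈ Finset.range N, ‖a n‖ ^ 2 := Finset.sum_congr rfl fun n _ => hterm n
      _ ≤ (K + t N) ^ 2 := hpartial N
      _ ≤ (K + ∑' n, b n) ^ 2 := by
          apply pow_le_pow_left₀ (by linarith [ht0 N]) (by linarith [httop N])
  refine ⟨hsummable, ?_⟩
  have hT : Tendsto (fun N => ∑ n ∈ Finset.range N, r ^ (2 * n) * ‖(T ^ n) y‖ ^ 2)
      atTop (𝓝 (∑' n : ℕ, r ^ (2 * n) * ‖(T ^ n) y‖ ^ 2)) :=
    hsummable.hasSum.tendsto_sum_nat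
  have hB : Tendsto (fun N => (K + t N) ^ 2) atTop (𝓝 ((K + 0) ^ 2)) := by
    exact ((tendsto_const_nhds.add httendsto).pow 2)
  have hle : ∀ N, (∑ n ∈ Finset.range N, r ^ (2 * n) * ‖(T ^ n) y‖ ^ 2) ≤ (K + t N) ^ 2 := by
    intro N
    calc (∑ n ∈ Finset.range N, r ^ (2 * n) * ‖(T ^ n) y‖ ^ 2)
        = ∑ n ∈ Finset.range N, ‖a n‖ ^ 2 := Finset.sum_congr rfl fun n _ => hterm n
      _ ≤ (K + t N) ^ 2 := hpartial N
  have := le_of_tendsto_of_tendsto' hT hB hle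
  rw [add_zero, hKdef, div_pow] at this
  exact this

/-- If `T` is Kreiss bounded on a complex Hilbert space with Kreiss constant `C`, then for every
unit vector `y` and every `0 ≤ r < 1`, `∑ n, r^(2n) ‖T^n y‖² ≤ C² / (1-r)²`
(the series being convergent). -/
theorem stmt_2 {H : Type*} [NormedAddCommGroup H] [InnerProductSpace ℂ H] [CompleteSpace H]
    (T : H →L[ℂ] H) (C : ℝ) (hC : 0 < C)
    (hKreiss : ∀ z : ℂ, 1 < ‖z‖ →
      IsUnit (z • (1 : H →L[ℂ] H) - T) ∧
      ‖Ring.inverse (z • (1 : H →L[ℂ] H) - T)‖ ≤ C / (‖z‖ - 1)) :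
    ∀ y : H, ‖y‖ = 1 → ∀ r : ℝ, 0 ≤ r → r < 1 →
      Summable (fun n : ℕ => r ^ (2 * n) * ‖(T ^ n) y‖ ^ 2) ∧
      (∑' n : ℕ, r ^ (2 * n) * ‖(T ^ n) y‖ ^ 2) ≤ C ^ 2 / (1 - r) ^ 2 := by
  intro y hy r hr0 hr1
  rcases hr0.lt_or_eq with h | h
  · exact aux_key T C hC hKreiss y hy h hr1
  · subst h
    have hstep : ∀ k : ℕ, (1 - (1:ℝ)/(k+2))^2 ≤ C^2 := by
      intro k
      set s : ℝ := 1/(k+2) with hsdef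
      have hs0 : 0 < s := by positivity
      have hs1 : s < 1 := by
        rw [hsdef, div_lt_one (by positivity)]
        have : (0:ℝ) ≤ (k:ℝ) := Nat.cast_nonneg k
        linarith
      obtain ⟨hS, hle⟩ := aux_key T C hC hKreiss y hy hs0 hs1
      have h1 : (1:ℝ) ≤ ∑' n : ℕ, s ^ (2 * n) * ‖(T ^ n) y‖ ^ 2 := by
        have := hS.le_tsum 0 (fun n _ => by positivity)
        simpa [hy] using this
      have h2 : (1:ℝ) ≤ C^2/(1-s)^2 := le_trans h1 hle
      have h3 : (0:ℝ) < (1-s)^2 := by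
        have : (0:ℝ) < 1 - s := by linarith
        positivity
      exact (one_le_div h3).mp h2
    have htend : Tendsto (fun k : ℕ => (1:ℝ)/(k+2)) atTop (𝓝 0) := by
      simp only [one_div]
      exact (tendsto_atTop_add_const_right atTop (2:ℝ)
        tendsto_natCast_atTop_atTop).inv_tendsto_atTop
    have hlim : Tendsto (fun k : ℕ => (1 - (1:ℝ)/(k+2))^2) atTop (𝓝 ((1 - (0:ℝ))^2)) :=
      (tendsto_const_nhds.sub htend).pow 2
    have hone : (1:ℝ) ≤ C^2 := by
      have := le_of_tendsto hlim (Filter.Eventually.of_forall hstep)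
      simpa using this
    have hsummable : Summable (fun n : ℕ => (0:ℝ) ^ (2*n) * ‖(T ^ n) y‖ ^ 2) := by
      apply summable_of_ne_finset_zero (s := ({0} : Finset ℕ))
      intro n hn
      have hn0 : n ≠ 0 := by simpa using hn
      simp [zero_pow (by omega : 2*n ≠ 0)]
    refine ⟨hsummable, ?_⟩
    have htsum : (∑' n : ℕ, (0:ℝ) ^ (2*n) * ‖(T ^ n) y‖ ^ 2) = 1 := by
      rw [tsum_eq_single 0 (by
        intro n hn
        simp [zero_pow (by omega : 2*n ≠ 0)])]
      simp [hy]
    rw [htsum]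
    simpa using hone
end

section
/- Let 0 < η < 1/2. Then there exists a constant c₁ > 0 such that (1/(n+1)) Σ_{j=1}^{∞} Σ_{j'=j}^{j+n} γ_j δ_{j'} (j'/j)^η ≤ c₁ for all n ∈ ℕ and all sequences of nonnegative reals (γ_j)_{j≥1}, (δ_{j'})_{j'≥1} with Σ_{j=1}^{∞} γ_j² = Σ_{j'=1}^{∞} δ_{j'}² = 1. -/
open Finset

/-- Telescoping step from Bernoulli: `(1-s) * (j+1)^(-s) ≤ (j+1)^(1-s) - j^(1-s)`. -/
lemma aux_step (s : ℝ) (hs0 : 0 < s) (hs1 : s < 1) (j : ℕ) :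
    (1 - s) * ((j : ℝ) + 1) ^ (-s) ≤ ((j : ℝ) + 1) ^ (1 - s) - (j : ℝ) ^ (1 - s) := by
  set i : ℝ := (j : ℝ) + 1 with hidef
  have hipos : 0 < i := by positivity
  have hi1 : 1 ≤ i := by simp [hidef]
  have hinv : -1 ≤ -1 / i := by
    rw [neg_div, neg_le_neg_iff]
    exact (div_le_one hipos).2 hi1
  have hB : (1 + (-1 / i)) ^ (1 - s) ≤ 1 + (1 - s) * (-1 / i) :=
    rpow_one_add_le_one_add_mul_self hinv (by linarith) (by linarith)
  have h1 : 1 + (-1 / i) = (j : ℝ) / i := by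
    field_simp [hidef]
    linarith
  have key := mul_le_mul_of_nonneg_left hB (Real.rpow_nonneg hipos.le (1 - s))
  have hL : i ^ (1 - s) * (1 + (-1 / i)) ^ (1 - s) = (j : ℝ) ^ (1 - s) := by
    rw [h1, ← Real.mul_rpow hipos.le (by positivity), mul_div_cancel₀ _ hipos.ne']
  have hR : i ^ (1 - s) * (1 + (1 - s) * (-1 / i)) = i ^ (1 - s) - (1 - s) * i ^ (-s) := by
    have hpow : i ^ (1 - s) / i = i ^ (-s) := by
      have hsplit : i ^ (1 - s) = i * i ^ (-s) := by
        rw [show (1 - s : ℝ) = 1 + -s by ring, Real.rpow_add hipos, Real.rpow_one]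
      rw [hsplit, mul_div_cancel_left₀ _ hipos.ne']
    field_simp at hpow ⊢
    nlinarith [hpow]
  rw [hL, hR] at key
  linarith

/-- `∑_{i=1}^m i^{-s} ≤ m^{1-s}/(1-s)` for `0 < s < 1`. -/
lemma aux_harm (s : ℝ) (hs0 : 0 < s) (hs1 : s < 1) (m : ℕ) :
    ∑ j ∈ range m, ((j : ℝ) + 1) ^ (-s) ≤ (m : ℝ) ^ (1 - s) / (1 - s) := by
  have h1s : 0 < 1 - s := by linarith
  have htel : ∑ j ∈ range m, (((j + 1 : ℕ) : ℝ) ^ (1 - s) - ((j : ℕ) : ℝ) ^ (1 - s))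
      = ((m : ℕ) : ℝ) ^ (1 - s) - ((0 : ℕ) : ℝ) ^ (1 - s) :=
    Finset.sum_range_sub (fun k => ((k : ℕ) : ℝ) ^ (1 - s)) m
  have h0 : ((0 : ℕ) : ℝ) ^ (1 - s) = 0 := by
    simp [Real.zero_rpow h1s.ne']
  calc ∑ j ∈ range m, ((j : ℝ) + 1) ^ (-s)
      ≤ ∑ j ∈ range m, ((((j + 1 : ℕ) : ℝ)) ^ (1 - s) - ((j : ℕ) : ℝ) ^ (1 - s)) / (1 - s) := by
        refine Finset.sum_le_sum fun j _ => ?_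
        rw [le_div_iff₀ h1s]
        have := aux_step s hs0 hs1 j
        push_cast
        linarith
    _ = (∑ j ∈ range m, ((((j + 1 : ℕ) : ℝ)) ^ (1 - s) - ((j : ℕ) : ℝ) ^ (1 - s))) / (1 - s) := by
        rw [Finset.sum_div]
    _ = (m : ℝ) ^ (1 - s) / (1 - s) := by rw [htel, h0]; norm_num

/-- Column-sum bound. -/
lemma aux_col (s : ℝ) (hs0 : 1 / 2 ≤ s) (hs1 : s < 1) (n m : ℕ) (hm : 1 ≤ m) :
    ∑ j ∈ Icc (m - (n + 1)) (m - 1), ((m : ℝ) / ((j : ℝ) + 1)) ^ s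
      ≤ (2 + 2 / (1 - s)) * ((n : ℝ) + 1) := by
  have hs0' : 0 < s := by linarith
  have h1s : 0 < 1 - s := by linarith
  have hn1 : (0 : ℝ) < (n : ℝ) + 1 := by positivity
  by_cases hcase : m ≤ 2 * (n + 1)
  · -- small m : use harmonic bound
    have hsub : Icc (m - (n + 1)) (m - 1) ⊆ range m := by
      intro j hj
      simp only [mem_Icc, mem_range] at *
      omega
    have hmono : ∑ j ∈ Icc (m - (n + 1)) (m - 1), ((m : ℝ) / ((j : ℝ) + 1)) ^ s
        ≤ ∑ j ∈ range m, ((m : ℝ) / ((j : ℝ) + 1)) ^ s :=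
      Finset.sum_le_sum_of_subset_of_nonneg hsub fun j _ _ => Real.rpow_nonneg (by positivity) s
    have hmpos : (0 : ℝ) < (m : ℝ) := by exact_mod_cast hm
    have hsplit : ∀ j : ℕ, ((m : ℝ) / ((j : ℝ) + 1)) ^ s = (m : ℝ) ^ s * ((j : ℝ) + 1) ^ (-s) := by
      intro j
      rw [Real.div_rpow hmpos.le (by positivity), Real.rpow_neg (by positivity), div_eq_mul_inv]
    calc ∑ j ∈ Icc (m - (n + 1)) (m - 1), ((m : ℝ) / ((j : ℝ) + 1)) ^ s
        ≤ ∑ j ∈ range m, ((m : ℝ) / ((j : ℝ) + 1)) ^ s := hmono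
      _ = (m : ℝ) ^ s * ∑ j ∈ range m, ((j : ℝ) + 1) ^ (-s) := by
          rw [Finset.mul_sum]; exact Finset.sum_congr rfl fun j _ => hsplit j
      _ ≤ (m : ℝ) ^ s * ((m : ℝ) ^ (1 - s) / (1 - s)) := by
          exact mul_le_mul_of_nonneg_left (aux_harm s hs0' hs1 m) (Real.rpow_nonneg hmpos.le s)
      _ = (m : ℝ) / (1 - s) := by
          rw [mul_div_assoc', ← Real.rpow_add hmpos]; norm_num
      _ ≤ (2 * ((n : ℝ) + 1)) / (1 - s) := by
          have hm2 : (m : ℝ) ≤ 2 * ((n : ℝ) + 1) := by exact_mod_cast hcase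
          gcongr
      _ ≤ (2 + 2 / (1 - s)) * ((n : ℝ) + 1) := by
          rw [div_eq_mul_inv, add_mul, div_eq_mul_inv]
          nlinarith [Nat.cast_nonneg (α := ℝ) n, inv_nonneg.2 h1s.le]
  · -- large m : each term ≤ 2, at most n+1 terms
    push_neg at hcase
    have hcard : (Icc (m - (n + 1)) (m - 1)).card ≤ n + 1 := by
      rw [Nat.card_Icc]; omega
    have hbound : ∀ j ∈ Icc (m - (n + 1)) (m - 1), ((m : ℝ) / ((j : ℝ) + 1)) ^ s ≤ 2 := by
      intro j hj
      simp only [mem_Icc] at hj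
      have hj' : m - (n + 1) ≤ j := hj.1
      have hjm : (m : ℝ) ≤ 2 * ((j : ℝ) + 1) := by
        have : m ≤ 2 * (j + 1) := by omega
        exact_mod_cast this
      have hx : (m : ℝ) / ((j : ℝ) + 1) ≤ 2 := by
        rw [div_le_iff₀ (by positivity)]; linarith
      calc ((m : ℝ) / ((j : ℝ) + 1)) ^ s ≤ (2 : ℝ) ^ s :=
            Real.rpow_le_rpow (by positivity) hx hs0'.le
        _ ≤ (2 : ℝ) ^ (1 : ℝ) :=
            Real.rpow_le_rpow_of_exponent_le one_le_two hs1.le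
        _ = 2 := Real.rpow_one 2
    calc ∑ j ∈ Icc (m - (n + 1)) (m - 1), ((m : ℝ) / ((j : ℝ) + 1)) ^ s
        ≤ (Icc (m - (n + 1)) (m - 1)).card • (2 : ℝ) := Finset.sum_le_card_nsmul _ _ 2 hbound
      _ = ((Icc (m - (n + 1)) (m - 1)).card : ℝ) * 2 := by rw [nsmul_eq_mul]
      _ ≤ ((n : ℝ) + 1) * 2 := by
          apply mul_le_mul_of_nonneg_right _ (by norm_num)
          exact_mod_cast hcard
      _ ≤ (2 + 2 / (1 - s)) * ((n : ℝ) + 1) := by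
          have : 0 ≤ 2 / (1 - s) := by positivity
          nlinarith

/-- pointwise AM-GM. -/
lemma aux_amgm (η : ℝ) (hη0 : 0 < η) (hη : η < 1 / 2) (x γ δ : ℝ)
    (hx : 1 ≤ x) (hγ : 0 ≤ γ) (hδ : 0 ≤ δ) :
    γ * δ * x ^ η ≤ 1 / 2 * γ ^ 2 + 1 / 2 * (δ ^ 2 * x ^ (η + 1 / 2)) := by
  have hx0 : 0 < x := lt_of_lt_of_le one_pos hx
  have h2 := two_mul_le_add_sq (γ * x ^ ((2 * η - 1) / 4)) (δ * x ^ ((2 * η + 1) / 4))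
  have hab : 2 * (γ * x ^ ((2 * η - 1) / 4)) * (δ * x ^ ((2 * η + 1) / 4))
      = 2 * (γ * δ * x ^ η) := by
    have : x ^ ((2 * η - 1) / 4) * x ^ ((2 * η + 1) / 4) = x ^ η := by
      rw [← Real.rpow_add hx0]; congr 1; ring
    calc 2 * (γ * x ^ ((2 * η - 1) / 4)) * (δ * x ^ ((2 * η + 1) / 4))
        = 2 * (γ * δ * (x ^ ((2 * η - 1) / 4) * x ^ ((2 * η + 1) / 4))) := by ring
      _ = 2 * (γ * δ * x ^ η) := by rw [this]
  have ha2 : (γ * x ^ ((2 * η - 1) / 4)) ^ 2 = γ ^ 2 * x ^ ((2 * η - 1) / 2) := by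
    rw [mul_pow, sq (x ^ _), ← Real.rpow_add hx0]
    congr 2; ring
  have hb2 : (δ * x ^ ((2 * η + 1) / 4)) ^ 2 = δ ^ 2 * x ^ (η + 1 / 2) := by
    rw [mul_pow, sq (x ^ _), ← Real.rpow_add hx0]
    congr 2; ring
  have hxle : x ^ ((2 * η - 1) / 2) ≤ 1 :=
    Real.rpow_le_one_of_one_le_of_nonpos hx (by linarith)
  have hγ2 : γ ^ 2 * x ^ ((2 * η - 1) / 2) ≤ γ ^ 2 := by
    nlinarith [sq_nonneg γ, Real.rpow_nonneg hx0.le ((2 * η - 1) / 2)]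
  rw [hab, ha2, hb2] at h2
  linarith

/-- For `0 < η < 1/2` there is a constant `c₁ > 0` such that
`(1/(n+1)) ∑_{j≥1} ∑_{j ≤ j' ≤ j+n} γ_j δ_{j'} (j'/j)^η ≤ c₁`
for all `n` and all nonnegative sequences with `∑ γ_j² = ∑ δ_{j'}² = 1`.
(Sequences are indexed by `j ≥ 1`, encoded here as `j + 1` with `j : ℕ`.) -/
theorem stmt_4 (η : ℝ) (hη0 : 0 < η) (hη : η < 1 / 2) :
    ∃ c₁ > 0, ∀ (n : ℕ) (γ δ : ℕ → ℝ),
      (∀ j, 0 ≤ γ j) → (∀ j, 0 ≤ δ j) →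
      (∑' j : ℕ, γ (j + 1) ^ 2) = 1 → (∑' j : ℕ, δ (j + 1) ^ 2) = 1 →
      Summable (fun j : ℕ => ∑ j' ∈ Finset.Icc (j + 1) (j + 1 + n),
        γ (j + 1) * δ j' * ((j' : ℝ) / ((j : ℝ) + 1)) ^ η) ∧
      (1 / ((n : ℝ) + 1)) * ∑' j : ℕ, ∑ j' ∈ Finset.Icc (j + 1) (j + 1 + n),
        γ (j + 1) * δ j' * ((j' : ℝ) / ((j : ℝ) + 1)) ^ η ≤ c₁ := by
  have h1s : 0 < 1 - (η + 1 / 2) := by linarith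
  set C : ℝ := 2 + 2 / (1 - (η + 1 / 2)) with hCdef
  have hC0 : 0 < C := by positivity
  refine ⟨(1 + C) / 2, by positivity, ?_⟩
  intro n γ δ hγ hδ hγ2 hδ2
  have hsl : 1 / 2 ≤ η + 1 / 2 := by linarith
  have hsr : η + 1 / 2 < 1 := by linarith
  have hn1 : (0 : ℝ) < (n : ℝ) + 1 := by positivity
  -- summability of the squares
  have hγsum : Summable (fun j : ℕ => γ (j + 1) ^ 2) := by
    by_contra h
    rw [tsum_eq_zero_of_not_summable h] at hγ2
    norm_num at hγ2
  have hδsum : Summable (fun j : ℕ => δ (j + 1) ^ 2) := by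
    by_contra h
    rw [tsum_eq_zero_of_not_summable h] at hδ2
    norm_num at hδ2
  -- the column-weighted δ² sums
  set B : ℕ → ℝ := fun j => ∑ j' ∈ Finset.Icc (j + 1) (j + 1 + n),
    δ j' ^ 2 * ((j' : ℝ) / ((j : ℝ) + 1)) ^ (η + 1 / 2) with hBdef
  have hB0 : ∀ j, 0 ≤ B j := by
    intro j
    refine Finset.sum_nonneg fun j' _ => ?_
    have : (0:ℝ) ≤ ((j' : ℝ) / ((j : ℝ) + 1)) ^ (η + 1/2) := Real.rpow_nonneg (by positivity) _
    nlinarith [sq_nonneg (δ j')]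
  -- partial sums of B are bounded by C * (n+1)
  have hkey : ∀ N : ℕ, ∑ j ∈ Finset.range N, B j ≤ C * ((n : ℝ) + 1) := by
    intro N
    have hδpart : ∑ m ∈ Finset.Icc 1 (N + n), δ m ^ 2 ≤ 1 := by
      have hre : ∑ m ∈ Finset.Icc 1 (N + n), δ m ^ 2
          = ∑ i ∈ Finset.range (N + n), δ (i + 1) ^ 2 := by
        rw [← Finset.Ico_add_one_right_eq_Icc, Finset.sum_Ico_eq_sum_range]
        simp [add_comm]
      rw [hre, ← hδ2]
      exact Summable.sum_le_tsum (Finset.range (N + n)) (fun _ _ => sq_nonneg _) hδsum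
    have hswap : ∑ j ∈ Finset.range N, B j
        = ∑ m ∈ Finset.Icc 1 (N + n),
            ∑ j ∈ Finset.Icc (m - (n + 1)) (m - 1) ∩ Finset.range N,
              δ m ^ 2 * ((m : ℝ) / ((j : ℝ) + 1)) ^ (η + 1 / 2) := by
      refine Finset.sum_comm' ?_
      intro j m
      simp only [Finset.mem_range, Finset.mem_Icc, Finset.mem_inter]
      omega
    rw [hswap]
    calc ∑ m ∈ Finset.Icc 1 (N + n),
            ∑ j ∈ Finset.Icc (m - (n + 1)) (m - 1) ∩ Finset.range N,
              δ m ^ 2 * ((m : ℝ) / ((j : ℝ) + 1)) ^ (η + 1 / 2)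
        ≤ ∑ m ∈ Finset.Icc 1 (N + n), δ m ^ 2 * (C * ((n : ℝ) + 1)) := by
          refine Finset.sum_le_sum fun m hm => ?_
          have hm1 : 1 ≤ m := (Finset.mem_Icc.1 hm).1
          calc ∑ j ∈ Finset.Icc (m - (n + 1)) (m - 1) ∩ Finset.range N,
                  δ m ^ 2 * ((m : ℝ) / ((j : ℝ) + 1)) ^ (η + 1 / 2)
              = δ m ^ 2 * ∑ j ∈ Finset.Icc (m - (n + 1)) (m - 1) ∩ Finset.range N,
                  ((m : ℝ) / ((j : ℝ) + 1)) ^ (η + 1 / 2) := by rw [Finset.mul_sum]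
            _ ≤ δ m ^ 2 * ∑ j ∈ Finset.Icc (m - (n + 1)) (m - 1),
                  ((m : ℝ) / ((j : ℝ) + 1)) ^ (η + 1 / 2) := by
                refine mul_le_mul_of_nonneg_left ?_ (sq_nonneg _)
                exact Finset.sum_le_sum_of_subset_of_nonneg Finset.inter_subset_left
                  fun j _ _ => Real.rpow_nonneg (by positivity) _
            _ ≤ δ m ^ 2 * (C * ((n : ℝ) + 1)) := by
                refine mul_le_mul_of_nonneg_left ?_ (sq_nonneg _)
                exact aux_col (η + 1 / 2) hsl hsr n m hm1
      _ = (∑ m ∈ Finset.Icc 1 (N + n), δ m ^ 2) * (C * ((n : ℝ) + 1)) := by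
          rw [← Finset.sum_mul]
      _ ≤ 1 * (C * ((n : ℝ) + 1)) := by
          refine mul_le_mul_of_nonneg_right hδpart (by positivity)
      _ = C * ((n : ℝ) + 1) := by ring
  have hBsum : Summable B := summable_of_sum_range_le hB0 hkey
  have hBtsum : ∑' j, B j ≤ C * ((n : ℝ) + 1) := Real.tsum_le_of_sum_range_le hB0 hkey
  -- the majorant F
  set F : ℕ → ℝ := fun j => 1 / 2 * (((n : ℝ) + 1) * γ (j + 1) ^ 2) + 1 / 2 * B j with hFdef
  have hFsum : Summable F :=
    ((hγsum.mul_left ((n : ℝ) + 1)).mul_left (1 / 2)).add (hBsum.mul_left (1 / 2))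
  set G : ℕ → ℝ := fun j : ℕ => ∑ j' ∈ Finset.Icc (j + 1) (j + 1 + n),
    γ (j + 1) * δ j' * ((j' : ℝ) / ((j : ℝ) + 1)) ^ η with hGdef
  have hG0 : ∀ j, 0 ≤ G j := by
    intro j
    refine Finset.sum_nonneg fun j' _ => ?_
    have := Real.rpow_nonneg (show (0:ℝ) ≤ (j' : ℝ) / ((j : ℝ) + 1) by positivity) η
    have := hγ (j + 1)
    have := hδ j'
    positivity
  have hGF : ∀ j, G j ≤ F j := by
    intro j
    have hstep : G j ≤ ∑ j' ∈ Finset.Icc (j + 1) (j + 1 + n),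
        (1 / 2 * γ (j + 1) ^ 2
          + 1 / 2 * (δ j' ^ 2 * ((j' : ℝ) / ((j : ℝ) + 1)) ^ (η + 1 / 2))) := by
      refine Finset.sum_le_sum fun j' hj' => ?_
      have hj1 : j + 1 ≤ j' := (Finset.mem_Icc.1 hj').1
      have hx : 1 ≤ (j' : ℝ) / ((j : ℝ) + 1) := by
        rw [le_div_iff₀ (by positivity)]
        have : ((j : ℝ) + 1) ≤ (j' : ℝ) := by exact_mod_cast hj1
        linarith
      exact aux_amgm η hη0 hη _ _ _ hx (hγ _) (hδ _)
    have hsplit : ∑ j' ∈ Finset.Icc (j + 1) (j + 1 + n),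
        (1 / 2 * γ (j + 1) ^ 2
          + 1 / 2 * (δ j' ^ 2 * ((j' : ℝ) / ((j : ℝ) + 1)) ^ (η + 1 / 2))) = F j := by
      rw [Finset.sum_add_distrib, Finset.sum_const, ← Finset.mul_sum, Nat.card_Icc]
      have hcard : (j + 1 + n + 1 - (j + 1)) = n + 1 := by omega
      rw [hcard, nsmul_eq_mul, hFdef, hBdef]
      push_cast
      ring
    exact le_of_le_of_eq hstep hsplit
  have hGsum : Summable G := Summable.of_nonneg_of_le hG0 hGF hFsum
  refine ⟨hGsum, ?_⟩
  have hFtsum : ∑' j, F j = 1 / 2 * (((n : ℝ) + 1) * 1) + 1 / 2 * ∑' j, B j := by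
    rw [hFdef]
    rw [Summable.tsum_add ((hγsum.mul_left ((n : ℝ) + 1)).mul_left (1 / 2)) (hBsum.mul_left (1 / 2))]
    rw [tsum_mul_left, tsum_mul_left, tsum_mul_left, hγ2]
  have hle : ∑' j, G j ≤ (1 + C) / 2 * ((n : ℝ) + 1) := by
    calc ∑' j, G j ≤ ∑' j, F j := Summable.tsum_le_tsum hGF hGsum hFsum
      _ = 1 / 2 * (((n : ℝ) + 1) * 1) + 1 / 2 * ∑' j, B j := hFtsum
      _ ≤ 1 / 2 * (((n : ℝ) + 1) * 1) + 1 / 2 * (C * ((n : ℝ) + 1)) := by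
          have h12 : (0:ℝ) ≤ 1 / 2 := by norm_num
          exact add_le_add le_rfl (mul_le_mul_of_nonneg_left hBtsum h12)
      _ = (1 + C) / 2 * ((n : ℝ) + 1) := by ring
  rw [one_div, inv_mul_le_iff₀ hn1]
  calc ∑' j, G j ≤ (1 + C) / 2 * ((n : ℝ) + 1) := hle
    _ = ((n : ℝ) + 1) * ((1 + C) / 2) := by ring
end

section
/- Let T be a bounded operator on a complex Hilbert space H and let C > 0 satisfy ‖Σ_{j=0}^{N−1} (N−j) λ^j T^j‖ ≤ C·N² for every integer N ≥ 1 and every λ ∈ ℂ with |λ| = 1. Then for every x ∈ H with ‖x‖ = 1 and every integer N ≥ 1, Σ_{j=0}^{N−1} ‖T^j x‖² ≤ 16 C² N². -/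
open Finset Complex

lemma geom_zero' {z : ℂ} (hz : z ≠ 1) {K : ℕ} (h : z ^ K = 1) :
    ∑ k ∈ Finset.range K, z ^ k = 0 := by
  rw [geom_sum_eq hz, h]
  simp

lemma orth_sum {K : ℕ} (hK : K ≠ 0) {ω : ℂ} (hprim : IsPrimitiveRoot ω K)
    {j j' : ℕ} (hj : j < K) (hj' : j' < K) :
    ∑ k ∈ Finset.range K, (starRingEnd ℂ) (ω ^ j) ^ k * (ω ^ j') ^ k
      = if j = j' then (K : ℂ) else 0 := by
  have hωn : ‖ω‖ = 1 := Complex.norm_eq_one_of_pow_eq_one hprim.pow_eq_one hK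
  have hconj : (starRingEnd ℂ) (ω ^ j) = (ω ^ j)⁻¹ := by
    rw [← Complex.inv_eq_conj (by rw [norm_pow, hωn, one_pow])]
  have hne : ω ^ j ≠ 0 := pow_ne_zero _ (hprim.ne_zero hK)
  rcases eq_or_ne j j' with rfl | hjj
  · rw [if_pos rfl]
    have : ∀ k ∈ Finset.range K, (starRingEnd ℂ) (ω ^ j) ^ k * (ω ^ j) ^ k = 1 := by
      intro k _
      rw [hconj, ← mul_pow, inv_mul_cancel₀ hne, one_pow]
    rw [Finset.sum_congr rfl this, Finset.sum_const, Finset.card_range, nsmul_eq_mul, mul_one]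
  · rw [if_neg hjj]
    have : ∀ k ∈ Finset.range K, (starRingEnd ℂ) (ω ^ j) ^ k * (ω ^ j') ^ k
        = ((ω ^ j)⁻¹ * ω ^ j') ^ k := by
      intro k _; rw [hconj, mul_pow]
    rw [Finset.sum_congr rfl this]
    apply geom_zero'
    · intro h
      exact hjj (hprim.pow_inj hj hj' ((inv_mul_eq_one₀ hne).mp h))
    · rw [mul_pow, inv_pow, ← pow_mul, ← pow_mul, mul_comm j K, mul_comm j' K, pow_mul, pow_mul,
        hprim.pow_eq_one, one_pow, one_pow, inv_one, one_mul]

/-- If `‖∑_{j<N} (N-j) λ^j T^j‖ ≤ C N²` for all `N ≥ 1` and all unimodular `λ`, then for every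
unit vector `x` and every `N ≥ 1`, `∑_{j<N} ‖T^j x‖² ≤ 16 C² N²`. -/
theorem stmt_7 {H : Type*} [NormedAddCommGroup H] [InnerProductSpace ℂ H] [CompleteSpace H]
    (T : H →L[ℂ] H) (C : ℝ) (hC : 0 < C)
    (hT : ∀ N : ℕ, 1 ≤ N → ∀ z : ℂ, ‖z‖ = 1 →
      ‖∑ j ∈ Finset.range N, (((N : ℂ) - (j : ℂ)) * z ^ j) • T ^ j‖ ≤ C * (N : ℝ) ^ 2) :
    ∀ x : H, ‖x‖ = 1 → ∀ N : ℕ, 1 ≤ N →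
      ∑ j ∈ Finset.range N, ‖(T ^ j) x‖ ^ 2 ≤ 16 * C ^ 2 * (N : ℝ) ^ 2 := by
  intro x hx N hN
  set M : ℕ := 2 * N with hMdef
  have hM0 : M ≠ 0 := by positivity
  have hM1 : 1 ≤ M := Nat.one_le_iff_ne_zero.2 hM0
  set ω : ℂ := Complex.exp (2 * Real.pi * Complex.I / M) with hωdef
  have hprim : IsPrimitiveRoot ω M := Complex.isPrimitiveRoot_exp M hM0
  have hωn : ‖ω‖ = 1 := Complex.norm_eq_one_of_pow_eq_one hprim.pow_eq_one hM0
  set v : ℕ → H := fun k => ∑ j ∈ Finset.range M, (((M : ℂ) - j) * (ω ^ k) ^ j) • (T ^ j) x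
    with hvdef
  -- Step 1: each ‖v k‖ ≤ C M²
  have hvk : ∀ k : ℕ, ‖v k‖ ≤ C * (M : ℝ) ^ 2 := by
    intro k
    have h1 := hT M hM1 (ω ^ k) (by rw [norm_pow, hωn, one_pow])
    have h2 : v k = (∑ j ∈ Finset.range M, (((M : ℂ) - j) * (ω ^ k) ^ j) • T ^ j) x := by
      simp [hvdef, ContinuousLinearMap.sum_apply, ContinuousLinearMap.smul_apply]
    calc ‖v k‖ = ‖(∑ j ∈ Finset.range M, (((M : ℂ) - j) * (ω ^ k) ^ j) • T ^ j) x‖ := by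
          rw [h2]
      _ ≤ ‖∑ j ∈ Finset.range M, (((M : ℂ) - j) * (ω ^ k) ^ j) • T ^ j‖ * ‖x‖ :=
          ContinuousLinearMap.le_opNorm _ _
      _ ≤ C * (M : ℝ) ^ 2 := by rw [hx, mul_one]; exact h1
  -- Step 2: sum of squared norms identity
  have key : ∑ k ∈ Finset.range M, (‖v k‖ : ℝ) ^ 2
      = (M : ℝ) * ∑ j ∈ Finset.range M, ((M : ℝ) - j) ^ 2 * ‖(T ^ j) x‖ ^ 2 := by
    have hc : ∑ k ∈ Finset.range M, (inner ℂ (v k) (v k) : ℂ)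
        = (M : ℂ) * ∑ j ∈ Finset.range M, (((M : ℂ) - j)) ^ 2 * (‖(T ^ j) x‖ : ℂ) ^ 2 := by
      have expand : ∀ k, (inner ℂ (v k) (v k) : ℂ)
          = ∑ j' ∈ Finset.range M, ∑ j ∈ Finset.range M,
              ((starRingEnd ℂ) ((M : ℂ) - j) * ((M : ℂ) - j')) *
              ((starRingEnd ℂ) (ω ^ j) ^ k * (ω ^ j') ^ k) *
              (inner ℂ ((T ^ j) x) ((T ^ j') x) : ℂ) := by
        intro k
        rw [hvdef]
        simp only [sum_inner, inner_sum, inner_smul_left, inner_smul_right]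
        refine Finset.sum_congr rfl fun j' _ => ?_
        rw [Finset.mul_sum]
        refine Finset.sum_congr rfl fun j _ => ?_
        have e1 : (ω ^ k) ^ j = (ω ^ j) ^ k := by rw [← pow_mul, mul_comm, pow_mul]
        have e2 : (ω ^ k) ^ j' = (ω ^ j') ^ k := by rw [← pow_mul, mul_comm, pow_mul]
        rw [e1, e2, map_mul, map_pow]
        ring
      rw [Finset.sum_congr rfl fun k _ => expand k, Finset.sum_comm, Finset.mul_sum]
      refine Finset.sum_congr rfl fun j' hj' => ?_
      rw [Finset.sum_comm]
      have step : ∀ j ∈ Finset.range M,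
          ∑ k ∈ Finset.range M,
            ((starRingEnd ℂ) ((M : ℂ) - j) * ((M : ℂ) - j')) *
            ((starRingEnd ℂ) (ω ^ j) ^ k * (ω ^ j') ^ k) *
            (inner ℂ ((T ^ j) x) ((T ^ j') x) : ℂ)
          = if j = j' then
              (M : ℂ) * (((starRingEnd ℂ) ((M : ℂ) - j) * ((M : ℂ) - j')) *
                (inner ℂ ((T ^ j) x) ((T ^ j') x) : ℂ))
            else 0 := by
        intro j hj
        have rearr : ∀ k ∈ Finset.range M,
            ((starRingEnd ℂ) ((M : ℂ) - j) * ((M : ℂ) - j')) *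
            ((starRingEnd ℂ) (ω ^ j) ^ k * (ω ^ j') ^ k) *
            (inner ℂ ((T ^ j) x) ((T ^ j') x) : ℂ)
            = (((starRingEnd ℂ) ((M : ℂ) - j) * ((M : ℂ) - j')) *
                (inner ℂ ((T ^ j) x) ((T ^ j') x) : ℂ)) *
              ((starRingEnd ℂ) (ω ^ j) ^ k * (ω ^ j') ^ k) := by
          intro k _; ring
        rw [Finset.sum_congr rfl rearr, ← Finset.mul_sum,
          orth_sum hM0 hprim (Finset.mem_range.1 hj) (Finset.mem_range.1 hj')]
        rcases eq_or_ne j j' with rfl | hne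
        · rw [if_pos rfl, if_pos rfl]; ring
        · rw [if_neg hne, if_neg hne, mul_zero]
      rw [Finset.sum_congr rfl step, Finset.sum_ite_eq' (Finset.range M)
        j' (fun j => (M : ℂ) * (((starRingEnd ℂ) ((M : ℂ) - j) * ((M : ℂ) - j')) *
          (inner ℂ ((T ^ j) x) ((T ^ j') x) : ℂ))), if_pos hj']
      have hconjM : (starRingEnd ℂ) ((M : ℂ) - (j' : ℂ)) = (M : ℂ) - (j' : ℂ) := by
        simp [map_sub]
      have hi : (inner ℂ ((T ^ j') x) ((T ^ j') x) : ℂ) = ((‖(T ^ j') x‖ ^ 2 : ℝ) : ℂ) := by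
        rw [inner_self_eq_norm_sq_to_K]; norm_cast
      rw [hconjM, hi]
      push_cast
      ring
    -- convert the complex identity to the real identity
    have h2 : ∀ k, (inner ℂ (v k) (v k) : ℂ) = ((‖v k‖ ^ 2 : ℝ) : ℂ) := by
      intro k; rw [inner_self_eq_norm_sq_to_K]; norm_cast
    rw [Finset.sum_congr rfl fun k _ => h2 k] at hc
    exact_mod_cast hc
  -- Step 3: conclude
  have upper : ∑ k ∈ Finset.range M, ‖v k‖ ^ 2 ≤ (M : ℝ) * (C * (M : ℝ) ^ 2) ^ 2 := by
    calc ∑ k ∈ Finset.range M, ‖v k‖ ^ 2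
        ≤ ∑ k ∈ Finset.range M, (C * (M : ℝ) ^ 2) ^ 2 :=
          Finset.sum_le_sum fun k _ => pow_le_pow_left₀ (norm_nonneg _) (hvk k) 2
      _ = (M : ℝ) * (C * (M : ℝ) ^ 2) ^ 2 := by
          rw [Finset.sum_const, Finset.card_range, nsmul_eq_mul]
  have hMpos : (0 : ℝ) < (M : ℝ) := by positivity
  have mid : ∑ j ∈ Finset.range M, ((M : ℝ) - j) ^ 2 * ‖(T ^ j) x‖ ^ 2
      ≤ (C * (M : ℝ) ^ 2) ^ 2 := by
    have := key ▸ upper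
    nlinarith [this]
  have lower : (N : ℝ) ^ 2 * ∑ j ∈ Finset.range N, ‖(T ^ j) x‖ ^ 2
      ≤ ∑ j ∈ Finset.range M, ((M : ℝ) - j) ^ 2 * ‖(T ^ j) x‖ ^ 2 := by
    rw [Finset.mul_sum]
    calc ∑ j ∈ Finset.range N, (N : ℝ) ^ 2 * ‖(T ^ j) x‖ ^ 2
        ≤ ∑ j ∈ Finset.range N, ((M : ℝ) - j) ^ 2 * ‖(T ^ j) x‖ ^ 2 := by
          refine Finset.sum_le_sum fun j hj => ?_
          have hjN : (j : ℝ) < N := by exact_mod_cast Finset.mem_range.1 hj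
          have hNM : (N : ℝ) ≤ (M : ℝ) - j := by
            have : (M : ℝ) = 2 * N := by rw [hMdef]; push_cast; ring
            linarith
          have h1 : (N : ℝ) ^ 2 ≤ ((M : ℝ) - j) ^ 2 :=
            pow_le_pow_left₀ (by positivity) hNM 2
          exact mul_le_mul_of_nonneg_right h1 (by positivity)
      _ ≤ ∑ j ∈ Finset.range M, ((M : ℝ) - j) ^ 2 * ‖(T ^ j) x‖ ^ 2 := by
          refine Finset.sum_le_sum_of_subset_of_nonneg
            (Finset.range_subset_range.2 (by omega)) fun j hj _ => by positivity
  have hNpos : (0 : ℝ) < (N : ℝ) := by exact_mod_cast hN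
  have hM2 : (M : ℝ) = 2 * N := by rw [hMdef]; push_cast; ring
  have final : (N : ℝ) ^ 2 * ∑ j ∈ Finset.range N, ‖(T ^ j) x‖ ^ 2
      ≤ (N : ℝ) ^ 2 * (16 * C ^ 2 * (N : ℝ) ^ 2) := by
    calc (N : ℝ) ^ 2 * ∑ j ∈ Finset.range N, ‖(T ^ j) x‖ ^ 2
        ≤ (C * (M : ℝ) ^ 2) ^ 2 := le_trans lower mid
      _ = (N : ℝ) ^ 2 * (16 * C ^ 2 * (N : ℝ) ^ 2) := by rw [hM2]; ring
  exact le_of_mul_le_mul_left (by linarith [final]) (by positivity : (0:ℝ) < (N:ℝ)^2)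
end

section
/- Let T be a bounded operator on a complex Hilbert space H and let C > 0 satisfy ‖Σ_{j=0}^{N−1} (N−j) λ^j T^j‖ ≤ C·N² for every integer N ≥ 1 and every λ ∈ ℂ with |λ| = 1. Let 0 < M < N be integers and let x ∈ H with ‖x‖ = 1 and T^N x ≠ 0. Then Σ_{j=0}^{M−1} ‖T^N x‖²/‖T^{N−j} x‖² ≤ 16 C² M². -/
open Finset Complex

local notation "⟪" x ", " y "⟫" => @inner ℂ _ _ x y

private lemma geom_orth (L : ℕ) (hL : 0 < L) (j k : ℕ) (hj : j < L) (hk : k < L) :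
    ∑ m ∈ Finset.range L, (Complex.exp (2 * Real.pi * Complex.I / L) ^ ((j : ℤ) - (k : ℤ))) ^ m
      = if j = k then (L : ℂ) else 0 := by
  set ζ := Complex.exp (2 * Real.pi * Complex.I / L) with hζ
  have hprim : IsPrimitiveRoot ζ L := Complex.isPrimitiveRoot_exp L hL.ne'
  by_cases h : j = k
  · subst h; simp
  · have hd : ((j : ℤ) - k) ≠ 0 := sub_ne_zero.mpr (by exact_mod_cast h)
    have hne : ζ ^ ((j : ℤ) - k) ≠ 1 := by
      intro heq
      have hdvd : (L : ℤ) ∣ ((j : ℤ) - k) := (hprim.zpow_eq_one_iff_dvd _).mp heq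
      have : (L : ℕ) ∣ ((j : ℤ) - k).natAbs := Int.natAbs_dvd_natAbs.mpr (by simpa using hdvd)
      have := Nat.le_of_dvd (Int.natAbs_pos.mpr hd) this
      omega
    have hpow : (ζ ^ ((j : ℤ) - k)) ^ L = 1 := by
      rw [← zpow_natCast, ← zpow_mul, mul_comm, zpow_mul, zpow_natCast, hprim.pow_eq_one,
        one_zpow]
    rw [if_neg h, geom_sum_eq hne, hpow, sub_self, zero_div]

private lemma orth2 (L : ℕ) (hL : 0 < L) (j k : ℕ) (hj : j < L) (hk : k < L) :
    ∑ m ∈ Finset.range L,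
        ((Complex.exp (2 * Real.pi * Complex.I / L) ^ m) ^ j *
          (starRingEnd ℂ) (Complex.exp (2 * Real.pi * Complex.I / L) ^ m) ^ k)
      = if j = k then (L : ℂ) else 0 := by
  set ζ := Complex.exp (2 * Real.pi * Complex.I / L) with hζ
  have hprim : IsPrimitiveRoot ζ L := Complex.isPrimitiveRoot_exp L hL.ne'
  have hζ0 : ζ ≠ 0 := Complex.exp_ne_zero _
  have hζ1 : ‖ζ‖ = 1 := Complex.norm_eq_one_of_pow_eq_one hprim.pow_eq_one hL.ne'
  rw [← geom_orth L hL j k hj hk]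
  refine Finset.sum_congr rfl fun m _ => ?_
  have hζm : ‖ζ ^ m‖ = 1 := by rw [norm_pow, hζ1, one_pow]
  rw [← Complex.inv_eq_conj hζm]
  rw [← zpow_natCast (ζ ^ m) j, ← zpow_natCast ((ζ ^ m)⁻¹) k, inv_zpow, ← zpow_neg,
    ← zpow_add₀ (pow_ne_zero _ hζ0), ← zpow_natCast ζ m, ← zpow_mul, ← hζ,
    ← zpow_natCast (ζ ^ ((j : ℤ) - k)) m, ← zpow_mul]
  ring_nf

private lemma sum_orth_mul (L P Q : ℕ) (hL : 0 < L) (hP : P ≤ L) (hQ : Q ≤ L)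
    (c : ℕ → ℕ → ℂ) :
    ∑ m ∈ Finset.range L, ∑ j ∈ Finset.range P, ∑ k ∈ Finset.range Q,
        ((Complex.exp (2 * Real.pi * Complex.I / L) ^ m) ^ j *
          (starRingEnd ℂ) (Complex.exp (2 * Real.pi * Complex.I / L) ^ m) ^ k) * c j k
      = ∑ k ∈ Finset.range (min P Q), (L : ℂ) * c k k := by
  set ζ := Complex.exp (2 * Real.pi * Complex.I / L) with hζ
  rw [Finset.sum_comm]
  calc ∑ j ∈ Finset.range P, ∑ m ∈ Finset.range L, ∑ k ∈ Finset.range Q,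
        ((ζ ^ m) ^ j * (starRingEnd ℂ) (ζ ^ m) ^ k) * c j k
      = ∑ j ∈ Finset.range P, ∑ k ∈ Finset.range Q,
          (∑ m ∈ Finset.range L, (ζ ^ m) ^ j * (starRingEnd ℂ) (ζ ^ m) ^ k) * c j k := by
        refine Finset.sum_congr rfl fun j _ => ?_
        rw [Finset.sum_comm]
        exact Finset.sum_congr rfl fun k _ => (Finset.sum_mul _ _ _).symm
    _ = ∑ j ∈ Finset.range P, ∑ k ∈ Finset.range Q,
          (if j = k then ((L : ℂ) * c j k) else 0) := by
        refine Finset.sum_congr rfl fun j hj => Finset.sum_congr rfl fun k hk => ?_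
        rw [orth2 L hL j k (lt_of_lt_of_le (Finset.mem_range.mp hj) hP)
          (lt_of_lt_of_le (Finset.mem_range.mp hk) hQ), ite_mul, zero_mul]
    _ = ∑ j ∈ Finset.range P, if j ∈ Finset.range Q then (L : ℂ) * c j j else 0 :=
        Finset.sum_congr rfl fun j _ => Finset.sum_ite_eq (Finset.range Q) j _
    _ = ∑ k ∈ Finset.range P ∩ Finset.range Q, (L : ℂ) * c k k := Finset.sum_ite_mem _ _ _
    _ = ∑ k ∈ Finset.range (min P Q), (L : ℂ) * c k k := by
        congr 1; ext a; simp only [Finset.mem_inter, Finset.mem_range, lt_min_iff]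

/-- If `‖∑_{j<N} (N-j) λ^j T^j‖ ≤ C N²` for all `N ≥ 1` and unimodular `λ`, then for integers
`0 < M < N` and a unit vector `x` with `T^N x ≠ 0`,
`∑_{j<M} ‖T^N x‖² / ‖T^{N-j} x‖² ≤ 16 C² M²`. -/
theorem stmt_8 {H : Type*} [NormedAddCommGroup H] [InnerProductSpace ℂ H] [CompleteSpace H]
    (T : H →L[ℂ] H) (C : ℝ) (hC : 0 < C)
    (hT : ∀ N : ℕ, 1 ≤ N → ∀ z : ℂ, ‖z‖ = 1 →
      ‖∑ j ∈ Finset.range N, (((N : ℂ) - (j : ℂ)) * z ^ j) • T ^ j‖ ≤ C * (N : ℝ) ^ 2)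
    (M N : ℕ) (hM : 0 < M) (hMN : M < N)
    (x : H) (hx : ‖x‖ = 1) (hTN : (T ^ N) x ≠ 0) :
    ∑ j ∈ Finset.range M, ‖(T ^ N) x‖ ^ 2 / ‖(T ^ (N - j)) x‖ ^ 2 ≤ 16 * C ^ 2 * (M : ℝ) ^ 2 := by
  have hcomp : ∀ j k : ℕ, (T ^ j) ((T ^ (N - k)) x) = (T ^ (j + (N - k))) x := fun j k => by
    rw [pow_add, ContinuousLinearMap.mul_apply]
  have hTk : ∀ k, k ≤ N → (T ^ (N - k)) x ≠ 0 := by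
    intro k hk h0
    apply hTN
    have h1 : (T ^ (k + (N - k))) x = (T ^ k) ((T ^ (N - k)) x) := by
      rw [pow_add, ContinuousLinearMap.mul_apply]
    rw [Nat.add_sub_cancel' hk] at h1
    rw [h1, h0, map_zero]
  set y := (T ^ N) x with hy
  have hy0 : 0 < ‖y‖ := norm_pos_iff.mpr hTN
  set L := 2 * M with hLdef
  have hL0 : 0 < L := by omega
  set ζ := Complex.exp (2 * Real.pi * Complex.I / L) with hζ
  have hζm : ∀ m : ℕ, ‖ζ ^ m‖ = 1 := by
    intro m
    have hprim : IsPrimitiveRoot ζ L := Complex.isPrimitiveRoot_exp L hL0.ne'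
    rw [norm_pow, Complex.norm_eq_one_of_pow_eq_one hprim.pow_eq_one hL0.ne', one_pow]
  set t : ℕ → ℝ := fun k => (‖(T ^ (N - k)) x‖ ^ 2)⁻¹ with htdef
  have htpos : ∀ k, k < M → 0 < t k := by
    intro k hk
    have h0 := hTk k (by omega)
    have h1 : 0 < ‖(T ^ (N - k)) x‖ := norm_pos_iff.mpr h0
    positivity
  set v : ℕ → H := fun m =>
    ∑ k ∈ Finset.range M, (((starRingEnd ℂ) (ζ ^ m)) ^ k * (t k : ℂ)) • ((T ^ (N - k)) x)
    with hvdef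
  have hself : ∀ w : H, (⟪w, w⟫ : ℂ) = ((‖w‖ ^ 2 : ℝ) : ℂ) := fun w => by
    rw [inner_self_eq_norm_sq_to_K]; norm_cast
  -- key identity A
  have hA : ∑ m ∈ Finset.range L,
      ⟪y, (∑ j ∈ Finset.range L, (((L : ℂ) - (j : ℂ)) * (ζ ^ m) ^ j) • T ^ j) (v m)⟫
      = (((L : ℝ) * ∑ k ∈ Finset.range M, (((L : ℝ) - k) * t k * ‖y‖ ^ 2) : ℝ) : ℂ) := by
    have expand : ∀ m : ℕ,
        ⟪y, (∑ j ∈ Finset.range L, (((L : ℂ) - (j : ℂ)) * (ζ ^ m) ^ j) • T ^ j) (v m)⟫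
        = ∑ j ∈ Finset.range L, ∑ k ∈ Finset.range M,
            ((ζ ^ m) ^ j * ((starRingEnd ℂ) (ζ ^ m)) ^ k) *
              ((((L : ℂ) - (j : ℂ)) * (t k : ℂ)) * ⟪y, (T ^ (j + (N - k))) x⟫) := by
      intro m
      rw [ContinuousLinearMap.sum_apply, inner_sum]
      refine Finset.sum_congr rfl fun j _ => ?_
      rw [ContinuousLinearMap.smul_apply, inner_smul_right, hvdef]
      simp only [map_sum, map_smul, hcomp, inner_sum, inner_smul_right]
      rw [Finset.mul_sum]
      refine Finset.sum_congr rfl fun k _ => ?_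
      ring
    rw [Finset.sum_congr rfl fun m _ => expand m]
    rw [sum_orth_mul L L M hL0 le_rfl (by omega) _]
    rw [min_eq_right (by omega : M ≤ L)]
    push_cast
    rw [Finset.mul_sum]
    refine Finset.sum_congr rfl fun k hk => ?_
    have hkN : k + (N - k) = N := Nat.add_sub_cancel' (by have := Finset.mem_range.mp hk; omega)
    rw [hkN, ← FunLike.coe_pow_eq_iterate, ← hy, hself]
    push_cast
    ring
  -- key identity B
  have hB : ∑ m ∈ Finset.range L, ‖v m‖ ^ 2 = (L : ℝ) * ∑ k ∈ Finset.range M, t k := by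
    have hVV : ∀ m : ℕ, (⟪v m, v m⟫ : ℂ)
        = ∑ j ∈ Finset.range M, ∑ k ∈ Finset.range M,
            ((ζ ^ m) ^ j * ((starRingEnd ℂ) (ζ ^ m)) ^ k) *
              (((t j : ℂ) * (t k : ℂ)) * ⟪(T ^ (N - j)) x, (T ^ (N - k)) x⟫) := by
      intro m
      rw [hvdef]
      rw [sum_inner]
      refine Finset.sum_congr rfl fun j _ => ?_
      rw [inner_smul_left, inner_sum, Finset.mul_sum]
      refine Finset.sum_congr rfl fun k _ => ?_
      rw [inner_smul_right]
      simp only [map_mul, map_pow, Complex.conj_conj, Complex.conj_ofReal]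
      ring
    have hBC : ∑ m ∈ Finset.range L, (⟪v m, v m⟫ : ℂ)
        = (((L : ℝ) * ∑ k ∈ Finset.range M, t k : ℝ) : ℂ) := by
      rw [Finset.sum_congr rfl fun m _ => hVV m]
      rw [sum_orth_mul L M M hL0 (by omega) (by omega) _, min_self]
      push_cast
      rw [Finset.mul_sum]
      refine Finset.sum_congr rfl fun k hk => ?_
      rw [hself]
      have hne : ‖(T ^ (N - k)) x‖ ^ 2 ≠ 0 := by
        have h1 : 0 < ‖(T ^ (N - k)) x‖ :=
          norm_pos_iff.mpr (hTk k (by have := Finset.mem_range.mp hk; omega))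
        positivity
      have ht1 : t k * ‖(T ^ (N - k)) x‖ ^ 2 = 1 := inv_mul_cancel₀ hne
      have ht1' : (t k : ℂ) * ((‖(T ^ (N - k)) x‖ ^ 2 : ℝ) : ℂ) = 1 := by exact_mod_cast ht1
      simp only [FunLike.coe_pow_eq_iterate] at ht1'
      linear_combination ((L : ℂ) * (t k : ℂ)) * ht1'
    have heq : ∑ m ∈ Finset.range L, (⟪v m, v m⟫ : ℂ)
        = ((∑ m ∈ Finset.range L, ‖v m‖ ^ 2 : ℝ) : ℂ) := by
      rw [Complex.ofReal_sum]
      exact Finset.sum_congr rfl fun m _ => hself (v m)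
    exact_mod_cast heq.symm.trans hBC
  set S := ∑ k ∈ Finset.range M, t k with hSdef
  have hS0 : 0 < S :=
    Finset.sum_pos (fun k hk => htpos k (Finset.mem_range.mp hk)) (by simp [hM.ne'])
  set s := Real.sqrt S with hsdef
  have hs0 : 0 < s := Real.sqrt_pos.mpr hS0
  have hsS : s ^ 2 = S := Real.sq_sqrt hS0.le
  -- operator norm bound for each m
  have hop : ∀ m : ℕ,
      ‖⟪y, (∑ j ∈ Finset.range L, (((L : ℂ) - (j : ℂ)) * (ζ ^ m) ^ j) • T ^ j) (v m)⟫‖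
        ≤ ‖y‖ * ((C * (L : ℝ) ^ 2) * ‖v m‖) := by
    intro m
    refine (norm_inner_le_norm _ _).trans ?_
    have h2 := (∑ j ∈ Finset.range L, (((L : ℂ) - (j : ℂ)) * (ζ ^ m) ^ j) • T ^ j).le_opNorm (v m)
    have h3 := hT L (by omega) (ζ ^ m) (hζm m)
    have h4 : ‖(∑ j ∈ Finset.range L, (((L : ℂ) - (j : ℂ)) * (ζ ^ m) ^ j) • T ^ j) (v m)‖
        ≤ (C * (L : ℝ) ^ 2) * ‖v m‖ :=
      h2.trans (mul_le_mul_of_nonneg_right h3 (norm_nonneg _))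
    exact mul_le_mul_of_nonneg_left h4 (norm_nonneg _)
  -- total bound
  have htot : (L : ℝ) * ∑ k ∈ Finset.range M, (((L : ℝ) - k) * t k * ‖y‖ ^ 2)
      ≤ ‖y‖ * ((C * (L : ℝ) ^ 2) * ∑ m ∈ Finset.range L, ‖v m‖) := by
    have h1 : ‖∑ m ∈ Finset.range L,
        ⟪y, (∑ j ∈ Finset.range L, (((L : ℂ) - (j : ℂ)) * (ζ ^ m) ^ j) • T ^ j) (v m)⟫‖
        ≤ ∑ m ∈ Finset.range L,
            ‖⟪y, (∑ j ∈ Finset.range L, (((L : ℂ) - (j : ℂ)) * (ζ ^ m) ^ j) • T ^ j) (v m)⟫‖ :=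
      norm_sum_le _ _
    rw [hA] at h1
    have h2 : (L : ℝ) * ∑ k ∈ Finset.range M, (((L : ℝ) - k) * t k * ‖y‖ ^ 2)
        ≤ ‖(((L : ℝ) * ∑ k ∈ Finset.range M, (((L : ℝ) - k) * t k * ‖y‖ ^ 2) : ℝ) : ℂ)‖ := by
      rw [Complex.norm_real]
      exact le_abs_self _
    refine (h2.trans h1).trans ?_
    calc ∑ m ∈ Finset.range L,
          ‖⟪y, (∑ j ∈ Finset.range L, (((L : ℂ) - (j : ℂ)) * (ζ ^ m) ^ j) • T ^ j) (v m)⟫‖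
        ≤ ∑ m ∈ Finset.range L, ‖y‖ * ((C * (L : ℝ) ^ 2) * ‖v m‖) :=
          Finset.sum_le_sum fun m _ => hop m
      _ = ‖y‖ * ((C * (L : ℝ) ^ 2) * ∑ m ∈ Finset.range L, ‖v m‖) := by
          simp only [← Finset.mul_sum]
  -- Cauchy-Schwarz for the sum of norms
  have hcauchy : ∑ m ∈ Finset.range L, ‖v m‖ ≤ (L : ℝ) * s := by
    have h1 : (∑ m ∈ Finset.range L, ‖v m‖) ^ 2 ≤ (L : ℝ) * ∑ m ∈ Finset.range L, ‖v m‖ ^ 2 := by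
      have := sq_sum_le_card_mul_sum_sq (s := Finset.range L) (f := fun m => ‖v m‖)
      simpa using this
    rw [hB] at h1
    have h1' : (∑ m ∈ Finset.range L, ‖v m‖) ^ 2 ≤ ((L : ℝ) * s) ^ 2 := by nlinarith [hsS]
    have h2 : ∑ m ∈ Finset.range L, ‖v m‖ = Real.sqrt ((∑ m ∈ Finset.range L, ‖v m‖) ^ 2) :=
      (Real.sqrt_sq (Finset.sum_nonneg fun m _ => norm_nonneg _)).symm
    rw [h2]
    calc Real.sqrt ((∑ m ∈ Finset.range L, ‖v m‖) ^ 2) ≤ Real.sqrt (((L : ℝ) * s) ^ 2) :=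
          Real.sqrt_le_sqrt h1'
      _ = (L : ℝ) * s := Real.sqrt_sq (by positivity)
  -- lower bound for the LHS of htot
  have hlow : (L : ℝ) * ((M : ℝ) * S * ‖y‖ ^ 2)
      ≤ (L : ℝ) * ∑ k ∈ Finset.range M, (((L : ℝ) - k) * t k * ‖y‖ ^ 2) := by
    have h1 : (M : ℝ) * S * ‖y‖ ^ 2 ≤ ∑ k ∈ Finset.range M, (((L : ℝ) - k) * t k * ‖y‖ ^ 2) := by
      rw [hSdef, Finset.mul_sum, Finset.sum_mul]
      refine Finset.sum_le_sum fun k hk => ?_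
      have hkM : k < M := Finset.mem_range.mp hk
      have hL2 : (L : ℝ) = 2 * M := by rw [hLdef]; push_cast; ring
      have hk' : (k : ℝ) ≤ (M : ℝ) - 1 := by
        have : (k : ℝ) + 1 ≤ M := by exact_mod_cast hkM
        linarith
      have ht := (htpos k hkM).le
      have h5 : (M : ℝ) ≤ (L : ℝ) - k := by rw [hL2]; linarith
      have h6 : (0 : ℝ) ≤ t k * ‖y‖ ^ 2 := by positivity
      calc (M : ℝ) * t k * ‖y‖ ^ 2 = (M : ℝ) * (t k * ‖y‖ ^ 2) := by ring
        _ ≤ ((L : ℝ) - k) * (t k * ‖y‖ ^ 2) := mul_le_mul_of_nonneg_right h5 h6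
        _ = ((L : ℝ) - k) * t k * ‖y‖ ^ 2 := by ring
    exact mul_le_mul_of_nonneg_left h1 (by positivity)
  -- combine
  have key : (M : ℝ) * S * ‖y‖ ^ 2 ≤ C * (L : ℝ) ^ 2 * ‖y‖ * s := by
    have h1 : (L : ℝ) * ((M : ℝ) * S * ‖y‖ ^ 2)
        ≤ (L : ℝ) * (C * (L : ℝ) ^ 2 * ‖y‖ * s) := by
      refine hlow.trans (htot.trans ?_)
      calc ‖y‖ * ((C * (L : ℝ) ^ 2) * ∑ m ∈ Finset.range L, ‖v m‖)
          ≤ ‖y‖ * ((C * (L : ℝ) ^ 2) * ((L : ℝ) * s)) :=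
            mul_le_mul_of_nonneg_left
              (mul_le_mul_of_nonneg_left hcauchy (by positivity)) (norm_nonneg _)
        _ = (L : ℝ) * (C * (L : ℝ) ^ 2 * ‖y‖ * s) := by ring
    have hLpos : (0 : ℝ) < L := by exact_mod_cast hL0
    exact le_of_mul_le_mul_left h1 hLpos
  have hL2 : (L : ℝ) = 2 * M := by rw [hLdef]; push_cast; ring
  have hMpos : (0 : ℝ) < M := by exact_mod_cast hM
  have h2 : s * ‖y‖ ≤ 4 * C * M := by
    rw [hL2] at key
    rw [← hsS] at key
    nlinarith [mul_pos (mul_pos hMpos hs0) hy0, key, hs0, hy0, hC]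
  have hgoal : ∑ j ∈ Finset.range M, ‖(T ^ N) x‖ ^ 2 / ‖(T ^ (N - j)) x‖ ^ 2 = ‖y‖ ^ 2 * S := by
    rw [hSdef, Finset.mul_sum]
    exact Finset.sum_congr rfl fun j _ => by rw [div_eq_mul_inv]
  rw [hgoal, ← hsS]
  calc ‖y‖ ^ 2 * s ^ 2 = (s * ‖y‖) ^ 2 := by ring
    _ ≤ (4 * C * M) ^ 2 := by
        have h0 : 0 ≤ s * ‖y‖ := by positivity
        exact pow_le_pow_left₀ h0 h2 2
    _ = 16 * C ^ 2 * (M : ℝ) ^ 2 := by ring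
end

section
/- Let T be a bounded operator on a complex Hilbert space H and let C > 0 satisfy ‖Σ_{j=0}^{N−1} (N−j) λ^j T^j‖ ≤ C·N² for every integer N ≥ 1 and every λ ∈ ℂ with |λ| = 1. Let N ≥ 1 be an integer and let x ∈ H with ‖x‖ = 1 and T^N x ≠ 0. Then Σ_{j=0}^{N−1} 1/‖T^j x‖ ≥ √N/(4C). -/
open Finset Complex

local notation "⟪" x ", " y "⟫" => @inner ℂ _ _ x y

lemma parseval_roots {H : Type*} [NormedAddCommGroup H] [InnerProductSpace ℂ H]
    (N : ℕ) (hN : 1 ≤ N) (v : ℕ → H) :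
    ∑ m ∈ range N, (‖∑ j ∈ range N, (Complex.exp (2 * Real.pi * I / N)) ^ (m * j) • v j‖ : ℝ) ^ 2
      = N * ∑ j ∈ range N, (‖v j‖ : ℝ) ^ 2 := by
  set ω : ℂ := Complex.exp (2 * Real.pi * I / N) with hω
  have hprim : IsPrimitiveRoot ω N := Complex.isPrimitiveRoot_exp N (by omega)
  have hωN : ω ^ N = 1 := hprim.pow_eq_one
  have hω0 : ω ≠ 0 := fun h => by simp [h, zero_pow (by omega : N ≠ 0)] at hωN
  have habs : ‖ω‖ = 1 := by
    have harg : (2 * (Real.pi : ℂ) * I / (N : ℂ)) = ((2 * Real.pi / N : ℝ) : ℂ) * I := by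
      push_cast; ring
    rw [hω, harg, Complex.norm_exp_ofReal_mul_I]
  have hconj : (starRingEnd ℂ) ω * ω = 1 := by
    rw [mul_comm, Complex.mul_conj]
    norm_cast
    rw [Complex.normSq_eq_norm_sq, habs]
    norm_num
  have hy : ∀ y : H, (‖y‖ : ℂ) ^ 2 = ⟪y, y⟫ := fun y => (inner_self_eq_norm_sq_to_K y).symm
  have key : ∀ j ∈ range N, ∀ k ∈ range N,
      ∑ m ∈ range N, (starRingEnd ℂ) (ω ^ (m * j)) * ω ^ (m * k)
        = if k = j then (N : ℂ) else 0 := by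
    intro j hj k hk
    have hterm : ∀ m : ℕ, (starRingEnd ℂ) (ω ^ (m * j)) * ω ^ (m * k)
        = (((starRingEnd ℂ) ω) ^ j * ω ^ k) ^ m := by
      intro m
      rw [map_pow, mul_pow, ← pow_mul, ← pow_mul, Nat.mul_comm j m, Nat.mul_comm k m]
    simp only [hterm]
    by_cases hkj : k = j
    · subst hkj
      have : ((starRingEnd ℂ) ω) ^ k * ω ^ k = 1 := by
        rw [← mul_pow, hconj, one_pow]
      simp [this]
    · rw [if_neg hkj]
      set u : ℂ := ((starRingEnd ℂ) ω) ^ j * ω ^ k with hu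
      have hinv : (starRingEnd ℂ) ω = ω⁻¹ := eq_inv_of_mul_eq_one_left hconj
      have hu1 : u ≠ 1 := by
        intro h
        have h'' : (ω ^ j)⁻¹ * ω ^ k = 1 := by
          rw [hu, hinv, inv_pow] at h; exact h
        have hjk : ω ^ j = ω ^ k := (inv_mul_eq_one₀ (pow_ne_zero j hω0)).mp h''
        exact hkj (hprim.pow_inj (mem_range.mp hk) (mem_range.mp hj) hjk.symm)
      have huN : u ^ N = 1 := by
        rw [hu, mul_pow, ← pow_mul, ← pow_mul, Nat.mul_comm j N, Nat.mul_comm k N,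
          pow_mul, pow_mul, ← map_pow, hωN]
        simp
      rw [geom_sum_eq hu1, huN]
      simp
  have expand : ∀ m : ℕ,
      (‖∑ j ∈ range N, ω ^ (m * j) • v j‖ : ℂ) ^ 2
        = ∑ j ∈ range N, ∑ k ∈ range N,
            ((starRingEnd ℂ) (ω ^ (m * j)) * ω ^ (m * k)) * ⟪v j, v k⟫ := by
    intro m
    rw [hy, sum_inner]
    refine Finset.sum_congr rfl fun j hj => ?_
    rw [inner_sum]
    refine Finset.sum_congr rfl fun k hk => ?_
    rw [inner_smul_left, inner_smul_right]
    ring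
  have main : ∑ m ∈ range N, (‖∑ j ∈ range N, ω ^ (m * j) • v j‖ : ℂ) ^ 2
      = N * ∑ j ∈ range N, (‖v j‖ : ℂ) ^ 2 := by
    simp only [expand]
    rw [Finset.sum_comm, Finset.mul_sum]
    refine Finset.sum_congr rfl fun j hj => ?_
    rw [Finset.sum_comm]
    have hc : ∀ k ∈ range N,
        ∑ m ∈ range N, ((starRingEnd ℂ) (ω ^ (m * j)) * ω ^ (m * k)) * ⟪v j, v k⟫
          = (if k = j then (N : ℂ) else 0) * ⟪v j, v k⟫ := by
      intro k hk
      rw [← Finset.sum_mul, key j hj k hk]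
    rw [Finset.sum_congr rfl hc,
      Finset.sum_eq_single j (fun k _ hkj => by rw [if_neg hkj, zero_mul])
        (fun h => absurd hj h), if_pos rfl, ← hy]
  have h2 : ((∑ m ∈ range N, (‖∑ j ∈ range N, ω ^ (m * j) • v j‖ : ℝ) ^ 2 : ℝ) : ℂ)
      = ((N * ∑ j ∈ range N, (‖v j‖ : ℝ) ^ 2 : ℝ) : ℂ) := by
    push_cast
    exact main
  exact_mod_cast h2

set_option maxHeartbeats 1000000 in
/-- If `‖∑_{j<N} (N-j) λ^j T^j‖ ≤ C N²` for all `N ≥ 1` and unimodular `λ`, then for `N ≥ 1`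
and a unit vector `x` with `T^N x ≠ 0`, `∑_{j<N} 1 / ‖T^j x‖ ≥ √N / (4C)`. -/
theorem stmt_9 {H : Type*} [NormedAddCommGroup H] [InnerProductSpace ℂ H] [CompleteSpace H]
    (T : H →L[ℂ] H) (C : ℝ) (hC : 0 < C)
    (hT : ∀ N : ℕ, 1 ≤ N → ∀ z : ℂ, ‖z‖ = 1 →
      ‖∑ j ∈ Finset.range N, (((N : ℂ) - (j : ℂ)) * z ^ j) • T ^ j‖ ≤ C * (N : ℝ) ^ 2)
    (N : ℕ) (hN : 1 ≤ N) (x : H) (hx : ‖x‖ = 1) (hTN : (T ^ N) x ≠ 0) :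
    Real.sqrt N / (4 * C) ≤ ∑ j ∈ Finset.range N, 1 / ‖(T ^ j) x‖ := by
  set ω : ℂ := Complex.exp (2 * Real.pi * I / N) with hω
  set a : ℕ → ℝ := fun j => ‖(T ^ j) x‖ with ha
  -- positivity of a j for j ≤ N
  have haj : ∀ j, j ≤ N → 0 < a j := by
    intro j hj
    rw [ha]
    simp only [norm_pos_iff]
    intro h0
    apply hTN
    have : T ^ N = T ^ (N - j) * T ^ j := by rw [← pow_add]; congr 1; omega
    rw [this, ContinuousLinearMap.mul_apply, h0, map_zero]
  -- norm of ω is 1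
  have habs : ‖ω‖ = 1 := by
    have harg : (2 * (Real.pi : ℂ) * I / (N : ℂ)) = ((2 * Real.pi / N : ℝ) : ℂ) * I := by
      push_cast; ring
    rw [hω, harg, Complex.norm_exp_ofReal_mul_I]
  set v : ℕ → H := fun j => ((N : ℂ) - (j : ℂ)) • ((T ^ j) x) with hv
  -- bound on each rotated sum
  have hbound : ∀ m : ℕ, ‖∑ j ∈ range N, ω ^ (m * j) • v j‖ ≤ C * (N : ℝ) ^ 2 := by
    intro m
    have hzm : ‖ω ^ m‖ = 1 := by rw [norm_pow, habs, one_pow]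
    have h1 := hT N hN (ω ^ m) hzm
    have h2 : (∑ j ∈ range N, (((N : ℂ) - (j : ℂ)) * (ω ^ m) ^ j) • T ^ j) x
        = ∑ j ∈ range N, ω ^ (m * j) • v j := by
      rw [ContinuousLinearMap.sum_apply]
      refine Finset.sum_congr rfl fun j hj => ?_
      rw [ContinuousLinearMap.smul_apply, hv]
      simp only [smul_smul, ← pow_mul]
      ring_nf
    calc ‖∑ j ∈ range N, ω ^ (m * j) • v j‖
        = ‖(∑ j ∈ range N, (((N : ℂ) - (j : ℂ)) * (ω ^ m) ^ j) • T ^ j) x‖ := by rw [h2]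
      _ ≤ ‖∑ j ∈ range N, (((N : ℂ) - (j : ℂ)) * (ω ^ m) ^ j) • T ^ j‖ * ‖x‖ :=
          ContinuousLinearMap.le_opNorm _ x
      _ ≤ C * (N : ℝ) ^ 2 := by rw [hx, mul_one]; exact h1
  -- norm of v j
  have hnv : ∀ j, j < N → ‖v j‖ = ((N : ℝ) - j) * a j := by
    intro j hj
    rw [hv]
    simp only [norm_smul]
    congr 1
    have : (N : ℂ) - (j : ℂ) = Complex.ofReal ((N : ℝ) - (j : ℝ)) := by push_cast; ring
    rw [this, Complex.norm_real, Real.norm_eq_abs]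
    have hjle : (j : ℝ) ≤ (N : ℝ) := by exact_mod_cast hj.le
    exact abs_of_nonneg (by linarith)
  -- Step A : ∑ ((N-j) a j)^2 ≤ C^2 N^4
  have hQ : ∑ j ∈ range N, (((N : ℝ) - j) * a j) ^ 2 ≤ C ^ 2 * (N : ℝ) ^ 4 := by
    have hp := parseval_roots N hN v
    have hsum : ∑ m ∈ range N, (‖∑ j ∈ range N, ω ^ (m * j) • v j‖ : ℝ) ^ 2
        ≤ (N : ℝ) * (C * (N : ℝ) ^ 2) ^ 2 := by
      calc ∑ m ∈ range N, (‖∑ j ∈ range N, ω ^ (m * j) • v j‖ : ℝ) ^ 2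
          ≤ ∑ m ∈ range N, (C * (N : ℝ) ^ 2) ^ 2 :=
            Finset.sum_le_sum fun m _ => pow_le_pow_left₀ (norm_nonneg _) (hbound m) 2
        _ = (N : ℝ) * (C * (N : ℝ) ^ 2) ^ 2 := by
            rw [Finset.sum_const, card_range, nsmul_eq_mul]
    rw [hp] at hsum
    have hsum2 : ∑ j ∈ range N, ‖v j‖ ^ 2 ≤ (C * (N : ℝ) ^ 2) ^ 2 := by
      have hNpos : (0 : ℝ) < N := by exact_mod_cast hN
      nlinarith [hsum]
    calc ∑ j ∈ range N, (((N : ℝ) - j) * a j) ^ 2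
        = ∑ j ∈ range N, ‖v j‖ ^ 2 :=
          Finset.sum_congr rfl fun j hj => by rw [hnv j (mem_range.mp hj)]
      _ ≤ (C * (N : ℝ) ^ 2) ^ 2 := hsum2
      _ = C ^ 2 * (N : ℝ) ^ 4 := by ring
  -- Step B : P ≤ C N^2 √N
  set P : ℝ := ∑ j ∈ range N, ((N : ℝ) - j) * a j with hP
  have hPnonneg : 0 ≤ P := by
    apply Finset.sum_nonneg
    intro j hj
    have hjN := mem_range.mp hj
    have : (j : ℝ) ≤ (N : ℝ) := by exact_mod_cast hjN.le
    have := (haj j hjN.le).le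
    nlinarith
  have hPle : P ≤ C * (N : ℝ) ^ 2 * Real.sqrt N := by
    have hcs := Finset.sum_mul_sq_le_sq_mul_sq (range N)
      (fun _ => (1 : ℝ)) (fun j => ((N : ℝ) - j) * a j)
    simp only [one_mul, one_pow, Finset.sum_const, card_range, nsmul_eq_mul, mul_one] at hcs
    have hP2 : P ^ 2 ≤ (N : ℝ) * (C ^ 2 * (N : ℝ) ^ 4) := by
      refine le_trans hcs ?_
      have hNpos : (0 : ℝ) ≤ N := Nat.cast_nonneg N
      exact mul_le_mul_of_nonneg_left hQ hNpos
    have hR : (N : ℝ) * (C ^ 2 * (N : ℝ) ^ 4) = (C * (N : ℝ) ^ 2 * Real.sqrt N) ^ 2 := by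
      rw [mul_pow, Real.sq_sqrt (Nat.cast_nonneg N)]
      ring
    rw [hR] at hP2
    have hRnn : 0 ≤ C * (N : ℝ) ^ 2 * Real.sqrt N := by positivity
    nlinarith [hP2, hPnonneg, hRnn]
  -- Step C : (∑ √(N-j))² ≤ P * S
  set S : ℝ := ∑ j ∈ range N, 1 / a j with hS
  have hCS : (∑ j ∈ range N, Real.sqrt ((N : ℝ) - j)) ^ 2 ≤ P * S := by
    apply Finset.sum_sq_le_sum_mul_sum_of_sq_eq_mul
    · intro j hj
      have hjN := mem_range.mp hj
      have : (j : ℝ) ≤ (N : ℝ) := by exact_mod_cast hjN.le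
      nlinarith [(haj j hjN.le).le]
    · intro j hj
      exact div_nonneg zero_le_one (haj j (mem_range.mp hj).le).le
    · intro j hj
      have hjN := mem_range.mp hj
      have hja := haj j hjN.le
      have hjle : (j : ℝ) ≤ (N : ℝ) := by exact_mod_cast hjN.le
      rw [Real.sq_sqrt (by linarith)]
      field_simp
  -- Step D : ∑ √(N-j) ≥ N^{3/2}/2
  have hD : (N : ℝ) * Real.sqrt N / 2 ≤ ∑ j ∈ range N, Real.sqrt ((N : ℝ) - j) := by
    have hsN : (0 : ℝ) < Real.sqrt N := Real.sqrt_pos.mpr (by exact_mod_cast hN)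
    have hstep : ∀ j ∈ range N, ((N : ℝ) - j) / Real.sqrt N ≤ Real.sqrt ((N : ℝ) - j) := by
      intro j hj
      have hjN := mem_range.mp hj
      have hjle : (j : ℝ) + 1 ≤ (N : ℝ) := by exact_mod_cast hjN
      rw [div_le_iff₀ hsN]
      have h1 : Real.sqrt ((N : ℝ) - j) * Real.sqrt ((N : ℝ) - j) = (N : ℝ) - j :=
        Real.mul_self_sqrt (by linarith)
      have h2 : Real.sqrt ((N : ℝ) - j) ≤ Real.sqrt N :=
        Real.sqrt_le_sqrt (by linarith)
      nlinarith [Real.sqrt_nonneg ((N : ℝ) - j)]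
    calc (N : ℝ) * Real.sqrt N / 2
        ≤ (∑ j ∈ range N, ((N : ℝ) - j)) / Real.sqrt N := by
          have hsumNj : ∑ j ∈ range N, ((N : ℝ) - j) = (N : ℝ) * (N + 1) / 2 := by
            have h := Finset.sum_range_id_mul_two N
            have hc : (∑ i ∈ range N, (i : ℝ)) * 2 = (N : ℝ) * ((N : ℝ) - 1) := by
              calc (∑ i ∈ range N, (i : ℝ)) * 2
                  = (((∑ i ∈ range N, i) * 2 : ℕ) : ℝ) := by push_cast; ring
                _ = ((N * (N - 1) : ℕ) : ℝ) := by rw [h]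
                _ = (N : ℝ) * ((N : ℝ) - 1) := by
                    rw [Nat.cast_mul, Nat.cast_sub hN]; push_cast; ring
            rw [Finset.sum_sub_distrib, Finset.sum_const, card_range, nsmul_eq_mul]
            linarith [hc]
          rw [hsumNj, le_div_iff₀ hsN]
          have : Real.sqrt N * Real.sqrt N = (N : ℝ) := Real.mul_self_sqrt (Nat.cast_nonneg N)
          nlinarith [this, hsN.le, (by exact_mod_cast hN : (1:ℝ) ≤ N)]
      _ ≤ ∑ j ∈ range N, Real.sqrt ((N : ℝ) - j) := by
          rw [Finset.sum_div]
          exact Finset.sum_le_sum hstep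
  -- combine
  have hSnonneg : 0 ≤ S := Finset.sum_nonneg fun j hj =>
    div_nonneg zero_le_one (haj j (mem_range.mp hj).le).le
  set s : ℝ := Real.sqrt N with hs
  have hss : s * s = (N : ℝ) := Real.mul_self_sqrt (Nat.cast_nonneg N)
  have hs1 : (1 : ℝ) ≤ s := by
    rw [hs]
    rw [show (1:ℝ) = Real.sqrt 1 by simp]
    exact Real.sqrt_le_sqrt (by exact_mod_cast hN)
  have hspos : (0 : ℝ) < s := by linarith
  have hkey : (N : ℝ) * s / 2 * ((N : ℝ) * s / 2) ≤ C * (N : ℝ) ^ 2 * s * S := by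
    calc (N : ℝ) * s / 2 * ((N : ℝ) * s / 2)
        ≤ (∑ j ∈ range N, Real.sqrt ((N : ℝ) - j)) * (∑ j ∈ range N, Real.sqrt ((N : ℝ) - j)) := by
          have hRnn : 0 ≤ (N : ℝ) * s / 2 := by positivity
          exact mul_le_mul hD hD hRnn (le_trans hRnn hD)
      _ = (∑ j ∈ range N, Real.sqrt ((N : ℝ) - j)) ^ 2 := (sq _).symm
      _ ≤ P * S := hCS
      _ ≤ C * (N : ℝ) ^ 2 * s * S := mul_le_mul_of_nonneg_right hPle hSnonneg
  -- from hkey : N² s² /4 ≤ C N² s S, conclude s ≤ 4 C S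
  have hNpos : (0 : ℝ) < N := by exact_mod_cast hN
  have hfin : s ≤ 4 * C * S := by
    have h1 : (N : ℝ) ^ 2 * (s * s) / 4 ≤ C * (N : ℝ) ^ 2 * s * S := by
      calc (N : ℝ) ^ 2 * (s * s) / 4 = (N : ℝ) * s / 2 * ((N : ℝ) * s / 2) := by ring
        _ ≤ C * (N : ℝ) ^ 2 * s * S := hkey
    have h2 : (N : ℝ) ^ 2 * s * s ≤ (N : ℝ) ^ 2 * s * (4 * C * S) := by linarith [h1]
    have h3 : (0 : ℝ) < (N : ℝ) ^ 2 * s := by positivity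
    exact le_of_mul_le_mul_left h2 h3
  rw [div_le_iff₀ (by positivity : (0:ℝ) < 4 * C)]
  calc s ≤ 4 * C * S := hfin
    _ = S * (4 * C) := by ring
end

section
/- Let X be a reflexive complex Banach space (i.e., the canonical embedding of X into its double dual is surjective) and let T ∈ B(X) be Kreiss bounded. Then the residual spectrum of T is contained in the open unit disc: every λ ∈ σ_R(T) satisfies |λ| < 1. -/
open Filter Topology NormedSpace Metric

/-- A functional vanishing on a closed proper submodule and nonzero at a given outside point. -/
lemma aux_exists_functional_stmt12 {X : Type*} [NormedAddCommGroup X] [NormedSpace ℂ X]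
    {s : Submodule ℂ X} (hs : IsClosed (s : Set X)) {x₀ : X} (hx : x₀ ∉ (s : Set X)) :
    ∃ f : X →L[ℂ] ℂ, f x₀ ≠ 0 ∧ ∀ a ∈ s, f a = 0 := by
  obtain ⟨f, u, hfu, hux⟩ := RCLike.geometric_hahn_banach_closed_point
    (𝕜 := ℂ) (s.restrictScalars ℝ).convex hs hx
  have hu0 : 0 < u := by simpa using hfu 0 s.zero_mem
  have hvanish : ∀ a ∈ s, f a = 0 := by
    intro a ha
    by_contra h
    have hnorm : (0:ℝ) < Complex.normSq (f a) := by
      simpa [Complex.normSq_pos] using h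
    set c : ℂ := (((u + 1) / Complex.normSq (f a) : ℝ) : ℂ) * (starRingEnd ℂ) (f a) with hc
    have hmem : c • a ∈ s := s.smul_mem _ ha
    have hlt := hfu _ hmem
    have hval : f (c • a) = (((u + 1) : ℝ) : ℂ) := by
      rw [map_smul, smul_eq_mul, hc, mul_assoc]
      rw [show (starRingEnd ℂ) (f a) * f a = (Complex.normSq (f a) : ℂ) by
        rw [mul_comm]; exact Complex.mul_conj (f a)]
      rw [← Complex.ofReal_mul, div_mul_cancel₀]
      exact ne_of_gt hnorm
    rw [hval] at hlt
    simp at hlt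
    linarith
  refine ⟨f, fun h0 => ?_, hvanish⟩
  rw [h0] at hux
  simp at hux
  linarith

/-- If `X` is a reflexive complex Banach space and `T` is Kreiss bounded, then the residual
spectrum of `T` is contained in the open unit disc: whenever `λ I - T` is injective with
non-dense range, `|λ| < 1`. -/
theorem stmt_12 {X : Type*} [NormedAddCommGroup X] [NormedSpace ℂ X] [CompleteSpace X]
    (hrefl : Function.Surjective (NormedSpace.inclusionInDoubleDual ℂ X))
    (T : X →L[ℂ] X)
    (hKreiss : ∃ C > 0, ∀ z : ℂ, 1 < ‖z‖ →
      IsUnit (z • (1 : X →L[ℂ] X) - T) ∧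
      ‖Ring.inverse (z • (1 : X →L[ℂ] X) - T)‖ ≤ C / (‖z‖ - 1)) :
    ∀ lam : ℂ, Function.Injective ⇑(lam • (1 : X →L[ℂ] X) - T) →
      ¬DenseRange ⇑(lam • (1 : X →L[ℂ] X) - T) → ‖lam‖ < 1 := by
  obtain ⟨C, hC, hK⟩ := hKreiss
  intro lam hinj hnd
  set A : X →L[ℂ] X := lam • (1 : X →L[ℂ] X) - T with hA
  by_contra hlt
  push_neg at hlt
  rcases hlt.lt_or_eq with hgt | heq
  · -- |lam| > 1 : A is invertible, hence surjective, hence dense range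
    obtain ⟨hu, -⟩ := hK lam hgt
    obtain ⟨v, hv⟩ := hu
    apply hnd
    have hsurj : Function.Surjective ⇑A := by
      intro y
      refine ⟨(↑v⁻¹ : X →L[ℂ] X) y, ?_⟩
      have : (A * (↑v⁻¹ : X →L[ℂ] X)) y = y := by
        rw [hA, ← hv, ← Units.val_mul, mul_inv_cancel, Units.val_one]
        simp
      simpa using this
    exact hsurj.denseRange
  · -- |lam| = 1
    have hlam1 : ‖lam‖ = 1 := heq.symm
    have hlam0 : lam ≠ 0 := by
      intro h; rw [h] at hlam1; simp at hlam1
    -- Hahn-Banach functional vanishing on closure of range A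
    set s : Submodule ℂ X := (LinearMap.range (A : X →ₗ[ℂ] X)).topologicalClosure with hs
    have hsclosed : IsClosed (s : Set X) := Submodule.isClosed_topologicalClosure _
    have hrangecoe : ((LinearMap.range (A : X →ₗ[ℂ] X) : Submodule ℂ X) : Set X) = Set.range ⇑A := by
      ext y; simp [LinearMap.mem_range]
    have hcoe : (s : Set X) = closure (Set.range ⇑A) := by
      rw [hs, Submodule.topologicalClosure_coe, hrangecoe]
    have hx₀ : ∃ x₀, x₀ ∉ (s : Set X) := by
      by_contra hall
      push_neg at hall
      exact hnd fun y => hcoe ▸ hall y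
    obtain ⟨x, hxs⟩ := hx₀
    obtain ⟨f, hfx, hf0⟩ := aux_exists_functional_stmt12 hsclosed hxs
    have hfA : ∀ y, f (A y) = 0 := fun y =>
      hf0 _ ((LinearMap.range (A : X →ₗ[ℂ] X)).le_topologicalClosure (LinearMap.mem_range_self _ y))
    have hfT : ∀ y, f (T y) = lam * f y := by
      intro y
      have := hfA y
      simp only [hA, ContinuousLinearMap.sub_apply, ContinuousLinearMap.smul_apply,
        ContinuousLinearMap.one_apply, map_sub, map_smul, smul_eq_mul] at this
      linear_combination -this
    -- resolvent family
    set Br : ℝ → (X →L[ℂ] X) := fun r => ((r : ℂ) * lam) • (1 : X →L[ℂ] X) - T with hBr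
    set R : ℝ → (X →L[ℂ] X) := fun r => Ring.inverse (Br r) with hR
    set S : ℝ → X := fun r => ((r : ℂ) - 1) • (R r x) with hS
    have hz : ∀ r : ℝ, 1 < r → ‖(r : ℂ) * lam‖ = r := by
      intro r hr
      rw [norm_mul, hlam1, mul_one, Complex.norm_real]
      exact abs_of_pos (lt_trans one_pos hr)
    have hunit : ∀ r : ℝ, 1 < r → IsUnit (Br r) := by
      intro r hr
      exact (hK ((r : ℂ) * lam) (by rw [hz r hr]; exact hr)).1
    have hRbound : ∀ r : ℝ, 1 < r → ‖R r‖ ≤ C / (r - 1) := by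
      intro r hr
      have := (hK ((r : ℂ) * lam) (by rw [hz r hr]; exact hr)).2
      rwa [hz r hr] at this
    have hBR : ∀ r : ℝ, 1 < r → Br r (R r x) = x := by
      intro r hr
      have h1 : Br r * R r = 1 := Ring.mul_inverse_cancel _ (hunit r hr)
      calc Br r (R r x) = (Br r * R r) x := rfl
        _ = x := by rw [h1]; rfl
    have hr1 : ∀ r : ℝ, 1 < r → ‖((r : ℂ) - 1)‖ = r - 1 := by
      intro r hr
      rw [show ((r : ℂ) - 1) = ((r - 1 : ℝ) : ℂ) by push_cast; ring, Complex.norm_real]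
      exact abs_of_pos (by linarith)
    have hSnorm : ∀ r : ℝ, 1 < r → ‖S r‖ ≤ C * ‖x‖ := by
      intro r hr
      have h1 : ‖S r‖ = (r - 1) * ‖R r x‖ := by
        rw [hS]; simp only [norm_smul, hr1 r hr]
      have h2 : ‖R r x‖ ≤ (C / (r - 1)) * ‖x‖ :=
        le_trans ((R r).le_opNorm x) (by
          apply mul_le_mul_of_nonneg_right (hRbound r hr) (norm_nonneg x))
      rw [h1]
      calc (r - 1) * ‖R r x‖ ≤ (r - 1) * ((C / (r - 1)) * ‖x‖) := by
            apply mul_le_mul_of_nonneg_left h2 (by linarith)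
        _ = C * ‖x‖ := by
            have hne : r - 1 ≠ 0 := by linarith
            field_simp
    have hfS : ∀ r : ℝ, 1 < r → f (S r) = f x / lam := by
      intro r hr
      have hy : f x = (((r : ℂ) - 1) * lam) * f (R r x) := by
        conv_lhs => rw [← hBR r hr]
        simp only [hBr, ContinuousLinearMap.sub_apply, ContinuousLinearMap.smul_apply,
          ContinuousLinearMap.one_apply, map_sub, map_smul, smul_eq_mul, hfT]
        ring
      rw [hS]
      simp only [map_smul, smul_eq_mul]
      rw [eq_div_iff hlam0, hy]
      ring
    have hAS : ∀ r : ℝ, 1 < r →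
        A (S r) = ((r : ℂ) - 1) • x - (((r : ℂ) - 1) * lam) • S r := by
      intro r hr
      have hAy : ∀ y : X, A y = Br r y - (((r : ℂ) - 1) * lam) • y := by
        intro y
        simp only [hA, hBr, ContinuousLinearMap.sub_apply, ContinuousLinearMap.smul_apply,
          ContinuousLinearMap.one_apply]
        module
      rw [hS, map_smul, hAy, hBR r hr]
      module
    have htend0 : Tendsto (fun r => A (S r)) (𝓝[>] (1 : ℝ)) (𝓝 0) := by
      apply squeeze_zero_norm' (a := fun r : ℝ => (r - 1) * ((1 + C) * ‖x‖))
      · filter_upwards [self_mem_nhdsWithin] with r hr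
        have hr : 1 < r := hr
        rw [hAS r hr]
        calc ‖((r : ℂ) - 1) • x - (((r : ℂ) - 1) * lam) • S r‖
            ≤ ‖((r : ℂ) - 1) • x‖ + ‖(((r : ℂ) - 1) * lam) • S r‖ := norm_sub_le _ _
          _ = (r - 1) * ‖x‖ + (r - 1) * ‖S r‖ := by
              rw [norm_smul, norm_smul, hr1 r hr, norm_mul, hr1 r hr, hlam1, mul_one]
          _ ≤ (r - 1) * ‖x‖ + (r - 1) * (C * ‖x‖) := by
              have := hSnorm r hr
              nlinarith [hSnorm r hr]
          _ = (r - 1) * ((1 + C) * ‖x‖) := by ring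
      · have hc0 : Continuous (fun r : ℝ => (r - 1) * ((1 + C) * ‖x‖)) := by fun_prop
        have h1 : Tendsto (fun r : ℝ => (r - 1) * ((1 + C) * ‖x‖)) (𝓝 1) (𝓝 0) := by
          have := hc0.tendsto (1 : ℝ)
          simpa using this
        exact h1.mono_left nhdsWithin_le_nhds
    -- weak-* cluster point
    set ι := NormedSpace.inclusionInDoubleDual ℂ X with hι
    set Φ : ℝ → WeakDual ℂ (StrongDual ℂ X) :=
      fun r => StrongDual.toWeakDual (ι (S r)) with hΦ
    set F : Filter (WeakDual ℂ (StrongDual ℂ X)) := Filter.map Φ (𝓝[>] (1 : ℝ)) with hF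
    haveI : F.NeBot := Filter.map_neBot
    have hFle : F ≤ 𝓟 (WeakDual.toStrongDual ⁻¹' closedBall 0 (C * ‖x‖)) := by
      rw [hF, Filter.le_principal_iff, Filter.mem_map]
      filter_upwards [self_mem_nhdsWithin] with r hr
      have hr : 1 < r := hr
      simp only [Set.mem_preimage, mem_closedBall_zero_iff]
      have h1 : ‖ι (S r)‖ ≤ ‖S r‖ := by
        exact NormedSpace.double_dual_bound ℂ X (S r)
      exact (mem_closedBall_zero_iff (E := StrongDual ℂ (StrongDual ℂ X))).mpr
        (le_trans h1 (hSnorm r hr))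
    obtain ⟨w, -, hw⟩ :=
      (WeakDual.isCompact_closedBall (𝕜 := ℂ) (0 : StrongDual ℂ (StrongDual ℂ X)) (C * ‖x‖)).exists_clusterPt
        hFle
    obtain ⟨u, hu⟩ := hrefl (WeakDual.toStrongDual w)
    -- evaluation principle
    have hev : ∀ (g : StrongDual ℂ X) (c : ℂ),
        Tendsto (fun r => g (S r)) (𝓝[>] (1 : ℝ)) (𝓝 c) → g u = c := by
      intro g c hg
      have hcont : ContinuousAt (fun w' : WeakDual ℂ (StrongDual ℂ X) => w' g) w :=
        (WeakDual.eval_continuous g).continuousAt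
      have hcp : ClusterPt (w g) (Filter.map (fun w' : WeakDual ℂ (StrongDual ℂ X) => w' g) F) :=
        hw.map hcont (Filter.tendsto_map)
      have hle : Filter.map (fun w' : WeakDual ℂ (StrongDual ℂ X) => w' g) F ≤ 𝓝 c := by
        rw [hF, Filter.map_map]
        exact hg
      have heqc : w g = c := eq_of_nhds_neBot (hcp.mono hle)
      have : g u = w g := by
        have h1 : ι u g = g u := rfl
        rw [← h1, hu]
        rfl
      rw [this, heqc]
    -- f u = f x / lam ≠ 0
    have hfu : f u = f x / lam := by
      apply hev f (f x / lam)
      apply Tendsto.congr' _ (tendsto_const_nhds)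
      filter_upwards [self_mem_nhdsWithin] with r hr
      exact (hfS r hr).symm
    -- A u = 0
    have hAu : A u = 0 := by
      apply NormedSpace.eq_zero_of_forall_dual_eq_zero ℂ
      intro g
      have := hev (g.comp A) 0 (by
        have : Tendsto (fun r => g (A (S r))) (𝓝[>] (1 : ℝ)) (𝓝 (g 0)) :=
          (g.continuous.tendsto 0).comp htend0
        simpa using this)
      simpa using this
    have hu0 : u = 0 := hinj (by rw [hAu, map_zero])
    rw [hu0, map_zero] at hfu
    rcases div_eq_zero_iff.mp hfu.symm with h | h
    · exact hfx h
    · exact hlam0 h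
end

section
/- There exists a bounded operator T on the complex Hilbert space ℓ²(ℕ) that is Cesàro bounded, mean ergodic, and satisfies ker(I + T) ≠ {0} and ker(I + T*) = {0}, where T* denotes the Hilbert-space adjoint of T. -/
open Filter Finset
open scoped ENNReal NNReal ComplexConjugate

noncomputable section Stmt13Aux

namespace Stmt13

abbrev H13 := lp (fun _ : ℕ => ℂ) 2

/-! ### real scalar data -/

def muR (m : ℕ) : ℝ := 1 - (m : ℝ)⁻¹
def lamR (m : ℕ) : ℝ := (m : ℝ)⁻¹ - 1
def bbR (m : ℕ) : ℝ := (m : ℝ)⁻¹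
def ggR (k m : ℕ) : ℝ := (-1) ^ (k + 1) * (1 - muR m ^ k)
def hhR (k m : ℕ) : ℝ := lamR m ^ k * bbR m
def GGR (n m : ℕ) : ℝ := ∑ k ∈ range (n + 1), ggR k m

lemma inv_nat_nonneg (m : ℕ) : 0 ≤ (m : ℝ)⁻¹ := by positivity

lemma bbR_nonneg (m : ℕ) : 0 ≤ bbR m := inv_nat_nonneg m

lemma inv_nat_le_one (m : ℕ) : (m : ℝ)⁻¹ ≤ 1 := by
  cases m with
  | zero => norm_num
  | succ m =>
    rw [inv_le_one_iff₀]
    right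
    exact_mod_cast Nat.one_le_iff_ne_zero.mpr (Nat.succ_ne_zero m)

lemma muR_nonneg (m : ℕ) : 0 ≤ muR m := by
  simpa [muR] using inv_nat_le_one m

lemma muR_le_one (m : ℕ) : muR m ≤ 1 := by
  simpa [muR] using inv_nat_nonneg m

lemma lamR_eq (m : ℕ) : lamR m = -muR m := by simp [lamR, muR]

lemma abs_lamR_le_one (m : ℕ) : |lamR m| ≤ 1 := by
  rw [lamR_eq, abs_neg, abs_of_nonneg (muR_nonneg m)]
  exact muR_le_one m

lemma one_sub_muR_pow_nonneg (k m : ℕ) : 0 ≤ 1 - muR m ^ k :=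
  sub_nonneg.2 (pow_le_one₀ (muR_nonneg m) (muR_le_one m))

lemma one_sub_muR_pow_le_one (k m : ℕ) : 1 - muR m ^ k ≤ 1 := by
  have := pow_nonneg (muR_nonneg m) k; linarith

lemma one_sub_muR_pow_le (k m : ℕ) : 1 - muR m ^ k ≤ k * bbR m := by
  have h := one_add_mul_le_pow (a := -(m : ℝ)⁻¹) (by
    have := inv_nat_le_one m; have := inv_nat_nonneg m; linarith) k
  have hmu : (1 : ℝ) + -(m : ℝ)⁻¹ = muR m := by rw [muR]; ring
  rw [hmu] at h
  simp only [bbR, mul_neg] at h ⊢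
  linarith

lemma abs_ggR_le_one (k m : ℕ) : |ggR k m| ≤ 1 := by
  rw [ggR, abs_mul, abs_pow, abs_neg, abs_one, one_pow, one_mul,
    abs_of_nonneg (one_sub_muR_pow_nonneg k m)]
  exact one_sub_muR_pow_le_one k m

lemma abs_ggR_le (k m : ℕ) : |ggR k m| ≤ k * bbR m := by
  rw [ggR, abs_mul, abs_pow, abs_neg, abs_one, one_pow, one_mul,
    abs_of_nonneg (one_sub_muR_pow_nonneg k m)]
  exact one_sub_muR_pow_le k m

lemma pow_sub_one (a : ℝ) (k : ℕ) : (a - 1) ^ k = (-1) ^ k * (1 - a) ^ k := by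
  rw [show a - 1 = -(1 - a) by ring, neg_pow]

lemma ggR_succ (k m : ℕ) : ggR (k + 1) m = hhR k m - ggR k m := by
  simp only [ggR, hhR, bbR, lamR, muR]
  rw [pow_sub_one]
  ring

lemma ggR_zero (m : ℕ) : ggR 0 m = 0 := by simp [ggR]

lemma sum_neg_mu_abs_le (n m : ℕ) : |∑ k ∈ range (n + 1), (-muR m) ^ k| ≤ 2 := by
    have hmu := muR_nonneg m
    have hne : (-muR m : ℝ) ≠ 1 := by intro h; linarith
    rw [geom_sum_eq hne, abs_div]
    have hpow : |(-muR m) ^ (n + 1)| ≤ 1 := by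
      rw [abs_pow, abs_neg, abs_of_nonneg hmu]
      exact pow_le_one₀ hmu (muR_le_one m)
    have hnum : |(-muR m) ^ (n + 1) - 1| ≤ 2 := by
      have := abs_add_le ((-muR m) ^ (n + 1)) (-1)
      simp only [abs_neg, abs_one] at this
      calc |(-muR m) ^ (n + 1) - 1| = |(-muR m) ^ (n + 1) + -1| := by ring_nf
        _ ≤ |(-muR m) ^ (n + 1)| + 1 := this
        _ ≤ 2 := by linarith
    have hden : (1 : ℝ) ≤ |(-muR m) - 1| := by
      rw [abs_of_nonpos (by linarith)]
      linarith
    calc |(-muR m) ^ (n + 1) - 1| / |(-muR m) - 1|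
        ≤ |(-muR m) ^ (n + 1) - 1| := div_le_self (abs_nonneg _) hden
      _ ≤ 2 := hnum

lemma abs_GGR_le_three (n m : ℕ) : |GGR n m| ≤ 3 := by
  have hgg : ∀ k, ggR k m = (-muR m) ^ k - (-1 : ℝ) ^ k := by
    intro k
    rw [ggR, neg_pow, neg_pow]
    ring
  have hsplit : GGR n m
      = (∑ k ∈ range (n + 1), (-muR m) ^ k) - ∑ k ∈ range (n + 1), (-1 : ℝ) ^ k := by
    rw [GGR, ← Finset.sum_sub_distrib]
    exact Finset.sum_congr rfl fun k _ => hgg k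
  have h1 : |∑ k ∈ range (n + 1), (-1 : ℝ) ^ k| ≤ 1 := by
    rw [neg_one_geom_sum]
    split_ifs <;> norm_num
  have h2 := sum_neg_mu_abs_le n m
  calc |GGR n m| ≤ |∑ k ∈ range (n + 1), (-muR m) ^ k|
        + |∑ k ∈ range (n + 1), (-1 : ℝ) ^ k| := by
        rw [hsplit]; exact abs_sub _ _
    _ ≤ 3 := by linarith

lemma sumlam_abs_le (n m : ℕ) : |∑ k ∈ range (n + 1), lamR m ^ k| ≤ 2 := by
  have : ∀ k : ℕ, lamR m ^ k = (-muR m) ^ k := fun k => by rw [lamR_eq]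
  rw [Finset.sum_congr rfl fun k _ => this k]
  exact sum_neg_mu_abs_le n m

lemma abs_GGR_le (n m : ℕ) : |GGR n m| ≤ ((n : ℝ) + 1) ^ 2 * bbR m := by
  have hb := inv_nat_nonneg m
  calc |GGR n m| ≤ ∑ k ∈ range (n + 1), |ggR k m| := Finset.abs_sum_le_sum_abs _ _
    _ ≤ ∑ k ∈ range (n + 1), ((n : ℝ) + 1) * bbR m := by
        refine Finset.sum_le_sum fun k hk => (abs_ggR_le k m).trans ?_
        have hk' : (k : ℝ) ≤ (n : ℝ) + 1 := by
          have := Finset.mem_range.mp hk; exact_mod_cast this.le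
        exact mul_le_mul_of_nonneg_right hk' hb
    _ = ((n : ℝ) + 1) ^ 2 * bbR m := by
        rw [Finset.sum_const, Finset.card_range]
        push_cast; ring


/-! ### lp infrastructure -/

lemma two_toReal : (2 : ℝ≥0∞).toReal = 2 := by norm_num

lemma rpow_two' (x : ℝ) : x ^ ((2 : ℝ≥0∞).toReal) = x ^ (2 : ℕ) := by
  rw [two_toReal, show (2 : ℝ) = ((2 : ℕ) : ℝ) by norm_num, Real.rpow_natCast]

lemma summable_sq (y : H13) : Summable (fun m => ‖y m‖ ^ (2 : ℕ)) := by
  have := (lp.memℓp y).summable (by norm_num : 0 < (2 : ℝ≥0∞).toReal)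
  exact this.congr fun m => rpow_two' _

lemma norm_sq_eq (y : H13) : ‖y‖ ^ (2 : ℕ) = ∑' m, ‖y m‖ ^ (2 : ℕ) := by
  have := lp.norm_rpow_eq_tsum (p := 2) (by norm_num) y
  rw [rpow_two'] at this
  rw [this]
  exact tsum_congr fun m => (rpow_two' _)

lemma mem_of_bound {f g : ℕ → ℂ} (hg : Memℓp g 2) (h : ∀ m, ‖f m‖ ≤ ‖g m‖) :
    Memℓp f 2 := by
  apply memℓp_gen
  have hs := (hg.summable (by norm_num : 0 < (2 : ℝ≥0∞).toReal))
  refine Summable.of_nonneg_of_le (fun m => ?_) (fun m => ?_) hs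
  · positivity
  · rw [rpow_two', rpow_two']
    exact pow_le_pow_left₀ (norm_nonneg _) (h m) 2

lemma sum_sq_le (y : H13) (s : Finset ℕ) : ∑ m ∈ s, ‖y m‖ ^ (2 : ℕ) ≤ ‖y‖ ^ (2 : ℕ) := by
  rw [norm_sq_eq]
  exact Summable.sum_le_tsum s (fun m _ => by positivity) (summable_sq y)

lemma norm_le_of_coord {y : H13} {C : ℝ} (hC : 0 ≤ C)
    (h : ∀ s : Finset ℕ, ∑ m ∈ s, ‖y m‖ ^ (2 : ℕ) ≤ C ^ (2 : ℕ)) : ‖y‖ ≤ C := by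
  refine lp.norm_le_of_forall_sum_le (by norm_num) hC fun s => ?_
  calc ∑ m ∈ s, ‖y m‖ ^ (2 : ℝ≥0∞).toReal = ∑ m ∈ s, ‖y m‖ ^ (2 : ℕ) :=
        Finset.sum_congr rfl fun m _ => rpow_two' _
    _ ≤ C ^ (2 : ℕ) := h s
    _ = C ^ (2 : ℝ≥0∞).toReal := (rpow_two' _).symm

lemma norm_le_of_pointwise {y x : H13} {A : ℝ} (hA : 0 ≤ A)
    (h : ∀ m, ‖y m‖ ≤ A * ‖x m‖) : ‖y‖ ≤ A * ‖x‖ := by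
  refine norm_le_of_coord (by positivity) fun s => ?_
  calc ∑ m ∈ s, ‖y m‖ ^ (2 : ℕ) ≤ ∑ m ∈ s, A ^ 2 * ‖x m‖ ^ (2 : ℕ) := by
        refine Finset.sum_le_sum fun m _ => ?_
        rw [show A ^ 2 * ‖x m‖ ^ (2:ℕ) = (A * ‖x m‖) ^ (2:ℕ) by ring]
        exact pow_le_pow_left₀ (norm_nonneg _) (h m) 2
    _ = A ^ 2 * ∑ m ∈ s, ‖x m‖ ^ (2 : ℕ) := by rw [Finset.mul_sum]
    _ ≤ A ^ 2 * ‖x‖ ^ (2 : ℕ) := by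
        exact mul_le_mul_of_nonneg_left (sum_sq_le x s) (by positivity)
    _ = (A * ‖x‖) ^ (2 : ℕ) := by ring


/-! ### vectors in `H13` -/

lemma summable_bb_sq : Summable (fun m : ℕ => bbR m ^ (2 : ℕ)) := by
  have h : Summable (fun m : ℕ => 1 / (m : ℝ) ^ 2) :=
    Real.summable_one_div_nat_pow.mpr one_lt_two
  exact h.congr fun m => by rw [bbR, one_div, inv_pow]

lemma memB : Memℓp (fun m : ℕ => ((bbR m : ℝ) : ℂ)) 2 := by
  apply memℓp_gen
  refine (summable_bb_sq.congr fun m => ?_)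
  rw [rpow_two', Complex.norm_real, Real.norm_eq_abs,
    abs_of_nonneg (bbR_nonneg m)]

def B : H13 := ⟨fun m => ((bbR m : ℝ) : ℂ), memB⟩

@[simp] lemma B_apply (m : ℕ) : B m = ((bbR m : ℝ) : ℂ) := rfl

@[simp] lemma B_zero : B 0 = 0 := by simp [bbR]

lemma norm_B_apply (m : ℕ) : ‖B m‖ = bbR m := by
  rw [B_apply, Complex.norm_real, Real.norm_eq_abs, abs_of_nonneg (bbR_nonneg m)]

def e0 : H13 := lp.single 2 0 1

lemma e0_apply (m : ℕ) : e0 m = if m = 0 then 1 else 0 := by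
  rcases Nat.eq_zero_or_pos m with h | h
  · subst h; simp [e0, lp.single_apply_self]
  · rw [if_neg h.ne', e0, lp.single_apply_ne 2 0 _ h.ne']

lemma norm_e0 : ‖e0‖ = 1 := by
  have := lp.norm_single (p := 2) (E := fun _ : ℕ => ℂ) (by norm_num) 0 (1 : ℂ)
  simpa [e0] using this

lemma mem_g (k : ℕ) : Memℓp (fun m : ℕ => ((ggR k m : ℝ) : ℂ)) 2 := by
  have hk : Memℓp ((k : ℝ) • (fun m : ℕ => ((bbR m : ℝ) : ℂ))) 2 := memB.const_smul _
  refine mem_of_bound hk fun m => ?_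
  rw [Complex.norm_real, Real.norm_eq_abs, Pi.smul_apply, norm_smul]
  rw [Complex.norm_real, Real.norm_eq_abs, Real.norm_eq_abs,
    abs_of_nonneg (bbR_nonneg m), abs_of_nonneg (by positivity : (0:ℝ) ≤ (k:ℝ))]
  exact abs_ggR_le k m

def g (k : ℕ) : H13 := ⟨fun m => ((ggR k m : ℝ) : ℂ), mem_g k⟩

@[simp] lemma g_apply (k m : ℕ) : g k m = ((ggR k m : ℝ) : ℂ) := rfl

lemma mem_h (k : ℕ) : Memℓp (fun m : ℕ => ((hhR k m : ℝ) : ℂ)) 2 := by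
  refine mem_of_bound memB fun m => ?_
  rw [Complex.norm_real, Complex.norm_real, Real.norm_eq_abs, Real.norm_eq_abs,
    hhR, abs_mul, abs_pow, abs_of_nonneg (bbR_nonneg m)]
  calc |lamR m| ^ k * bbR m ≤ 1 * bbR m :=
        mul_le_mul_of_nonneg_right
          (pow_le_one₀ (abs_nonneg _) (abs_lamR_le_one m)) (bbR_nonneg m)
    _ = bbR m := one_mul _

def hv (k : ℕ) : H13 := ⟨fun m => ((hhR k m : ℝ) : ℂ), mem_h k⟩

@[simp] lemma hv_apply (k m : ℕ) : hv k m = ((hhR k m : ℝ) : ℂ) := rfl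

def G (n : ℕ) : H13 := ∑ k ∈ range (n + 1), g k

lemma G_apply (n m : ℕ) : G n m = ((GGR n m : ℝ) : ℂ) := by
  rw [G, GGR]
  rw [lp.coeFn_sum]
  simp only [Finset.sum_apply, g_apply]
  push_cast
  rfl

lemma g_succ_vec (k : ℕ) : g (k + 1) = hv k - g k := by
  apply lp.ext
  funext m
  rw [lp.coeFn_sub]
  simp only [Pi.sub_apply, g_apply, hv_apply]
  rw [ggR_succ]
  push_cast
  ring

/-! ### the operator `T` -/

local notation "⟪" x ", " y "⟫" => @inner ℂ _ _ x y

lemma mem_diag (x : H13) : Memℓp (fun m => ((lamR m : ℝ) : ℂ) * x m) 2 :=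
  mem_of_bound (lp.memℓp x) fun m => by
    rw [norm_mul, Complex.norm_real, Real.norm_eq_abs]
    calc |lamR m| * ‖x m‖ ≤ 1 * ‖x m‖ :=
          mul_le_mul_of_nonneg_right (abs_lamR_le_one m) (norm_nonneg _)
      _ = ‖x m‖ := one_mul _

def diagVec (x : H13) : H13 := ⟨fun m => ((lamR m : ℝ) : ℂ) * x m, mem_diag x⟩

@[simp] lemma diagVec_apply (x : H13) (m : ℕ) :
    diagVec x m = ((lamR m : ℝ) : ℂ) * x m := rfl

lemma norm_diagVec_le (x : H13) : ‖diagVec x‖ ≤ 1 * ‖x‖ := by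
  refine norm_le_of_pointwise zero_le_one fun m => ?_
  rw [diagVec_apply, norm_mul, Complex.norm_real, Real.norm_eq_abs]
  exact mul_le_mul_of_nonneg_right (abs_lamR_le_one m) (norm_nonneg _)

def Tlin : H13 →ₗ[ℂ] H13 where
  toFun x := diagVec x + ⟪B, x⟫ • e0
  map_add' x y := by
    apply lp.ext; funext m
    simp only [lp.coeFn_add, lp.coeFn_smul, Pi.add_apply, Pi.smul_apply, diagVec_apply,
      inner_add_right, smul_eq_mul]
    ring
  map_smul' c x := by
    apply lp.ext; funext m
    simp only [lp.coeFn_add, lp.coeFn_smul, Pi.add_apply, Pi.smul_apply, diagVec_apply,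
      inner_smul_right, RingHom.id_apply, smul_eq_mul]
    ring

lemma Tlin_bound (x : H13) : ‖Tlin x‖ ≤ (1 + ‖B‖) * ‖x‖ := by
  have h1 : ‖diagVec x‖ ≤ 1 * ‖x‖ := norm_diagVec_le x
  have h2 : ‖(⟪B, x⟫ : ℂ) • e0‖ ≤ ‖B‖ * ‖x‖ := by
    rw [norm_smul, norm_e0, mul_one]
    exact norm_inner_le_norm B x
  calc ‖Tlin x‖ ≤ ‖diagVec x‖ + ‖(⟪B, x⟫ : ℂ) • e0‖ := norm_add_le _ _
    _ ≤ 1 * ‖x‖ + ‖B‖ * ‖x‖ := add_le_add h1 h2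
    _ = (1 + ‖B‖) * ‖x‖ := by ring

def T : H13 →L[ℂ] H13 := Tlin.mkContinuous (1 + ‖B‖) Tlin_bound

lemma T_apply (x : H13) (m : ℕ) :
    T x m = ((lamR m : ℝ) : ℂ) * x m + ⟪B, x⟫ * e0 m := by
  show (Tlin x) m = _
  rw [show Tlin x = diagVec x + ⟪B, x⟫ • e0 from rfl, lp.coeFn_add]
  simp only [Pi.add_apply, diagVec_apply]
  rw [lp.coeFn_smul]
  simp [smul_eq_mul]

/-! ### powers of `T` -/

lemma g_zero_vec : g 0 = 0 := by
  apply lp.ext; funext j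
  rw [lp.coeFn_zero]
  simp [ggR_zero]

lemma T_pow_apply (k : ℕ) (x : H13) (m : ℕ) :
    (T ^ k) x m = ((lamR m : ℝ) : ℂ) ^ k * x m + ⟪g k, x⟫ * e0 m := by
  induction k generalizing m with
  | zero =>
    simp [g_zero_vec]
  | succ k IH =>
    have hBk : ⟪B, (T ^ k) x⟫ = ⟪hv k, x⟫ := by
      rw [lp.inner_eq_tsum, lp.inner_eq_tsum]
      apply tsum_congr
      intro j
      rw [IH j]
      rcases Nat.eq_zero_or_pos j with h0 | h0
      · subst h0
        simp [RCLike.inner_apply, bbR, hhR]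
      · have he : e0 j = 0 := by rw [e0_apply, if_neg h0.ne']
        rw [he]
        simp only [RCLike.inner_apply, hv_apply, B_apply, mul_zero, add_zero]
        rw [Complex.conj_ofReal, Complex.conj_ofReal, hhR]
        push_cast
        ring
    rw [pow_succ', ContinuousLinearMap.mul_apply, T_apply, IH m, hBk]
    have hg : ⟪g (k + 1), x⟫ = ⟪hv k, x⟫ - ⟪g k, x⟫ := by
      rw [g_succ_vec, inner_sub_left]
    rw [hg]
    rcases Nat.eq_zero_or_pos m with h0 | h0
    · subst h0
      have hl : ((lamR 0 : ℝ) : ℂ) = -1 := by norm_num [lamR]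
      rw [e0_apply]
      simp only [if_pos rfl, hl]
      ring
    · have he : e0 m = 0 := by rw [e0_apply, if_neg h0.ne']
      rw [he]
      ring

lemma sum_pow_apply (n : ℕ) (x : H13) (m : ℕ) :
    ((∑ k ∈ range (n + 1), T ^ k) x) m
      = (∑ k ∈ range (n + 1), ((lamR m : ℝ) : ℂ) ^ k) * x m + ⟪G n, x⟫ * e0 m := by
  rw [ContinuousLinearMap.sum_apply, lp.coeFn_sum]
  rw [Finset.sum_apply]
  rw [show (⟪G n, x⟫ : ℂ) = ∑ k ∈ range (n + 1), ⟪g k, x⟫ from by rw [G, sum_inner]]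
  rw [Finset.sum_mul, Finset.sum_mul, ← Finset.sum_add_distrib]
  exact Finset.sum_congr rfl fun k _ => T_pow_apply k x m

/-! ### norm bound for `G n` -/

lemma norm_G_apply (n m : ℕ) : ‖G n m‖ = |GGR n m| := by
  rw [G_apply, Complex.norm_real, Real.norm_eq_abs]

lemma norm_G_le (n : ℕ) : ‖G n‖ ≤ 5 * ((n : ℝ) + 1) := by
  set K : ℕ := (n + 1) ^ 2 with hK
  have hK1 : 1 ≤ K := by have : 0 < K := by positivity
                         omega
  have hKr : ((K : ℝ)) = ((n : ℝ) + 1) ^ 2 := by rw [hK]; push_cast; ring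
  refine norm_le_of_coord (by positivity) fun s => ?_
  obtain ⟨N, hN⟩ := s.exists_nat_subset_range
  rw [← Finset.sum_filter_add_sum_filter_not s (fun m => m ≤ K)]
  have h1 : ∑ m ∈ s.filter (fun m => m ≤ K), ‖G n m‖ ^ (2 : ℕ)
      ≤ ((K : ℝ) + 1) * 9 := by
    calc ∑ m ∈ s.filter (fun m => m ≤ K), ‖G n m‖ ^ (2 : ℕ)
        ≤ ∑ _m ∈ s.filter (fun m => m ≤ K), (9 : ℝ) := by
          refine Finset.sum_le_sum fun m _ => ?_
          rw [norm_G_apply]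
          have h := abs_GGR_le_three n m
          have h' := abs_nonneg (GGR n m)
          nlinarith
      _ = ((s.filter (fun m => m ≤ K)).card : ℝ) * 9 := by
          rw [Finset.sum_const, nsmul_eq_mul]
      _ ≤ ((K : ℝ) + 1) * 9 := by
          have hsub : s.filter (fun m => m ≤ K) ⊆ Finset.range (K + 1) := by
            intro m hm
            rw [Finset.mem_range]
            exact Nat.lt_succ_of_le (Finset.mem_filter.mp hm).2
          have := Finset.card_le_card hsub
          rw [Finset.card_range] at this
          have : ((s.filter (fun m => m ≤ K)).card : ℝ) ≤ (K : ℝ) + 1 := by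
            exact_mod_cast this
          nlinarith
  have h2 : ∑ m ∈ s.filter (fun m => ¬ m ≤ K), ‖G n m‖ ^ (2 : ℕ) ≤ (K : ℝ) := by
    have hterm : ∀ m ∈ s.filter (fun m => ¬ m ≤ K),
        ‖G n m‖ ^ (2 : ℕ) ≤ (K : ℝ) ^ 2 * ((m : ℝ) ^ 2)⁻¹ := by
      intro m hm
      rw [norm_G_apply]
      have h := abs_GGR_le n m
      rw [← hKr] at h
      have h' := abs_nonneg (GGR n m)
      have hb : bbR m ^ 2 = ((m : ℝ) ^ 2)⁻¹ := by rw [bbR, inv_pow]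
      have hbn := bbR_nonneg m
      nlinarith [sq_nonneg (bbR m), sq_nonneg ((K:ℝ) * bbR m)]
    calc ∑ m ∈ s.filter (fun m => ¬ m ≤ K), ‖G n m‖ ^ (2 : ℕ)
        ≤ ∑ m ∈ s.filter (fun m => ¬ m ≤ K), (K : ℝ) ^ 2 * ((m : ℝ) ^ 2)⁻¹ :=
          Finset.sum_le_sum hterm
      _ = (K : ℝ) ^ 2 * ∑ m ∈ s.filter (fun m => ¬ m ≤ K), ((m : ℝ) ^ 2)⁻¹ := by
          rw [Finset.mul_sum]
      _ ≤ (K : ℝ) ^ 2 * (K : ℝ)⁻¹ := by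
          refine mul_le_mul_of_nonneg_left ?_ (by positivity)
          have hsub : s.filter (fun m => ¬ m ≤ K) ⊆ Finset.Ioc K (max K N) := by
            intro m hm
            obtain ⟨hms, hmK⟩ := Finset.mem_filter.mp hm
            rw [Finset.mem_Ioc]
            exact ⟨Nat.lt_of_not_le hmK,
              le_max_of_le_right (Nat.le_of_lt (Finset.mem_range.mp (hN hms)))⟩
          have hmono : ∑ m ∈ s.filter (fun m => ¬ m ≤ K), ((m : ℝ) ^ 2)⁻¹
              ≤ ∑ i ∈ Finset.Ioc K (max K N), ((i : ℝ) ^ 2)⁻¹ :=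
            Finset.sum_le_sum_of_subset_of_nonneg hsub (fun m _ _ => by positivity)
          refine hmono.trans ?_
          have := sum_Ioc_inv_sq_le_sub (α := ℝ) (k := K) (n := max K N)
            (Nat.one_le_iff_ne_zero.mp hK1) (le_max_left _ _)
          have hN' : (0:ℝ) ≤ ((max K N : ℕ) : ℝ)⁻¹ := by positivity
          calc ∑ i ∈ Finset.Ioc K (max K N), (((i : ℝ)) ^ 2)⁻¹
              ≤ (K : ℝ)⁻¹ - ((max K N : ℕ) : ℝ)⁻¹ := this
            _ ≤ (K : ℝ)⁻¹ := by linarith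
      _ = (K : ℝ) := by
          have hKne : (K : ℝ) ≠ 0 := by positivity
          field_simp
  have hKr1 : (1 : ℝ) ≤ (K : ℝ) := by exact_mod_cast hK1
  calc ∑ m ∈ s.filter (fun m => m ≤ K), ‖G n m‖ ^ (2 : ℕ)
        + ∑ m ∈ s.filter (fun m => ¬ m ≤ K), ‖G n m‖ ^ (2 : ℕ)
      ≤ ((K : ℝ) + 1) * 9 + (K : ℝ) := add_le_add h1 h2
    _ ≤ 25 * (K : ℝ) := by nlinarith
    _ = (5 * ((n : ℝ) + 1)) ^ (2 : ℕ) := by rw [hKr]; ring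

/-! ### Cesàro bounds -/

lemma w_coord (n : ℕ) (x : H13) (m : ℕ) :
    ((∑ k ∈ range (n + 1), T ^ k) x - ⟪G n, x⟫ • e0) m
      = (∑ k ∈ range (n + 1), ((lamR m : ℝ) : ℂ) ^ k) * x m := by
  rw [lp.coeFn_sub]
  simp only [Pi.sub_apply]
  rw [lp.coeFn_smul]
  simp only [Pi.smul_apply, smul_eq_mul]
  rw [sum_pow_apply]
  ring

lemma w_norm_le (n : ℕ) (x : H13) :
    ‖(∑ k ∈ range (n + 1), T ^ k) x - ⟪G n, x⟫ • e0‖ ≤ 2 * ‖x‖ := by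
  refine norm_le_of_pointwise (by norm_num) fun m => ?_
  rw [w_coord n x m, norm_mul]
  refine mul_le_mul_of_nonneg_right ?_ (norm_nonneg _)
  have hcast : (∑ k ∈ range (n + 1), ((lamR m : ℝ) : ℂ) ^ k)
      = (((∑ k ∈ range (n + 1), lamR m ^ k : ℝ)) : ℂ) := by push_cast; rfl
  rw [hcast, Complex.norm_real, Real.norm_eq_abs]
  exact sumlam_abs_le n m

lemma sum_pow_norm_le (n : ℕ) (x : H13) :
    ‖(∑ k ∈ range (n + 1), T ^ k) x‖ ≤ (2 + 5 * ((n : ℝ) + 1)) * ‖x‖ := by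
  have hS : (∑ k ∈ range (n + 1), T ^ k) x
      = ((∑ k ∈ range (n + 1), T ^ k) x - ⟪G n, x⟫ • e0) + ⟪G n, x⟫ • e0 := by
    abel
  rw [hS]
  calc ‖_ + _‖ ≤ ‖(∑ k ∈ range (n + 1), T ^ k) x - ⟪G n, x⟫ • e0‖
        + ‖(⟪G n, x⟫ : ℂ) • e0‖ := norm_add_le _ _
    _ ≤ 2 * ‖x‖ + 5 * ((n : ℝ) + 1) * ‖x‖ := by
        refine add_le_add (w_norm_le n x) ?_
        rw [norm_smul, norm_e0, mul_one]
        calc ‖(⟪G n, x⟫ : ℂ)‖ ≤ ‖G n‖ * ‖x‖ := norm_inner_le_norm _ _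
          _ ≤ 5 * ((n : ℝ) + 1) * ‖x‖ :=
              mul_le_mul_of_nonneg_right (norm_G_le n) (norm_nonneg _)
    _ = (2 + 5 * ((n : ℝ) + 1)) * ‖x‖ := by ring

lemma norm_inv_n1 (n : ℕ) : ‖((n : ℂ) + 1)⁻¹‖ = ((n : ℝ) + 1)⁻¹ := by
  rw [norm_inv]
  congr 1
  rw [show ((n : ℂ) + 1) = (((n : ℝ) + 1 : ℝ) : ℂ) by push_cast; ring,
    Complex.norm_real, Real.norm_eq_abs, abs_of_pos (by positivity)]

lemma cesaro_op_bound (n : ℕ) :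
    ‖((n : ℂ) + 1)⁻¹ • ∑ k ∈ range (n + 1), T ^ k‖ ≤ 7 := by
  refine ContinuousLinearMap.opNorm_le_bound _ (by norm_num) fun x => ?_
  rw [ContinuousLinearMap.smul_apply, norm_smul, norm_inv_n1]
  have hb : ((n : ℝ) + 1)⁻¹ * (2 + 5 * ((n : ℝ) + 1)) ≤ 7 := by
    rw [inv_mul_le_iff₀ (by positivity)]
    nlinarith [Nat.cast_nonneg (α := ℝ) n]
  calc ((n : ℝ) + 1)⁻¹ * ‖(∑ k ∈ range (n + 1), T ^ k) x‖
      ≤ ((n : ℝ) + 1)⁻¹ * ((2 + 5 * ((n : ℝ) + 1)) * ‖x‖) :=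
        mul_le_mul_of_nonneg_left (sum_pow_norm_le n x) (by positivity)
    _ = (((n : ℝ) + 1)⁻¹ * (2 + 5 * ((n : ℝ) + 1))) * ‖x‖ := by ring
    _ ≤ 7 * ‖x‖ := mul_le_mul_of_nonneg_right hb (norm_nonneg _)

/-! ### mean ergodicity -/

lemma inner_G_head_bound (n : ℕ) (t : Finset ℕ) (x : H13) :
    ‖(⟪G n, ∑ i ∈ t, lp.single 2 i (x i)⟫ : ℂ)‖ ≤ ∑ i ∈ t, 3 * ‖x i‖ := by
  rw [inner_sum]
  calc ‖∑ i ∈ t, (⟪G n, lp.single 2 i (x i)⟫ : ℂ)‖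
      ≤ ∑ i ∈ t, ‖(⟪G n, lp.single 2 i (x i)⟫ : ℂ)‖ := norm_sum_le _ _
    _ ≤ ∑ i ∈ t, 3 * ‖x i‖ := by
        refine Finset.sum_le_sum fun i _ => ?_
        rw [lp.inner_single_right, RCLike.inner_apply, norm_mul, RCLike.norm_conj, mul_comm]
        refine mul_le_mul_of_nonneg_right ?_ (norm_nonneg _)
        rw [norm_G_apply]
        exact abs_GGR_le_three n i

lemma scalar_tendsto (x : H13) :
    Tendsto (fun n : ℕ => ((n : ℂ) + 1)⁻¹ * ⟪G n, x⟫) atTop (nhds 0) := by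
  rw [NormedAddCommGroup.tendsto_nhds_zero]
  intro ε hε
  have hδ : (0 : ℝ) < ε / 20 := by positivity
  have hsum := lp.hasSum_single (E := fun _ : ℕ => ℂ) (p := 2) (by norm_num) x
  have h2 : Tendsto (fun M : ℕ => ∑ i ∈ range M, lp.single 2 i (x i)) atTop (nhds x) :=
    hsum.tendsto_sum_nat
  obtain ⟨M, hM⟩ := Metric.tendsto_atTop.mp h2 (ε / 20) hδ
  have ht : ‖x - ∑ i ∈ range M, lp.single 2 i (x i)‖ < ε / 20 := by
    have := hM M le_rfl
    rwa [dist_eq_norm, norm_sub_rev] at this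
  set A := ∑ i ∈ range M, 3 * ‖x i‖ with hA
  have hA0 : 0 ≤ A := Finset.sum_nonneg fun i _ => by positivity
  have hbound : ∀ n : ℕ, ‖((n : ℂ) + 1)⁻¹ * ⟪G n, x⟫‖ ≤ A * ((n : ℝ) + 1)⁻¹ + ε / 4 := by
    intro n
    rw [norm_mul, norm_inv_n1]
    have hsplit : (⟪G n, x⟫ : ℂ)
        = ⟪G n, ∑ i ∈ range M, lp.single 2 i (x i)⟫
          + ⟪G n, x - ∑ i ∈ range M, lp.single 2 i (x i)⟫ := by
      rw [← inner_add_right]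
      congr 1
      abel
    have h1 := inner_G_head_bound n (range M) x
    have h3 : ‖(⟪G n, x - ∑ i ∈ range M, lp.single 2 i (x i)⟫ : ℂ)‖
        ≤ 5 * ((n : ℝ) + 1) * (ε / 20) := by
      calc ‖(⟪G n, x - ∑ i ∈ range M, lp.single 2 i (x i)⟫ : ℂ)‖
          ≤ ‖G n‖ * ‖x - ∑ i ∈ range M, lp.single 2 i (x i)‖ := norm_inner_le_norm _ _
        _ ≤ 5 * ((n : ℝ) + 1) * (ε / 20) :=
            mul_le_mul (norm_G_le n) ht.le (norm_nonneg _) (by positivity)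
    have hn : ‖(⟪G n, x⟫ : ℂ)‖ ≤ A + 5 * ((n : ℝ) + 1) * (ε / 20) := by
      rw [hsplit]
      exact (norm_add_le _ _).trans (add_le_add h1 h3)
    have hpos : (0 : ℝ) < (n : ℝ) + 1 := by positivity
    calc ((n : ℝ) + 1)⁻¹ * ‖(⟪G n, x⟫ : ℂ)‖
        ≤ ((n : ℝ) + 1)⁻¹ * (A + 5 * ((n : ℝ) + 1) * (ε / 20)) :=
          mul_le_mul_of_nonneg_left hn (by positivity)
      _ = A * ((n : ℝ) + 1)⁻¹ + (((n : ℝ) + 1)⁻¹ * ((n : ℝ) + 1)) * (ε / 4) := by ring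
      _ = A * ((n : ℝ) + 1)⁻¹ + ε / 4 := by rw [inv_mul_cancel₀ hpos.ne']; ring
  have hto : Tendsto (fun n : ℕ => A * ((n : ℝ) + 1)⁻¹) atTop (nhds 0) := by
    have h0 := tendsto_one_div_add_atTop_nhds_zero_nat.const_mul A
    rw [mul_zero] at h0
    refine h0.congr fun n => ?_
    rw [one_div]
  have hev : ∀ᶠ n : ℕ in atTop, A * ((n : ℝ) + 1)⁻¹ < ε / 2 :=
    hto.eventually_lt_const (by positivity)
  filter_upwards [hev] with n hn
  calc ‖((n : ℂ) + 1)⁻¹ * ⟪G n, x⟫‖ ≤ A * ((n : ℝ) + 1)⁻¹ + ε / 4 := hbound n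
    _ < ε / 2 + ε / 4 := by linarith
    _ < ε := by linarith

lemma mean_ergodic (x : H13) :
    Tendsto (fun n : ℕ => ((n : ℂ) + 1)⁻¹ • ∑ k ∈ range (n + 1), (T ^ k) x)
      atTop (nhds 0) := by
  have hdecomp : ∀ n : ℕ,
      ((n : ℂ) + 1)⁻¹ • ∑ k ∈ range (n + 1), (T ^ k) x
        = ((n : ℂ) + 1)⁻¹ • ((∑ k ∈ range (n + 1), T ^ k) x - ⟪G n, x⟫ • e0)
          + (((n : ℂ) + 1)⁻¹ * ⟪G n, x⟫) • e0 := by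
    intro n
    rw [show (∑ k ∈ range (n + 1), (T ^ k) x) = (∑ k ∈ range (n + 1), T ^ k) x from
      (ContinuousLinearMap.sum_apply _ _ _).symm]
    rw [smul_sub, mul_smul]
    abel
  have h1 : Tendsto (fun n : ℕ =>
      ((n : ℂ) + 1)⁻¹ • ((∑ k ∈ range (n + 1), T ^ k) x - ⟪G n, x⟫ • e0))
      atTop (nhds 0) := by
    apply squeeze_zero_norm (a := fun n : ℕ => 2 * ‖x‖ * ((n : ℝ) + 1)⁻¹)
    · intro n
      rw [norm_smul, norm_inv_n1]
      calc ((n : ℝ) + 1)⁻¹ * ‖(∑ k ∈ range (n + 1), T ^ k) x - ⟪G n, x⟫ • e0‖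
          ≤ ((n : ℝ) + 1)⁻¹ * (2 * ‖x‖) :=
            mul_le_mul_of_nonneg_left (w_norm_le n x) (by positivity)
        _ = 2 * ‖x‖ * ((n : ℝ) + 1)⁻¹ := by ring
    · have h0 := tendsto_one_div_add_atTop_nhds_zero_nat.const_mul (2 * ‖x‖)
      rw [mul_zero] at h0
      refine h0.congr fun n => ?_
      rw [one_div]
  have h2 : Tendsto (fun n : ℕ => (((n : ℂ) + 1)⁻¹ * ⟪G n, x⟫) • e0) atTop (nhds 0) := by
    have := (scalar_tendsto x).smul_const e0
    rwa [zero_smul] at this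
  have := h1.add h2
  rw [add_zero] at this
  exact Tendsto.congr (fun n => (hdecomp n).symm) this

/-! ### eigenvector -/

lemma inner_B_e0 : (⟪B, e0⟫ : ℂ) = 0 := by
  rw [e0, lp.inner_single_right, RCLike.inner_apply]
  simp [bbR]

lemma T_e0 : T e0 = -e0 := by
  apply lp.ext
  funext m
  rw [lp.coeFn_neg]
  simp only [Pi.neg_apply]
  rw [T_apply, inner_B_e0, zero_mul, add_zero, e0_apply]
  rcases Nat.eq_zero_or_pos m with h0 | h0
  · subst h0
    norm_num [lamR]
  · rw [if_neg h0.ne']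
    simp

lemma e0_ne_zero : e0 ≠ 0 := by
  intro h
  have h1 : e0 0 = 1 := by rw [e0_apply]; norm_num
  rw [h, lp.coeFn_zero] at h1
  simp at h1

/-! ### adjoint kernel -/

lemma T_single (m : ℕ) :
    T (lp.single 2 m 1) = ((lamR m : ℝ) : ℂ) • lp.single 2 m 1 + ((bbR m : ℝ) : ℂ) • e0 := by
  apply lp.ext
  funext j
  rw [lp.coeFn_add, Pi.add_apply, lp.coeFn_smul, lp.coeFn_smul, Pi.smul_apply, Pi.smul_apply,
    T_apply]
  have hBm : (⟪B, lp.single 2 m 1⟫ : ℂ) = ((bbR m : ℝ) : ℂ) := by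
    rw [lp.inner_single_right, RCLike.inner_apply, B_apply, Complex.conj_ofReal, one_mul]
  rw [hBm]
  simp only [smul_eq_mul]
  rcases eq_or_ne j m with h | h
  · subst h
    rw [lp.single_apply_self]
  · rw [lp.single_apply_ne 2 m _ h]
    ring

lemma adjoint_ker (y : H13) (hy : (ContinuousLinearMap.adjoint T) y = -y) : y = 0 := by
  have key : ∀ m : ℕ, ((bbR m : ℝ) : ℂ) * ((starRingEnd ℂ) (y m))
      = -(((bbR m : ℝ) : ℂ) * (starRingEnd ℂ) (y 0)) := by
    intro m
    have h1 : (⟪y, T (lp.single 2 m 1)⟫ : ℂ) = -⟪y, lp.single 2 m 1⟫ := by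
      rw [← ContinuousLinearMap.adjoint_inner_left T (lp.single 2 m 1) y, hy, inner_neg_left]
    rw [T_single, inner_add_right, inner_smul_right, inner_smul_right] at h1
    have hym : (⟪y, lp.single 2 m 1⟫ : ℂ) = (starRingEnd ℂ) (y m) := by
      rw [lp.inner_single_right, RCLike.inner_apply, one_mul]
    have hy0 : (⟪y, e0⟫ : ℂ) = (starRingEnd ℂ) (y 0) := by
      rw [e0, lp.inner_single_right, RCLike.inner_apply, one_mul]
    rw [hym, hy0] at h1
    have hlam : ((lamR m : ℝ) : ℂ) = ((bbR m : ℝ) : ℂ) - 1 := by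
      rw [lamR, bbR]
      push_cast
      ring
    rw [hlam] at h1
    linear_combination h1
  have hconst : ∀ m : ℕ, 1 ≤ m → y m = -y 0 := by
    intro m hm
    have hb : ((bbR m : ℝ) : ℂ) ≠ 0 := by
      simp only [ne_eq, Complex.ofReal_eq_zero, bbR]
      exact inv_ne_zero (Nat.cast_ne_zero.mpr (by omega))
    have h2 : ((bbR m : ℝ) : ℂ) * ((starRingEnd ℂ) (y m))
        = ((bbR m : ℝ) : ℂ) * (-(starRingEnd ℂ) (y 0)) := by
      rw [key m]; ring
    have h3 := mul_left_cancel₀ hb h2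
    have h4 := congrArg (starRingEnd ℂ) h3
    simpa using h4
  have hsq := summable_sq y
  have htend := hsq.tendsto_atTop_zero
  have heven : ∀ᶠ m : ℕ in atTop, ‖y m‖ ^ (2:ℕ) = ‖y 0‖ ^ (2:ℕ) := by
    filter_upwards [eventually_ge_atTop 1] with m hm
    rw [hconst m hm, norm_neg]
  have h0 : Tendsto (fun _ : ℕ => ‖y 0‖ ^ (2:ℕ)) atTop (nhds 0) :=
    htend.congr' heven
  have hy0 : ‖y 0‖ ^ (2:ℕ) = 0 := tendsto_nhds_unique tendsto_const_nhds h0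
  have hy00 : y 0 = 0 := by
    have := pow_eq_zero_iff (n := 2) (by norm_num) |>.mp hy0
    simpa using this
  apply lp.ext
  funext m
  rw [lp.coeFn_zero, Pi.zero_apply]
  rcases Nat.eq_zero_or_pos m with h | h
  · subst h; exact hy00
  · rw [hconst m h, hy00, neg_zero]

end Stmt13

end Stmt13Aux

/-- There is a bounded operator `T` on `ℓ²(ℕ)` which is Cesàro bounded, mean ergodic, with
`ker (I + T) ≠ {0}` and `ker (I + T*) = {0}`. -/
theorem stmt_13 :
    ∃ T : (lp (fun _ : ℕ => ℂ) 2) →L[ℂ] (lp (fun _ : ℕ => ℂ) 2),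
      (∃ C : ℝ, ∀ n : ℕ, ‖((n : ℂ) + 1)⁻¹ • ∑ k ∈ Finset.range (n + 1), T ^ k‖ ≤ C) ∧
      (∀ x : lp (fun _ : ℕ => ℂ) 2, ∃ y : lp (fun _ : ℕ => ℂ) 2,
        Tendsto (fun n : ℕ => ((n : ℂ) + 1)⁻¹ • ∑ k ∈ Finset.range (n + 1), (T ^ k) x)
          atTop (nhds y)) ∧
      (∃ x : lp (fun _ : ℕ => ℂ) 2, x ≠ 0 ∧ T x = -x) ∧
      (∀ y : lp (fun _ : ℕ => ℂ) 2, (ContinuousLinearMap.adjoint T) y = -y → y = 0) :=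
  ⟨Stmt13.T, ⟨7, fun n => Stmt13.cesaro_op_bound n⟩,
    fun x => ⟨0, Stmt13.mean_ergodic x⟩,
    ⟨Stmt13.e0, Stmt13.e0_ne_zero, Stmt13.T_e0⟩,
    fun y hy => Stmt13.adjoint_ker y hy⟩
end

section
/- There exist a bounded operator T on the complex Hilbert space ℓ²(ℕ) and a complex number λ with |λ| = 1 such that T is mean ergodic and λ ∈ σ_R(T); in other words, there is a mean ergodic Hilbert space operator whose residual spectrum meets the unit circle. -/
open Filter
noncomputable section
namespace Stmt14

abbrev H : Type := lp (fun _ : ℕ => ℂ) 2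

lemma two_toReal : (2 : ENNReal).toReal = 2 := by simp
lemma two_toReal_pos : 0 < (2 : ENNReal).toReal := by simp

lemma rpow_norm (x : ℝ) : x ^ (2 : ENNReal).toReal = x ^ 2 := by
  rw [two_toReal, ← Real.rpow_natCast x 2]; norm_num

lemma memℓp_two {f : ℕ → ℂ} (h : Summable fun n => ‖f n‖ ^ 2) : Memℓp f 2 := by
  apply memℓp_gen
  simpa only [fun n => rpow_norm ‖f n‖] using h

lemma norm_le_sqrt (f : H) (C : ℝ) (hC : 0 ≤ C) (h : ∑' n, ‖f n‖ ^ 2 ≤ C ^ 2) : ‖f‖ ≤ C := by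
  apply lp.norm_le_of_tsum_le two_toReal_pos hC
  rw [rpow_norm C]
  calc ∑' (i : ℕ), ‖f i‖ ^ (2:ENNReal).toReal = ∑' (i : ℕ), ‖f i‖ ^ 2 :=
        tsum_congr fun n => rpow_norm _
    _ ≤ C ^ 2 := h

lemma tsum_sq_le (f : H) : ∑' n, ‖f n‖ ^ 2 ≤ ‖f‖ ^ 2 := by
  have := (lp.norm_rpow_eq_tsum two_toReal_pos f).symm.le
  calc ∑' n, ‖f n‖ ^ 2 = ∑' (i : ℕ), ‖f i‖ ^ (2:ENNReal).toReal :=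
        (tsum_congr fun n => (rpow_norm _).symm)
    _ ≤ ‖f‖ ^ (2:ENNReal).toReal := this
    _ = ‖f‖ ^ 2 := rpow_norm _

lemma summable_sq (f : H) : Summable fun n => ‖f n‖ ^ 2 := by
  have := (lp.memℓp f).summable two_toReal_pos
  simpa only [fun n => rpow_norm ‖f n‖] using this

/-! ### the operator -/

def d (n : ℕ) : ℝ := 1 - (4:ℝ)⁻¹ ^ n

lemma d_nonneg (n : ℕ) : 0 ≤ d n := by
  have h : (4:ℝ)⁻¹ ^ n ≤ 1 := pow_le_one₀ (by norm_num) (by norm_num)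
  show (0:ℝ) ≤ 1 - (4:ℝ)⁻¹ ^ n
  linarith

lemma d_lt_one (n : ℕ) : d n < 1 := by
  have h : 0 < (4:ℝ)⁻¹ ^ n := by positivity
  show (1:ℝ) - (4:ℝ)⁻¹ ^ n < 1
  linarith

lemma one_sub_d (n : ℕ) : 1 - d n = (4:ℝ)⁻¹ ^ n := by simp [d]

lemma d_zero : d 0 = 0 := by simp [d]

lemma abs_d_le (n : ℕ) : |d n| ≤ 1 := by
  rw [abs_of_nonneg (d_nonneg n)]; exact (d_lt_one n).le

/-- summability of the geometric column -/
lemma summable_c_sq : Summable fun n : ℕ => ((4:ℝ)⁻¹ ^ n) ^ 2 := by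
  have : Summable fun n : ℕ => ((16:ℝ)⁻¹) ^ n :=
    summable_geometric_of_lt_one (by norm_num) (by norm_num)
  refine this.congr fun n => ?_
  have : ((4:ℝ)⁻¹ ^ n) ^ 2 = ((4:ℝ)⁻¹ ^ 2) ^ n := by
    rw [← pow_mul, pow_mul']
  rw [this]
  norm_num

def cvec : H :=
  ⟨fun n => (((4:ℝ)⁻¹ ^ n : ℝ) : ℂ), by
    apply memℓp_two
    refine summable_c_sq.congr fun n => ?_
    simp [Complex.norm_real, abs_of_nonneg (by positivity : (0:ℝ) ≤ (4:ℝ)⁻¹ ^ n)]⟩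

lemma cvec_apply (n : ℕ) : (cvec : ∀ _ : ℕ, ℂ) n = (((4:ℝ)⁻¹ ^ n : ℝ) : ℂ) := rfl

def eval0 : H →L[ℂ] ℂ :=
  LinearMap.mkContinuous
    { toFun := fun z => z 0
      map_add' := fun y z => rfl
      map_smul' := fun c z => rfl } 1
    (fun z => by rw [one_mul]; exact lp.norm_apply_le_norm (by norm_num) z 0)

lemma eval0_apply (z : H) : eval0 z = z 0 := rfl

/-- diagonal multiplication by `d` -/
def diagFun (z : H) : ℕ → ℂ := fun n => ((d n : ℝ) : ℂ) * z n

lemma diag_mem (z : H) : Memℓp (diagFun z) 2 := by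
  apply memℓp_two
  refine Summable.of_nonneg_of_le (fun n => by positivity) (fun n => ?_) (summable_sq z)
  simp only [diagFun, norm_mul, Complex.norm_real]
  have h1 : |d n| ≤ 1 := abs_d_le n
  have h0 := norm_nonneg (z n)
  rw [Real.norm_eq_abs]
  have h2 : |d n| * ‖z n‖ ≤ 1 * ‖z n‖ := mul_le_mul_of_nonneg_right h1 h0
  calc (|d n| * ‖z n‖) ^ 2 ≤ (1 * ‖z n‖)^2 := by
        apply pow_le_pow_left₀ (by positivity) h2
    _ = ‖z n‖^2 := by rw [one_mul]

lemma diag_norm_le (z : H) (w : H) (hw : ∀ n, (w : ∀ _:ℕ, ℂ) n = diagFun z n) : ‖w‖ ≤ ‖z‖ := by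
  apply norm_le_sqrt w ‖z‖ (norm_nonneg z)
  refine le_trans (Summable.tsum_le_tsum (fun n => ?_) (summable_sq w) (summable_sq z)) (tsum_sq_le z)
  rw [hw n]
  simp only [diagFun, norm_mul, Complex.norm_real]
  have h1 : |d n| ≤ 1 := abs_d_le n
  have h0 := norm_nonneg (z n)
  rw [Real.norm_eq_abs]
  have h2 : |d n| * ‖z n‖ ≤ 1 * ‖z n‖ := mul_le_mul_of_nonneg_right h1 h0
  calc (|d n| * ‖z n‖) ^ 2 ≤ (1 * ‖z n‖)^2 := by
        apply pow_le_pow_left₀ (by positivity) h2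
    _ = ‖z n‖^2 := by rw [one_mul]

def diagL : H →L[ℂ] H :=
  LinearMap.mkContinuous
    { toFun := fun z => (⟨diagFun z, diag_mem z⟩ : H)
      map_add' := fun y z => by
        apply lp.ext; funext n
        show ((d n : ℝ):ℂ) * (y + z) n = _
        rw [lp.coeFn_add]
        show ((d n : ℝ):ℂ) * (y n + z n) = ((d n:ℝ):ℂ) * y n + ((d n:ℝ):ℂ) * z n
        ring
      map_smul' := fun c z => by
        apply lp.ext; funext n
        show ((d n : ℝ):ℂ) * (c • z) n = _
        rw [lp.coeFn_smul]
        show ((d n : ℝ):ℂ) * (c * z n) = c * (((d n:ℝ):ℂ) * z n)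
        ring } 1
    (fun z => by simpa using diag_norm_le z _ (fun n => rfl))

lemma diagL_apply (z : H) (n : ℕ) : (diagL z) n = ((d n : ℝ) : ℂ) * z n := rfl

def T : H →L[ℂ] H := -(eval0.smulRight cvec + diagL)

lemma T_apply (z : H) (n : ℕ) :
    (T z) n = -((((1 - d n : ℝ)) : ℂ) * z 0 + ((d n : ℝ) : ℂ) * z n) := by
  have h1 : T z = -(eval0.smulRight cvec z + diagL z) := rfl
  rw [h1, lp.coeFn_neg, Pi.neg_apply, lp.coeFn_add, Pi.add_apply]
  have h2 : (eval0.smulRight cvec z) = z 0 • cvec := rfl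
  rw [h2, lp.coeFn_smul, Pi.smul_apply, cvec_apply, smul_eq_mul, diagL_apply, ← one_sub_d]
  ring

/-! ### powers and sums -/

lemma T_pow_apply (k : ℕ) (z : H) (n : ℕ) :
    ((T ^ k) z) n = (-1:ℂ)^k * ((1 - ((d n : ℝ):ℂ)^k) * z 0 + ((d n : ℝ):ℂ)^k * z n) := by
  induction k generalizing n with
  | zero =>
    rw [pow_zero, ContinuousLinearMap.one_apply]
    simp
  | succ k ih =>
    rw [pow_succ' T k, ContinuousLinearMap.mul_apply, T_apply]
    rw [ih 0, ih n, d_zero]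
    push_cast
    ring

def Fr (n : ℕ) (x : ℝ) : ℝ := ∑ k ∈ Finset.range (n+1), (-1:ℝ)^k * (1 - x^k)
def Rr (n : ℕ) (x : ℝ) : ℝ := ∑ k ∈ Finset.range (n+1), (-x)^k

lemma sum_T_pow_apply (n : ℕ) (z : H) (m : ℕ) :
    ((∑ k ∈ Finset.range (n+1), (T ^ k)) z) m
      = ((Fr n (d m) : ℝ):ℂ) * z 0 + ((Rr n (d m) : ℝ):ℂ) * z m := by
  have h0 : ((∑ k ∈ Finset.range (n+1), (T ^ k)) z)
      = ∑ k ∈ Finset.range (n+1), (T ^ k) z := by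
    rw [ContinuousLinearMap.sum_apply]
  rw [h0, lp.coeFn_sum, Finset.sum_apply]
  have h1 : ∀ k ∈ Finset.range (n+1), ((T ^ k) z) m
      = ((-1:ℂ)^k * (1 - ((d m : ℝ):ℂ)^k)) * z 0 + (-((d m : ℝ):ℂ))^k * z m := by
    intro k _
    rw [T_pow_apply, neg_pow]
    ring
  rw [Finset.sum_congr rfl h1, Finset.sum_add_distrib, ← Finset.sum_mul, ← Finset.sum_mul]
  congr 1
  · congr 1
    unfold Fr
    push_cast
    rfl
  · congr 1
    unfold Rr
    push_cast
    rfl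

lemma abs_Rr_le (n : ℕ) {x : ℝ} (hx0 : 0 ≤ x) (hx1 : x < 1) : |Rr n x| ≤ 1 := by
  have hne : (-x) ≠ 1 := by linarith
  have hR : Rr n x = ((-x)^(n+1) - 1)/((-x) - 1) := geom_sum_eq hne (n+1)
  rw [hR, abs_div]
  have hden : |(-x) - 1| = x + 1 := by
    rw [abs_of_nonpos (by linarith)]; ring
  have hnum : |(-x)^(n+1) - 1| ≤ x + 1 := by
    have h1 : |(-x)^(n+1)| = x^(n+1) := by
      rw [abs_pow, abs_neg, abs_of_nonneg hx0]
    have h2 : x^(n+1) ≤ x := pow_le_of_le_one hx0 hx1.le (Nat.succ_ne_zero n)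
    have := abs_sub_abs_le_abs_sub ((-x)^(n+1)) (1:ℝ)
    have h3 : |(-x)^(n+1) - 1| ≤ |(-x)^(n+1)| + |1| := abs_sub _ _
    rw [h1, abs_one] at h3
    linarith
  rw [hden]
  rw [div_le_one (by linarith)]
  exact hnum

lemma Fr_eq (n : ℕ) {x : ℝ} (hx0 : 0 ≤ x) (hx1 : x < 1) :
    Fr n x = ((-1:ℝ)^(n+1) - 1)/(-2) - ((-x)^(n+1) - 1)/((-x) - 1) := by
  have hne : (-x) ≠ 1 := by linarith
  have hne1 : (-1:ℝ) ≠ 1 := by norm_num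
  have : Fr n x = (∑ k ∈ Finset.range (n+1), (-1:ℝ)^k)
      - (∑ k ∈ Finset.range (n+1), (-x)^k) := by
    unfold Fr
    rw [← Finset.sum_sub_distrib]
    apply Finset.sum_congr rfl
    intro k _
    rw [neg_pow, neg_pow x]
    ring
  rw [this, geom_sum_eq hne1 (n+1), geom_sum_eq hne (n+1)]
  norm_num

lemma abs_Fr_le (n : ℕ) {x : ℝ} (hx0 : 0 ≤ x) (hx1 : x < 1) : |Fr n x| ≤ 1 - x^(n+1) := by
  have hx1' : (0:ℝ) < 1 + x := by linarith
  have hpow : x^(n+1) ≤ x := pow_le_of_le_one hx0 hx1.le (Nat.succ_ne_zero n)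
  have hpow2 : x^(n+2) ≤ 1 := pow_le_one₀ hx0 hx1.le
  rcases Nat.even_or_odd n with he | ho
  · -- n even, n+1 odd
    have h1 : (-1:ℝ)^(n+1) = -1 := (he.add_one).neg_one_pow
    have h2 : (-x)^(n+1) = -(x^(n+1)) := (he.add_one).neg_pow x
    have hA : -x - 1 ≠ 0 := by linarith
    have hB : (1:ℝ) + x ≠ 0 := by linarith
    have hF : Fr n x = (x - x^(n+1))/(1 + x) := by
      rw [Fr_eq n hx0 hx1, h1, h2]
      field_simp
      ring
    rw [hF, abs_of_nonneg (div_nonneg (by nlinarith) hx1'.le)]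
    rw [div_le_iff₀ hx1']
    have : x^(n+2) = x^(n+1) * x := by ring
    nlinarith [pow_nonneg hx0 (n+1)]
  · -- n odd, n+1 even
    have h1 : (-1:ℝ)^(n+1) = 1 := (ho.add_one).neg_one_pow
    have h2 : (-x)^(n+1) = x^(n+1) := (ho.add_one).neg_pow x
    have hA : -x - 1 ≠ 0 := by linarith
    have hB : (1:ℝ) + x ≠ 0 := by linarith
    have hF : Fr n x = -((1 - x^(n+1))/(1 + x)) := by
      rw [Fr_eq n hx0 hx1, h1, h2]
      field_simp
      ring
    have hnn : 0 ≤ (1 - x^(n+1))/(1 + x) := by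
      apply div_nonneg _ hx1'.le
      nlinarith [pow_le_one₀ hx0 hx1.le (n := n+1)]
    rw [hF, abs_neg, abs_of_nonneg hnn]
    rw [div_le_iff₀ hx1']
    nlinarith [pow_le_one₀ hx0 hx1.le (n := n+1), pow_nonneg hx0 (n+1)]

lemma one_sub_pow_le (n : ℕ) {x : ℝ} (hx0 : 0 ≤ x) (hx1 : x ≤ 1) :
    1 - x^(n+1) ≤ (n+1) * (1 - x) := by
  have h := one_add_mul_le_pow (a := x - 1) (by linarith) (n+1)
  have hx : (1:ℝ) + (x - 1) = x := by ring
  rw [hx] at h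
  push_cast at h ⊢
  linarith

lemma abs_Fr_le_one (n : ℕ) {x : ℝ} (hx0 : 0 ≤ x) (hx1 : x < 1) : |Fr n x| ≤ 1 := by
  have := abs_Fr_le n hx0 hx1
  nlinarith [pow_nonneg hx0 (n+1)]

lemma Fr_sq_le (n m : ℕ) : |Fr n (d m)|^2 ≤ (n+1) * (4:ℝ)⁻¹^m := by
  have hx0 := d_nonneg m
  have hx1 := d_lt_one m
  have h1 : |Fr n (d m)| ≤ 1 := abs_Fr_le_one n hx0 hx1
  have h2 : |Fr n (d m)| ≤ (n+1) * (4:ℝ)⁻¹^m := by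
    calc |Fr n (d m)| ≤ 1 - (d m)^(n+1) := abs_Fr_le n hx0 hx1
      _ ≤ (n+1) * (1 - d m) := one_sub_pow_le n hx0 hx1.le
      _ = (n+1) * (4:ℝ)⁻¹^m := by rw [one_sub_d]
  calc |Fr n (d m)|^2 = |Fr n (d m)| * |Fr n (d m)| := sq (|Fr n (d m)|) ▸ by ring
    _ ≤ ((n+1) * (4:ℝ)⁻¹^m) * 1 := by
        apply mul_le_mul h2 h1 (abs_nonneg _) (by positivity)
    _ = (n+1) * (4:ℝ)⁻¹^m := by ring

/-! ### the F vector and norm bounds -/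

lemma summable_major (n : ℕ) : Summable fun m : ℕ => ((n:ℝ)+1) * (4:ℝ)⁻¹^m :=
  (summable_geometric_of_lt_one (by norm_num) (by norm_num)).mul_left _

lemma Fvec_mem (n : ℕ) : Memℓp (fun m => ((Fr n (d m) : ℝ):ℂ)) 2 := by
  apply memℓp_two
  refine Summable.of_nonneg_of_le (fun m => by positivity) (fun m => ?_) (summable_major n)
  rw [Complex.norm_real, Real.norm_eq_abs]
  have := Fr_sq_le n m
  push_cast at this ⊢
  linarith

def Fvec (n : ℕ) : H := ⟨fun m => ((Fr n (d m) : ℝ):ℂ), Fvec_mem n⟩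

lemma Fvec_apply (n m : ℕ) : (Fvec n : ∀ _ : ℕ, ℂ) m = ((Fr n (d m) : ℝ):ℂ) := rfl

lemma norm_Fvec_le (n : ℕ) : ‖Fvec n‖ ≤ Real.sqrt (2*((n:ℝ)+1)) := by
  apply norm_le_sqrt _ _ (Real.sqrt_nonneg _)
  rw [Real.sq_sqrt (by positivity)]
  have hle : ∑' m, ‖(Fvec n : ∀ _ : ℕ, ℂ) m‖^2 ≤ ∑' m, ((n:ℝ)+1) * (4:ℝ)⁻¹^m := by
    refine Summable.tsum_le_tsum (fun m => ?_) (summable_sq (Fvec n)) (summable_major n)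
    rw [Fvec_apply, Complex.norm_real, Real.norm_eq_abs]
    have := Fr_sq_le n m
    push_cast at this ⊢
    linarith
  refine hle.trans ?_
  rw [tsum_mul_left, tsum_geometric_of_lt_one (by norm_num) (by norm_num)]
  norm_num
  nlinarith [Nat.cast_nonneg (α := ℝ) n]

lemma norm_le_of_coord (w z : H) (h : ∀ n, ‖w n‖ ≤ ‖z n‖) : ‖w‖ ≤ ‖z‖ := by
  apply norm_le_sqrt w ‖z‖ (norm_nonneg z)
  refine le_trans (Summable.tsum_le_tsum (fun n => ?_) (summable_sq w) (summable_sq z)) (tsum_sq_le z)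
  exact pow_le_pow_left₀ (norm_nonneg _) (h n) 2

lemma sum_norm_le (n : ℕ) (z : H) :
    ‖(∑ k ∈ Finset.range (n+1), (T ^ k)) z‖ ≤ ‖z‖ * (Real.sqrt (2*((n:ℝ)+1)) + 1) := by
  set S := (∑ k ∈ Finset.range (n+1), (T ^ k)) z with hS
  set u := z 0 • Fvec n with hu
  have hv : ∀ m, (S - u) m = ((Rr n (d m) : ℝ):ℂ) * z m := by
    intro m
    rw [lp.coeFn_sub, Pi.sub_apply, hS, sum_T_pow_apply]
    have : (u : ∀ _:ℕ, ℂ) m = z 0 * ((Fr n (d m):ℝ):ℂ) := by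
      rw [hu, lp.coeFn_smul, Pi.smul_apply, Fvec_apply, smul_eq_mul]
    rw [this]
    ring
  have h1 : ‖S - u‖ ≤ ‖z‖ := by
    apply norm_le_of_coord _ z
    intro m
    rw [hv m, norm_mul, Complex.norm_real, Real.norm_eq_abs]
    have := abs_Rr_le n (d_nonneg m) (d_lt_one m)
    nlinarith [norm_nonneg (z m), abs_nonneg (Rr n (d m))]
  have h2 : ‖u‖ ≤ ‖z‖ * Real.sqrt (2*((n:ℝ)+1)) := by
    rw [hu, norm_smul]
    have ha : ‖z 0‖ ≤ ‖z‖ := lp.norm_apply_le_norm (by norm_num) z 0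
    exact mul_le_mul ha (norm_Fvec_le n) (norm_nonneg _) (norm_nonneg _)
  calc ‖S‖ = ‖u + (S - u)‖ := by rw [add_sub_cancel]
    _ ≤ ‖u‖ + ‖S - u‖ := norm_add_le _ _
    _ ≤ ‖z‖ * Real.sqrt (2*((n:ℝ)+1)) + ‖z‖ := add_le_add h2 h1
    _ = ‖z‖ * (Real.sqrt (2*((n:ℝ)+1)) + 1) := by ring

lemma tendsto_aux : Tendsto (fun n : ℕ => ((n:ℝ)+1)⁻¹ * (Real.sqrt (2*((n:ℝ)+1)) + 1))
    atTop (nhds 0) := by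
  have hsq : Tendsto (fun n : ℕ => Real.sqrt ((n:ℝ)+1)) atTop atTop := by
    have h1 : Tendsto (fun n : ℕ => (n:ℝ)+1) atTop atTop :=
      tendsto_atTop_add_const_right atTop 1 tendsto_natCast_atTop_atTop
    have h2 := (tendsto_rpow_atTop (by norm_num : (0:ℝ) < 1/2)).comp h1
    refine h2.congr fun n => ?_
    simp only [Function.comp_apply]
    exact (Real.sqrt_eq_rpow _).symm
  have T1 : Tendsto (fun n : ℕ => ((n:ℝ)+1)⁻¹) atTop (nhds 0) := by
    simpa [one_div] using tendsto_one_div_add_atTop_nhds_zero_nat (𝕜 := ℝ)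
  have T2 : Tendsto (fun n : ℕ => Real.sqrt 2 / Real.sqrt ((n:ℝ)+1)) atTop (nhds 0) :=
    Tendsto.div_atTop tendsto_const_nhds hsq
  have key : ∀ n : ℕ, ((n:ℝ)+1)⁻¹ * (Real.sqrt (2*((n:ℝ)+1)) + 1)
      = Real.sqrt 2 / Real.sqrt ((n:ℝ)+1) + ((n:ℝ)+1)⁻¹ := by
    intro n
    have hpos : (0:ℝ) < (n:ℝ)+1 := by positivity
    have hsp : (0:ℝ) < Real.sqrt ((n:ℝ)+1) := Real.sqrt_pos.2 hpos
    rw [Real.sqrt_mul (by norm_num : (0:ℝ) ≤ 2)]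
    rw [mul_add, mul_one]
    congr 1
    rw [eq_div_iff hsp.ne']
    rw [inv_mul_eq_div, div_mul_eq_mul_div, div_eq_iff hpos.ne']
    rw [mul_assoc, Real.mul_self_sqrt hpos.le]
  simp only [key]
  simpa using T2.add T1

lemma mean_ergodic (z : H) :
    Tendsto (fun n : ℕ => ((n:ℂ)+1)⁻¹ • ∑ k ∈ Finset.range (n + 1), (T ^ k) z)
      atTop (nhds 0) := by
  rw [tendsto_zero_iff_norm_tendsto_zero]
  apply squeeze_zero (fun n => norm_nonneg _)
    (g := fun n : ℕ => ((n:ℝ)+1)⁻¹ * (‖z‖ * (Real.sqrt (2*((n:ℝ)+1)) + 1)))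
  · intro n
    have hsum : ∑ k ∈ Finset.range (n + 1), (T ^ k) z
        = (∑ k ∈ Finset.range (n+1), (T ^ k)) z := by
      rw [ContinuousLinearMap.sum_apply]
    rw [hsum, norm_smul, norm_inv]
    have hnc : ‖(n:ℂ)+1‖ = (n:ℝ)+1 := by
      have : ((n:ℂ)+1) = (((n:ℝ)+1 : ℝ):ℂ) := by push_cast; ring
      rw [this, Complex.norm_real, Real.norm_eq_abs, abs_of_pos (by positivity)]
    rw [hnc]
    have := sum_norm_le n z
    have hinv : (0:ℝ) ≤ ((n:ℝ)+1)⁻¹ := by positivity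
    exact mul_le_mul_of_nonneg_left this hinv
  · have := tendsto_aux.const_mul ‖z‖
    simp only [mul_zero] at this
    refine this.congr fun n => by ring

/-! ### residual spectrum at -1 -/

lemma res_apply (z : H) (n : ℕ) :
    (((-1:ℂ) • (1 : H →L[ℂ] H) - T) z) n = ((1 - d n : ℝ):ℂ) * (z 0 - z n) := by
  have h1 : ((-1:ℂ) • (1 : H →L[ℂ] H) - T) z = (-1:ℂ) • z - T z := by
    rw [ContinuousLinearMap.sub_apply, ContinuousLinearMap.smul_apply,
      ContinuousLinearMap.one_apply]
  rw [h1, lp.coeFn_sub, Pi.sub_apply, lp.coeFn_smul, Pi.smul_apply, T_apply, smul_eq_mul]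
  push_cast
  ring

lemma res_injective : Function.Injective ⇑((-1:ℂ) • (1 : H →L[ℂ] H) - T) := by
  set L := (-1:ℂ) • (1 : H →L[ℂ] H) - T with hL
  have hz : ∀ z : H, L z = 0 → z = 0 := by
    intro z h0
    have hcoord : ∀ n, z n = z 0 := by
      intro n
      have h1 : (L z) n = 0 := by rw [h0]; rfl
      rw [hL, res_apply] at h1
      have h2 : ((1 - d n : ℝ):ℂ) ≠ 0 := by
        rw [Complex.ofReal_ne_zero, one_sub_d]
        positivity
      rcases mul_eq_zero.1 h1 with h | h
      · exact absurd h h2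
      · linear_combination -h
    have hz0 : z 0 = 0 := by
      by_contra hne
      have hs := summable_sq z
      have hconst : (fun n => ‖z n‖^2) = fun _ => ‖z 0‖^2 := by
        funext n; rw [hcoord n]
      rw [hconst] at hs
      have ht := hs.tendsto_atTop_zero
      have : ‖z 0‖^2 = 0 := tendsto_nhds_unique tendsto_const_nhds ht
      have : ‖z 0‖ = 0 := by nlinarith [norm_nonneg (z 0)]
      exact hne (norm_eq_zero.1 this)
    apply lp.ext; funext n
    show z n = (0 : ∀ _ : ℕ, ℂ) n
    rw [hcoord n, hz0]; rfl
  intro a b hab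
  have : L (a - b) = 0 := by rw [map_sub, hab, sub_self]
  have := hz _ this
  exact sub_eq_zero.1 this

lemma res_not_dense : ¬DenseRange ⇑((-1:ℂ) • (1 : H →L[ℂ] H) - T) := by
  intro h
  set L := (-1:ℂ) • (1 : H →L[ℂ] H) - T with hL
  set e0 : H := lp.single (E := fun _ : ℕ => ℂ) 2 0 (1:ℂ) with he0
  have hrange : Set.range ⇑L ⊆ eval0 ⁻¹' {0} := by
    rintro _ ⟨z, rfl⟩
    have : eval0 (L z) = (L z) 0 := rfl
    rw [Set.mem_preimage, Set.mem_singleton_iff, this, hL, res_apply, sub_self, mul_zero]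
  have hclosed : IsClosed (eval0 ⁻¹' {0}) :=
    IsClosed.preimage eval0.continuous isClosed_singleton
  have hsub : closure (Set.range ⇑L) ⊆ eval0 ⁻¹' {0} := closure_minimal hrange hclosed
  have he : e0 ∈ closure (Set.range ⇑L) := by
    rw [h.closure_range]; trivial
  have h0 : eval0 e0 = 0 := hsub he
  have h1 : eval0 e0 = 1 := by
    rw [eval0_apply, he0]
    exact lp.single_apply_self (E := fun _ : ℕ => ℂ) 2 0 (1:ℂ)
  rw [h0] at h1
  exact zero_ne_one h1

end Stmt14
end

open Filter

/-- There exist a bounded operator `T` on `ℓ²(ℕ)` and a unimodular `λ` such that `T` is mean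
ergodic and `λ` belongs to the residual spectrum of `T` (i.e. `λ I - T` is injective with
non-dense range). -/
theorem stmt_14 :
    ∃ (T : (lp (fun _ : ℕ => ℂ) 2) →L[ℂ] (lp (fun _ : ℕ => ℂ) 2)) (lam : ℂ),
      ‖lam‖ = 1 ∧
      (∀ x : lp (fun _ : ℕ => ℂ) 2, ∃ y : lp (fun _ : ℕ => ℂ) 2,
        Tendsto (fun n : ℕ => ((n : ℂ) + 1)⁻¹ • ∑ k ∈ Finset.range (n + 1), (T ^ k) x)
          atTop (nhds y)) ∧
      Function.Injective ⇑(lam • (1 : (lp (fun _ : ℕ => ℂ) 2) →L[ℂ] (lp (fun _ : ℕ => ℂ) 2)) - T) ∧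
      ¬DenseRange ⇑(lam • (1 : (lp (fun _ : ℕ => ℂ) 2) →L[ℂ] (lp (fun _ : ℕ => ℂ) 2)) - T) := by
  refine ⟨Stmt14.T, -1, by simp, ?_, Stmt14.res_injective, Stmt14.res_not_dense⟩
  intro x
  exact ⟨0, Stmt14.mean_ergodic x⟩
end

section
/- Let c₀(ℕ) denote the complex Banach space of sequences converging to 0, with the supremum norm, and let T : c₀(ℕ) → c₀(ℕ) be the bounded operator defined by T(a_1, a_2, a_3, …) = (a_1, a_1, a_2, a_3, …). Then T is power bounded and 1 ∈ σ_R(T). -/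
open scoped ZeroAtInfty

lemma c0_abs_le (f : C₀(ℕ, ℂ)) (n : ℕ) : ‖f n‖ ≤ ‖f‖ := by
  rw [← ZeroAtInftyContinuousMap.norm_toBCF_eq_norm]
  exact f.toBCF.norm_coe_le_norm n

noncomputable def e0 : C₀(ℕ, ℂ) :=
  ⟨⟨fun n => if n = 0 then 1 else 0, continuous_of_discreteTopology⟩, by
    rw [cocompact_eq_atTop]
    refine Filter.Tendsto.congr' ?_ tendsto_const_nhds
    filter_upwards [Filter.eventually_ge_atTop 1] with n hn
    simp [Nat.one_le_iff_ne_zero.mp hn]⟩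

/-- The operator `T (a₁, a₂, a₃, …) = (a₁, a₁, a₂, a₃, …)` on `c₀(ℕ)` (here written with
`0`-based indexing: `(T a) n = a (n - 1)` with `(T a) 0 = a 0`) is power bounded and
`1` lies in its residual spectrum. -/
theorem stmt_15 (T : C₀(ℕ, ℂ) →L[ℂ] C₀(ℕ, ℂ))
    (hT : ∀ (a : C₀(ℕ, ℂ)) (n : ℕ), (T a) n = a (n - 1)) :
    (∃ C : ℝ, ∀ n : ℕ, ‖T ^ n‖ ≤ C) ∧
    Function.Injective ⇑((1 : C₀(ℕ, ℂ) →L[ℂ] C₀(ℕ, ℂ)) - T) ∧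
    ¬DenseRange ⇑((1 : C₀(ℕ, ℂ) →L[ℂ] C₀(ℕ, ℂ)) - T) := by
  have hTnorm : ‖T‖ ≤ 1 := by
    refine T.opNorm_le_bound zero_le_one fun a => ?_
    rw [one_mul, ← ZeroAtInftyContinuousMap.norm_toBCF_eq_norm]
    refine BoundedContinuousFunction.norm_le_of_nonempty.2 fun n => ?_
    show ‖(T a) n‖ ≤ ‖a‖
    rw [hT]
    exact c0_abs_le a (n - 1)
  have key : ∀ a : C₀(ℕ, ℂ), ((1 - T) a : C₀(ℕ, ℂ)) = 0 → a = 0 := by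
    intro a ha
    have h1 : ∀ n, a n = a (n - 1) := by
      intro n
      have := congrArg (fun f : C₀(ℕ, ℂ) => f n) ha
      simp only [ContinuousLinearMap.sub_apply, ContinuousLinearMap.one_apply,
        ZeroAtInftyContinuousMap.sub_apply, ZeroAtInftyContinuousMap.zero_apply] at this
      rw [hT] at this
      exact sub_eq_zero.mp this
    have hconst : ∀ n, a n = a 0 := by
      intro n
      induction n with
      | zero => rfl
      | succ k ih => rw [h1 (k + 1)]; simpa using ih
    have htend : Filter.Tendsto (⇑a) Filter.atTop (nhds 0) := by
      rw [← cocompact_eq_atTop]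
      exact zero_at_infty a
    have htend' : Filter.Tendsto (⇑a) Filter.atTop (nhds (a 0)) := by
      refine Filter.Tendsto.congr (fun n => (hconst n).symm) tendsto_const_nhds
    have h0 : a 0 = 0 := tendsto_nhds_unique htend' htend
    ext n
    rw [hconst n, h0]; rfl
  refine ⟨⟨1, fun n => ?_⟩, ?_, ?_⟩
  · rcases Nat.eq_zero_or_pos n with h | h
    · subst h; rw [pow_zero]; exact ContinuousLinearMap.norm_id_le
    · exact le_trans (norm_pow_le' T h) (pow_le_one₀ (norm_nonneg T) hTnorm)
  · intro a b hab
    have : ((1 - T) (a - b) : C₀(ℕ, ℂ)) = 0 := by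
      rw [map_sub, hab, sub_self]
    have := key _ this
    exact sub_eq_zero.mp this
  · intro hd
    obtain ⟨b, hb⟩ := Metric.mem_closure_iff.mp (hd e0) 1 one_pos
    obtain ⟨a, rfl⟩ := hb.1
    have h0 : ((1 - T) a : C₀(ℕ, ℂ)) 0 = 0 := by
      simp only [ContinuousLinearMap.sub_apply, ContinuousLinearMap.one_apply,
        ZeroAtInftyContinuousMap.sub_apply]
      rw [hT]
      simp
    have : (1 : ℝ) ≤ dist e0 ((1 - T) a : C₀(ℕ, ℂ)) := by
      rw [dist_eq_norm]
      calc (1 : ℝ) = ‖(e0 - (1 - T) a : C₀(ℕ, ℂ)) 0‖ := by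
            rw [ZeroAtInftyContinuousMap.sub_apply, h0, sub_zero]
            simp [e0]
        _ ≤ _ := c0_abs_le _ 0
    linarith [hb.2]
end
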